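/- arXiv:0812.4667 — 10 statements merged into one kernel-verified Lean document; each statement's English description precedes it below -/
import Mathlib

section
/- Let n and m be natural numbers and let E and N be finite sets of triples (i,j,k) with i,j,k ∈ Fin n. Suppose there exists a tuple α : Fin n → ℝ such that α i + α j = α k for every (i,j,k) ∈ E and α i + α j > α k for every (i,j,k) ∈ N. Then there exists a tuple β : Fin n → ℤ such that (β i) + (β j) = β k for every (i,j,k) ∈ E and (β i) + (β j) > β k for every (i,j,k) ∈ N. -/
-- clearing denominators
lemma rat_to_int (n : ℕ) (E N : Finset (Fin n × Fin n × Fin n)) (γ : Fin n → ℚ)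
    (hE : ∀ t ∈ E, γ t.1 + γ t.2.1 = γ t.2.2)
    (hN : ∀ t ∈ N, γ t.1 + γ t.2.1 > γ t.2.2) :
    ∃ β : Fin n → ℤ,
      (∀ t ∈ E, β t.1 + β t.2.1 = β t.2.2) ∧
      (∀ t ∈ N, β t.1 + β t.2.1 > β t.2.2) := by
  classical
  set D : ℕ := ∏ i : Fin n, (γ i).den with hD
  have hDpos : 0 < D := Finset.prod_pos (fun i _ => (γ i).pos)
  have hint : ∀ i, ∃ z : ℤ, (z : ℚ) = γ i * D := by
    intro i
    have hdvd : (γ i).den ∣ D := Finset.dvd_prod_of_mem _ (Finset.mem_univ i)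
    obtain ⟨c, hc⟩ := hdvd
    refine ⟨(γ i).num * c, ?_⟩
    push_cast
    rw [hc]
    push_cast
    rw [show (γ i * ((γ i).den * c) : ℚ) = (γ i * (γ i).den) * c by ring,
      Rat.mul_den_eq_num]
  choose β hβ using hint
  refine ⟨β, ?_, ?_⟩
  · intro t ht
    have := hE t ht
    have : (((β t.1 + β t.2.1 : ℤ)) : ℚ) = ((β t.2.2 : ℤ) : ℚ) := by
      push_cast
      rw [hβ, hβ, hβ]
      rw [← this]; ring
    exact_mod_cast this
  · intro t ht
    have h1 := hN t ht
    have : ((β t.2.2 : ℤ) : ℚ) < (((β t.1 + β t.2.1 : ℤ)) : ℚ) := by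
      push_cast
      rw [hβ, hβ, hβ]
      have hD' : (0:ℚ) < D := by exact_mod_cast hDpos
      nlinarith [hN t ht]
    exact_mod_cast this

/-- A mixed system of homogeneous linear equations `x_i + x_j = x_k` and strict
homogeneous inequalities `x_i + x_j > x_k` that has a real solution also has an
integer solution. -/
theorem diag_contraction_integer_signature_core
    (n m : ℕ)
    (E N : Finset (Fin n × Fin n × Fin n))
    (α : Fin n → ℝ)
    (hE : ∀ t ∈ E, α t.1 + α t.2.1 = α t.2.2)
    (hN : ∀ t ∈ N, α t.1 + α t.2.1 > α t.2.2) :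
    ∃ β : Fin n → ℤ,
      (∀ t ∈ E, β t.1 + β t.2.1 = β t.2.2) ∧
      (∀ t ∈ N, β t.1 + β t.2.1 > β t.2.2) := by
  classical
  -- span of the values over ℚ
  set W : Submodule ℚ ℝ := Submodule.span ℚ (Set.range α) with hW
  haveI : FiniteDimensional ℚ W :=
    FiniteDimensional.span_of_finite ℚ (Set.finite_range α)
  set d := Module.finrank ℚ W with hd
  let b : Module.Basis (Fin d) ℚ W := Module.finBasis ℚ W
  have hmem : ∀ i, α i ∈ W := fun i => Submodule.subset_span ⟨i, rfl⟩
  set a : Fin n → W := fun i => ⟨α i, hmem i⟩ with ha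
  set q : Fin n → Fin d → ℚ := fun i l => b.repr (a i) l with hq
  set e : Fin d → ℝ := fun l => ((b l : W) : ℝ) with he
  have hrepr : ∀ i, α i = ∑ l, (q i l : ℝ) * e l := by
    intro i
    have h1 : (∑ l, b.repr (a i) l • b l) = a i := b.sum_repr (a i)
    have h2 := congrArg (W.subtype) h1
    simp only [map_sum, map_smul] at h2
    have : α i = (W.subtype (a i) : ℝ) := rfl
    rw [this, ← h2]
    simp [q, e, Rat.smul_def]
  have hqE : ∀ t ∈ E, ∀ l, q t.1 l + q t.2.1 l = q t.2.2 l := by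
    intro t ht l
    have haeq : a t.1 + a t.2.1 = a t.2.2 := by
      apply Subtype.ext
      exact hE t ht
    have := congrArg (fun x => (b.repr x) l) haeq
    simpa [q] using this
  -- bound on coefficients
  set M : ℝ := ∑ i : Fin n, ∑ l, |(q i l : ℝ)| with hM
  have hMnn : 0 ≤ M := Finset.sum_nonneg fun i _ =>
    Finset.sum_nonneg fun l _ => abs_nonneg _
  -- slack
  set s : ℝ := if h : N.Nonempty then N.inf' h (fun t => α t.1 + α t.2.1 - α t.2.2) else 1
    with hs
  have hspos : 0 < s := by
    rw [hs]
    split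
    · rename_i h
      rw [Finset.lt_inf'_iff]
      intro t ht
      have := hN t ht
      linarith
    · norm_num
  have hsle : ∀ t ∈ N, s ≤ α t.1 + α t.2.1 - α t.2.2 := by
    intro t ht
    rw [hs]
    rw [dif_pos ⟨t, ht⟩]
    exact Finset.inf'_le _ ht
  set δ : ℝ := s / (3 * M + 1) with hδ
  have hδpos : 0 < δ := div_pos hspos (by linarith)
  -- rational approximations of e
  have happrox : ∀ l : Fin d, ∃ r : ℚ, |(r : ℝ) - e l| < δ := by
    intro l
    obtain ⟨r, hr1, hr2⟩ := exists_rat_btwn (show e l < e l + δ by linarith)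
    exact ⟨r, abs_lt.mpr ⟨by linarith, by linarith⟩⟩
  choose r hr using happrox
  set γ : Fin n → ℚ := fun i => ∑ l, q i l * r l with hγ
  have hγc : ∀ i, (γ i : ℝ) = ∑ l, (q i l : ℝ) * (r l : ℝ) := by
    intro i; rw [hγ]; push_cast; ring
  -- difference bound
  have hdiff : ∀ i, |(γ i : ℝ) - α i| ≤ (∑ l, |(q i l : ℝ)|) * δ := by
    intro i
    rw [hγc, hrepr i, ← Finset.sum_sub_distrib]
    calc |∑ l, ((q i l : ℝ) * (r l : ℝ) - (q i l : ℝ) * e l)|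
        ≤ ∑ l, |(q i l : ℝ) * (r l : ℝ) - (q i l : ℝ) * e l| :=
          Finset.abs_sum_le_sum_abs _ _
      _ ≤ ∑ l, |(q i l : ℝ)| * δ := by
          apply Finset.sum_le_sum
          intro l _
          rw [← mul_sub, abs_mul]
          exact mul_le_mul_of_nonneg_left (le_of_lt (hr l)) (abs_nonneg _)
      _ = (∑ l, |(q i l : ℝ)|) * δ := by rw [Finset.sum_mul]
  have hsumM : ∀ i, (∑ l, |(q i l : ℝ)|) ≤ M := by
    intro i
    rw [hM]
    exact Finset.single_le_sum (f := fun i => ∑ l, |(q i l : ℝ)|)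
      (fun i _ => Finset.sum_nonneg fun l _ => abs_nonneg _) (Finset.mem_univ i)
  have hdiffM : ∀ i, |(γ i : ℝ) - α i| ≤ M * δ := by
    intro i
    calc |(γ i : ℝ) - α i| ≤ (∑ l, |(q i l : ℝ)|) * δ := hdiff i
      _ ≤ M * δ := mul_le_mul_of_nonneg_right (hsumM i) (le_of_lt hδpos)
  -- γ satisfies the system over ℚ
  apply rat_to_int n E N γ
  · intro t ht
    rw [hγ]
    simp only
    rw [← Finset.sum_add_distrib]
    apply Finset.sum_congr rfl
    intro l _
    rw [← add_mul, hqE t ht l]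
  · intro t ht
    have h1 := hdiffM t.1
    have h2 := hdiffM t.2.1
    have h3 := hdiffM t.2.2
    have h4 := hsle t ht
    have hMδ : 3 * (M * δ) < s := by
      rw [hδ]
      rw [div_eq_iff (by linarith : (3:ℝ) * M + 1 ≠ 0)] at *
      have : 3 * (M * (s / (3 * M + 1))) = s * (3 * M) / (3 * M + 1) := by ring
      rw [this]
      rw [div_lt_iff₀ (by linarith)]
      nlinarith
    have : (γ t.2.2 : ℝ) < (γ t.1 : ℝ) + (γ t.2.1 : ℝ) := by
      have e1 := abs_le.mp h1
      have e2 := abs_le.mp h2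
      have e3 := abs_le.mp h3
      linarith [e1.1, e1.2, e2.1, e2.2, e3.1, e3.2]
    exact_mod_cast this
end

section
/- Let c : Fin n → Fin n → Fin n → ℝ be the structure constants of an n-dimensional real Lie algebra, let α : Fin n → ℝ, and let c₀ : Fin n → Fin n → Fin n → ℝ be such that for all i, j, k the function ε ↦ c i j k * ε ^ (α i + α j - α k) (real power, ε > 0) tends to c₀ i j k as ε → 0⁺ (i.e., along the filter nhdsWithin 0 (Set.Ioi (0:ℝ))). Then there exists β : Fin n → ℤ such that for all i, j, k the function ε ↦ c i j k * ε ^ (β i + β j - β k) (integer power, ε > 0) tends to c₀ i j k as ε → 0⁺. -/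
open Filter Topology

/-- Any generalized Inönü–Wigner contraction (with real exponents `α`) is equivalent
to a generalized IW-contraction with an integer signature `β`. -/
theorem genIW_contraction_integer_signature
    (n : ℕ) (c c₀ : Fin n → Fin n → Fin n → ℝ)
    (hanti : ∀ i j k, c i j k = -(c j i k))
    (hjac : ∀ i j k m, ∑ l, (c i j l * c l k m + c k i l * c l j m + c j k l * c l i m) = 0)
    (α : Fin n → ℝ)
    (hlim : ∀ i j k, Tendsto (fun ε : ℝ => c i j k * ε ^ (α i + α j - α k))
      (𝓝[>] (0 : ℝ)) (𝓝 (c₀ i j k))) :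
    ∃ β : Fin n → ℤ, ∀ i j k,
      Tendsto (fun ε : ℝ => c i j k * ε ^ (β i + β j - β k))
        (𝓝[>] (0 : ℝ)) (𝓝 (c₀ i j k)) := by
  classical
  set s : Fin n → Fin n → Fin n → ℝ := fun i j k => α i + α j - α k with hs_def
  -- positive rpow tends to 0 at 0⁺
  have hpow0 : ∀ {r : ℝ}, 0 < r →
      Tendsto (fun ε : ℝ => ε ^ r) (𝓝[>] (0 : ℝ)) (𝓝 0) := by
    intro r hr
    have h := (Real.continuousAt_rpow_const 0 r (Or.inr hr.le)).tendsto
    rw [Real.zero_rpow hr.ne'] at h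
    exact h.mono_left nhdsWithin_le_nhds
  -- nonnegativity of exponents on nonzero structure constants
  have hne : ∀ i j k, c i j k ≠ 0 → 0 ≤ s i j k := by
    intro i j k hc
    by_contra h
    push_neg at h
    have h1 := (hlim i j k).mul (hpow0 (neg_pos.mpr h))
    have h2 : Tendsto (fun _ : ℝ => c i j k) (𝓝[>] (0 : ℝ)) (𝓝 (c₀ i j k * 0)) := by
      refine h1.congr' ?_
      filter_upwards [self_mem_nhdsWithin] with ε (hε : ε ∈ Set.Ioi (0 : ℝ))
      rw [mul_assoc, ← Real.rpow_add hε, add_neg_cancel, Real.rpow_zero, mul_one]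
    have := tendsto_nhds_unique tendsto_const_nhds h2
    rw [mul_zero] at this
    exact hc this
  -- construct the integer signature
  obtain ⟨β, hβ0, hβpos⟩ : ∃ β : Fin n → ℤ,
      (∀ i j k, s i j k = 0 → β i + β j - β k = 0) ∧
      (∀ i j k, 0 < s i j k → 0 < β i + β j - β k) := by
    set ι := Module.Basis.ofVectorSpaceIndex ℚ ℝ
    set b : Module.Basis ι ℚ ℝ := Module.Basis.ofVectorSpace ℚ ℝ with hb_def
    set U : Finset ι := Finset.univ.biUnion fun i : Fin n => (b.repr (α i)).support with hU_def
    have hU : ∀ i : Fin n, (b.repr (α i)).support ⊆ U := by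
      intro i
      rw [hU_def]
      exact Finset.subset_biUnion_of_mem (fun i : Fin n => (b.repr (α i)).support) (Finset.mem_univ i)
    have key : ∀ i : Fin n, α i = ∑ r ∈ U, ((b.repr (α i) r : ℚ) : ℝ) * b r := by
      intro i
      conv_lhs => rw [← b.linearCombination_repr (α i)]
      rw [Finsupp.linearCombination_apply,
        Finsupp.sum_of_support_subset (b.repr (α i)) (hU i) (fun r q => q • b r)
          (fun r _ => zero_smul ℚ (b r))]
      simp [Rat.smul_def]
    -- coefficient vector of a triple
    set W : Fin n × Fin n × Fin n → ι → ℚ := fun p r =>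
      b.repr (α p.1) r + b.repr (α p.2.1) r - b.repr (α p.2.2) r with hW_def
    have hsW : ∀ p : Fin n × Fin n × Fin n,
        s p.1 p.2.1 p.2.2 = ∑ r ∈ U, (W p r : ℝ) * b r := by
      intro p
      have := key p.1
      have := key p.2.1
      have := key p.2.2
      rw [hs_def]
      simp only []
      rw [key p.1, key p.2.1, key p.2.2, ← Finset.sum_add_distrib, ← Finset.sum_sub_distrib]
      refine Finset.sum_congr rfl fun r _ => ?_
      push_cast [hW_def]
      ring
    have hWzero : ∀ p : Fin n × Fin n × Fin n, s p.1 p.2.1 p.2.2 = 0 →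
        ∀ r, W p r = 0 := by
      intro p hp r
      have : b.repr (α p.1 + α p.2.1 - α p.2.2) = 0 := by
        have h0 : α p.1 + α p.2.1 - α p.2.2 = 0 := hp
        rw [h0, map_zero]
      have := DFunLike.congr_fun this r
      simpa [hW_def, map_add, map_sub] using this
    -- bound on coefficients
    set C : ℝ := ∑ p : Fin n × Fin n × Fin n, ∑ r ∈ U, |(W p r : ℝ)| with hC_def
    have hCnn : 0 ≤ C := Finset.sum_nonneg fun p _ =>
      Finset.sum_nonneg fun r _ => abs_nonneg _
    have hCle : ∀ p : Fin n × Fin n × Fin n, ∑ r ∈ U, |(W p r : ℝ)| ≤ C :=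
      fun p => Finset.single_le_sum (f := fun p => ∑ r ∈ U, |(W p r : ℝ)|)
        (fun q _ => Finset.sum_nonneg fun r _ => abs_nonneg _) (Finset.mem_univ p)
    -- choose δ
    set P : Finset (Fin n × Fin n × Fin n) :=
      Finset.univ.filter (fun p => 0 < s p.1 p.2.1 p.2.2) with hP_def
    obtain ⟨δ, hδpos, hδ⟩ : ∃ δ : ℝ, 0 < δ ∧
        ∀ p : Fin n × Fin n × Fin n, 0 < s p.1 p.2.1 p.2.2 →
          C * δ < s p.1 p.2.1 p.2.2 := by
      by_cases hP : P.Nonempty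
      · set m : ℝ := P.inf' hP (fun p => s p.1 p.2.1 p.2.2) with hm_def
        have hmpos : 0 < m := by
          rw [hm_def, Finset.lt_inf'_iff]
          intro p hp
          exact (Finset.mem_filter.mp hp).2
        refine ⟨m / (C + 1), by positivity, fun p hp => ?_⟩
        have hmle : m ≤ s p.1 p.2.1 p.2.2 :=
          Finset.inf'_le _ (Finset.mem_filter.mpr ⟨Finset.mem_univ p, hp⟩)
        have : C * (m / (C + 1)) < m := by
          rw [mul_div_assoc']
          rw [div_lt_iff₀ (by linarith)]
          nlinarith
        exact lt_of_lt_of_le this hmle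
      · exact ⟨1, one_pos, fun p hp =>
          absurd ⟨p, Finset.mem_filter.mpr ⟨Finset.mem_univ p, hp⟩⟩ hP⟩
    -- rational approximations of the basis vectors
    have hex : ∀ r : ι, ∃ q : ℚ, |(b r : ℝ) - q| < δ := fun r => exists_rat_near _ hδpos
    choose t ht using hex
    -- rational candidate signature
    set q' : Fin n → ℚ := fun i => ∑ r ∈ U, b.repr (α i) r * t r with hq'_def
    have hcomb : ∀ i j k : Fin n,
        q' i + q' j - q' k = ∑ r ∈ U, W (i, j, k) r * t r := by
      intro i j k
      rw [hq'_def]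
      simp only []
      rw [← Finset.sum_add_distrib, ← Finset.sum_sub_distrib]
      refine Finset.sum_congr rfl fun r _ => ?_
      rw [hW_def]; ring
    have hq'zero : ∀ i j k, s i j k = 0 → q' i + q' j - q' k = 0 := by
      intro i j k hp
      rw [hcomb i j k]
      refine Finset.sum_eq_zero fun r _ => ?_
      rw [hWzero (i, j, k) hp r, zero_mul]
    have hq'pos : ∀ i j k, 0 < s i j k → 0 < q' i + q' j - q' k := by
      intro i j k hp
      have hdiff : s i j k - ((q' i + q' j - q' k : ℚ) : ℝ) ≤ C * δ := by
        rw [hsW (i, j, k), hcomb i j k]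
        push_cast
        rw [← Finset.sum_sub_distrib]
        calc ∑ r ∈ U, ((W (i, j, k) r : ℝ) * b r - (W (i, j, k) r : ℝ) * t r)
            ≤ |∑ r ∈ U, ((W (i, j, k) r : ℝ) * b r - (W (i, j, k) r : ℝ) * t r)| :=
              le_abs_self _
          _ ≤ ∑ r ∈ U, |(W (i, j, k) r : ℝ) * b r - (W (i, j, k) r : ℝ) * t r| :=
              Finset.abs_sum_le_sum_abs _ _
          _ ≤ ∑ r ∈ U, |(W (i, j, k) r : ℝ)| * δ := by
              refine Finset.sum_le_sum fun r _ => ?_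
              rw [← mul_sub, abs_mul]
              exact mul_le_mul_of_nonneg_left (ht r).le (abs_nonneg _)
          _ = (∑ r ∈ U, |(W (i, j, k) r : ℝ)|) * δ := by rw [Finset.sum_mul]
          _ ≤ C * δ := mul_le_mul_of_nonneg_right (hCle (i, j, k)) hδpos.le
      have hlt := hδ (i, j, k) hp
      have : (0 : ℝ) < ((q' i + q' j - q' k : ℚ) : ℝ) := by linarith
      exact_mod_cast this
    -- clear denominators
    set D : ℕ := ∏ i : Fin n, (q' i).den with hD_def
    have hDpos : 0 < D := Finset.prod_pos fun i _ => (q' i).pos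
    have hdvd : ∀ i : Fin n, ((q' i).den : ℤ) ∣ (D : ℤ) := fun i =>
      Int.natCast_dvd_natCast.mpr (Finset.dvd_prod_of_mem _ (Finset.mem_univ i))
    set β : Fin n → ℤ := fun i => (q' i).num * ((D : ℤ) / ((q' i).den : ℤ)) with hβ_def
    have hβcast : ∀ i : Fin n, ((β i : ℤ) : ℚ) = q' i * D := by
      intro i
      obtain ⟨e, he⟩ := hdvd i
      have hdenz : (((q' i).den : ℤ)) ≠ 0 := by exact_mod_cast (q' i).den_nz
      have hdenq : ((q' i).den : ℚ) ≠ 0 := by exact_mod_cast (q' i).den_nz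
      have h1 : q' i * ((q' i).den : ℚ) = ((q' i).num : ℚ) := by
        nth_rewrite 1 [← Rat.num_div_den (q' i)]
        exact div_mul_cancel₀ _ hdenq
      have hD : ((D : ℚ)) = ((q' i).den : ℚ) * (e : ℚ) := by exact_mod_cast he
      rw [hβ_def]
      simp only []
      rw [he, Int.mul_ediv_cancel_left _ hdenz]
      push_cast
      rw [hD, ← mul_assoc, h1]
    refine ⟨β, fun i j k h0 => ?_, fun i j k hpos => ?_⟩
    · have : ((β i + β j - β k : ℤ) : ℚ) = (q' i + q' j - q' k) * D := by
        push_cast [hβcast]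
        ring
      rw [hq'zero i j k h0, zero_mul] at this
      exact_mod_cast this
    · have : ((β i + β j - β k : ℤ) : ℚ) = (q' i + q' j - q' k) * D := by
        push_cast [hβcast]
        ring
      have hpos' : (0 : ℚ) < (q' i + q' j - q' k) * D := by
        apply mul_pos (hq'pos i j k hpos)
        exact_mod_cast hDpos
      rw [← this] at hpos'
      exact_mod_cast hpos'
  -- verify the limits with the integer signature
  refine ⟨β, fun i j k => ?_⟩
  rcases eq_or_ne (c i j k) 0 with hc | hc
  · have h0 : Tendsto (fun ε : ℝ => c i j k * ε ^ (s i j k))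
        (𝓝[>] (0 : ℝ)) (𝓝 0) := by
      simp only [hc, zero_mul]
      exact tendsto_const_nhds
    have hc0 : c₀ i j k = 0 := tendsto_nhds_unique (hlim i j k) h0
    rw [hc0]
    simp only [hc, zero_mul]
    exact tendsto_const_nhds
  · rcases eq_or_lt_of_le (hne i j k hc) with hseq | hslt
    · -- exponent is zero
      have hc0 : c₀ i j k = c i j k := by
        refine tendsto_nhds_unique (hlim i j k) ?_
        have : (fun ε : ℝ => c i j k * ε ^ (s i j k)) = fun _ : ℝ => c i j k := by
          funext ε
          rw [← hseq, Real.rpow_zero, mul_one]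
        rw [this]
        exact tendsto_const_nhds
      have hz : β i + β j - β k = 0 := hβ0 i j k hseq.symm
      rw [hc0, hz]
      simp only [zpow_zero, mul_one]
      exact tendsto_const_nhds
    · -- exponent is positive
      have hc0 : c₀ i j k = 0 := by
        refine tendsto_nhds_unique (hlim i j k) ?_
        have := (tendsto_const_nhds (x := c i j k)
          (f := 𝓝[>] (0 : ℝ))).mul (hpow0 hslt)
        simpa using this
      have hz : 0 < β i + β j - β k := hβpos i j k hslt
      rw [hc0]
      have hfun : (fun ε : ℝ => c i j k * ε ^ (β i + β j - β k)) =
          fun ε : ℝ => c i j k * ε ^ ((β i + β j - β k).toNat) := by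
        funext ε
        rw [← zpow_natCast, Int.toNat_of_nonneg hz.le]
      rw [hfun]
      have hn0 : (β i + β j - β k).toNat ≠ 0 := by omega
      have hpow : Tendsto (fun ε : ℝ => ε ^ ((β i + β j - β k).toNat))
          (𝓝[>] (0 : ℝ)) (𝓝 0) := by
        have h := (continuous_pow ((β i + β j - β k).toNat)).tendsto (0 : ℝ)
        rw [zero_pow hn0] at h
        exact h.mono_left nhdsWithin_le_nhds
      simpa using (tendsto_const_nhds (x := c i j k)).mul hpow
end

section
/- Let c : Fin n → Fin n → Fin n → ℝ be the structure constants of an n-dimensional real Lie algebra. Let Û, Ǔ : ℝ → Matrix (Fin n) (Fin n) ℝ be continuous on (0,1] with Û ε and Ǔ ε invertible for every ε ∈ (0,1], and suppose Ǔ ε tends entrywise to an invertible matrix Ǔ₀ as ε → 0⁺. If the transformed structure constants of c under the matrix U ε := (Û ε) * (Ǔ ε) tend to c₀ componentwise as ε → 0⁺, then the transformed structure constants of c under the matrix ε ↦ (Û ε) * Ǔ₀ also tend to c₀ componentwise as ε → 0⁺. -/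
open Filter Topology

/-- The transformed structure constants of `c` under an invertible matrix `U`:
`(U·c) i' j' k' = ∑ i j k, U i i' * U j j' * (U⁻¹) k' k * c i j k`. -/
noncomputable def transformedSC {n : ℕ} (U : Matrix (Fin n) (Fin n) ℝ)
    (c : Fin n → Fin n → Fin n → ℝ) : Fin n → Fin n → Fin n → ℝ :=
  fun i' j' k' => ∑ i, ∑ j, ∑ k, U i i' * U j j' * U⁻¹ k' k * c i j k

lemma sum3_rev' {n : ℕ} (H : Fin n → Fin n → Fin n → ℝ) :
    ∑ k, ∑ j, ∑ i, H i j k = ∑ i, ∑ j, ∑ k, H i j k :=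
  calc ∑ k, ∑ j, ∑ i, H i j k
      = ∑ k, ∑ i, ∑ j, H i j k := Finset.sum_congr rfl (fun _ _ => Finset.sum_comm)
    _ = ∑ i, ∑ k, ∑ j, H i j k := Finset.sum_comm
    _ = ∑ i, ∑ j, ∑ k, H i j k := Finset.sum_congr rfl (fun _ _ => Finset.sum_comm)

lemma swap6_aux {n : ℕ} (F : Fin n → Fin n → Fin n → Fin n → Fin n → Fin n → ℝ) :
    ∑ a, ∑ b, ∑ m, ∑ i, ∑ j, ∑ k, F a b m i j k
      = ∑ i, ∑ j, ∑ k, ∑ a, ∑ b, ∑ m, F a b m i j k := by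
  calc ∑ a, ∑ b, ∑ m, ∑ i, ∑ j, ∑ k, F a b m i j k
      = ∑ p : Fin n × Fin n × Fin n, ∑ q : Fin n × Fin n × Fin n,
          F p.1 p.2.1 p.2.2 q.1 q.2.1 q.2.2 := by
        simp [Fintype.sum_prod_type]
    _ = ∑ q : Fin n × Fin n × Fin n, ∑ p : Fin n × Fin n × Fin n,
          F p.1 p.2.1 p.2.2 q.1 q.2.1 q.2.2 := Finset.sum_comm
    _ = _ := by simp [Fintype.sum_prod_type]

lemma swap6' {n : ℕ} (F : Fin n → Fin n → Fin n → Fin n → Fin n → Fin n → ℝ) :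
    ∑ a, ∑ b, ∑ m, ∑ k, ∑ j, ∑ i, F a b m i j k
      = ∑ i, ∑ j, ∑ k, ∑ a, ∑ b, ∑ m, F a b m i j k := by
  calc ∑ a, ∑ b, ∑ m, ∑ k, ∑ j, ∑ i, F a b m i j k
      = ∑ a, ∑ b, ∑ m, ∑ i, ∑ j, ∑ k, F a b m i j k :=
        Finset.sum_congr rfl (fun a _ => Finset.sum_congr rfl (fun b _ =>
          Finset.sum_congr rfl (fun m _ => sum3_rev' (fun i j k => F a b m i j k))))
    _ = _ := swap6_aux F

/-- The transform under a product `U * V` is the transform under `V` of the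
transform under `U`. -/
lemma transformedSC_mul {n : ℕ} (U V : Matrix (Fin n) (Fin n) ℝ)
    (c : Fin n → Fin n → Fin n → ℝ) (i' j' k' : Fin n) :
    transformedSC (U * V) c i' j' k'
      = ∑ i, ∑ j, ∑ k, V i i' * V j j' * V⁻¹ k' k * transformedSC U c i j k := by
  simp only [transformedSC, Matrix.mul_apply, Matrix.mul_inv_rev, Finset.sum_mul,
    Finset.mul_sum]
  rw [swap6' (fun a b m i j k => U a i * V i i' * (U b j * V j j') * (V⁻¹ k' k * U⁻¹ k m) * c a b m)]
  apply Finset.sum_congr rfl; intro i _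
  apply Finset.sum_congr rfl; intro j _
  apply Finset.sum_congr rfl; intro k _
  apply Finset.sum_congr rfl; intro a _
  apply Finset.sum_congr rfl; intro b _
  apply Finset.sum_congr rfl; intro m _
  ring

/-- If the matrix of a contraction factors as `U ε = Û ε * Ǔ ε` where `Ǔ ε` tends to
an invertible matrix `Ǔ₀` as `ε → 0⁺`, then `ε ↦ Û ε * Ǔ₀` is a matrix of the same
contraction. -/
theorem contraction_matrix_factor_limit
    (n : ℕ) (c c₀ : Fin n → Fin n → Fin n → ℝ)
    (hanti : ∀ i j k, c i j k = -(c j i k))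
    (hjac : ∀ i j k m, ∑ l, (c i j l * c l k m + c k i l * c l j m + c j k l * c l i m) = 0)
    (Uhat Ucheck : ℝ → Matrix (Fin n) (Fin n) ℝ)
    (Ucheck₀ : Matrix (Fin n) (Fin n) ℝ)
    (hUhatCont : ContinuousOn Uhat (Set.Ioc 0 1))
    (hUcheckCont : ContinuousOn Ucheck (Set.Ioc 0 1))
    (hUhatInv : ∀ ε ∈ Set.Ioc (0 : ℝ) 1, IsUnit (Uhat ε))
    (hUcheckInv : ∀ ε ∈ Set.Ioc (0 : ℝ) 1, IsUnit (Ucheck ε))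
    (hUcheckLim : ∀ i j, Tendsto (fun ε : ℝ => Ucheck ε i j) (𝓝[>] (0 : ℝ)) (𝓝 (Ucheck₀ i j)))
    (hUcheck₀Inv : IsUnit Ucheck₀)
    (hlim : ∀ i' j' k', Tendsto (fun ε : ℝ => transformedSC (Uhat ε * Ucheck ε) c i' j' k')
      (𝓝[>] (0 : ℝ)) (𝓝 (c₀ i' j' k'))) :
    ∀ i' j' k', Tendsto (fun ε : ℝ => transformedSC (Uhat ε * Ucheck₀) c i' j' k')
      (𝓝[>] (0 : ℝ)) (𝓝 (c₀ i' j' k')) := by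
  intro i' j' k'
  have hdet₀ : IsUnit Ucheck₀.det := (Matrix.isUnit_iff_isUnit_det _).1 hUcheck₀Inv
  have hM : Tendsto Ucheck (𝓝[>] (0:ℝ)) (𝓝 Ucheck₀) :=
    tendsto_pi_nhds.2 fun i => tendsto_pi_nhds.2 fun j => hUcheckLim i j
  have hInv : Tendsto (fun ε => (Ucheck ε)⁻¹) (𝓝[>] (0:ℝ)) (𝓝 Ucheck₀⁻¹) :=
    (continuousAt_matrix_inv Ucheck₀
      (NormedRing.inverse_continuousAt hdet₀.unit)).tendsto.comp hM
  have hW : Tendsto (fun ε => (Ucheck ε)⁻¹ * Ucheck₀) (𝓝[>] (0:ℝ)) (𝓝 (1 : Matrix (Fin n) (Fin n) ℝ)) := by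
    have hc : Continuous (fun A : Matrix (Fin n) (Fin n) ℝ => A * Ucheck₀) :=
      continuous_id.matrix_mul continuous_const
    have := (hc.tendsto Ucheck₀⁻¹).comp hInv
    simpa [Function.comp_def, Matrix.nonsing_inv_mul _ hdet₀] using this
  have hW' : Tendsto (fun ε => Ucheck₀⁻¹ * Ucheck ε) (𝓝[>] (0:ℝ)) (𝓝 (1 : Matrix (Fin n) (Fin n) ℝ)) := by
    have hc : Continuous (fun A : Matrix (Fin n) (Fin n) ℝ => Ucheck₀⁻¹ * A) :=
      continuous_const.matrix_mul continuous_id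
    have := (hc.tendsto Ucheck₀).comp hM
    simpa [Function.comp_def, Matrix.nonsing_inv_mul _ hdet₀] using this
  have hWe : ∀ i j, Tendsto (fun ε => ((Ucheck ε)⁻¹ * Ucheck₀) i j) (𝓝[>] (0:ℝ))
      (𝓝 ((1 : Matrix (Fin n) (Fin n) ℝ) i j)) :=
    fun i j => tendsto_pi_nhds.1 (tendsto_pi_nhds.1 hW i) j
  have hW'e : ∀ i j, Tendsto (fun ε => (Ucheck₀⁻¹ * Ucheck ε) i j) (𝓝[>] (0:ℝ))
      (𝓝 ((1 : Matrix (Fin n) (Fin n) ℝ) i j)) :=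
    fun i j => tendsto_pi_nhds.1 (tendsto_pi_nhds.1 hW' i) j
  have hg : Tendsto (fun ε => ∑ i, ∑ j, ∑ k,
      ((Ucheck ε)⁻¹ * Ucheck₀) i i' * ((Ucheck ε)⁻¹ * Ucheck₀) j j'
        * (Ucheck₀⁻¹ * Ucheck ε) k' k * transformedSC (Uhat ε * Ucheck ε) c i j k)
      (𝓝[>] (0:ℝ)) (𝓝 (∑ i, ∑ j, ∑ k,
      (1 : Matrix (Fin n) (Fin n) ℝ) i i' * (1 : Matrix (Fin n) (Fin n) ℝ) j j'
        * (1 : Matrix (Fin n) (Fin n) ℝ) k' k * c₀ i j k)) := by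
    apply tendsto_finset_sum; intro i _
    apply tendsto_finset_sum; intro j _
    apply tendsto_finset_sum; intro k _
    exact (((hWe i i').mul (hWe j j')).mul (hW'e k' k)).mul (hlim i j k)
  have hsum : (∑ i, ∑ j, ∑ k,
      (1 : Matrix (Fin n) (Fin n) ℝ) i i' * (1 : Matrix (Fin n) (Fin n) ℝ) j j'
        * (1 : Matrix (Fin n) (Fin n) ℝ) k' k * c₀ i j k) = c₀ i' j' k' := by
    simp [Matrix.one_apply]
  rw [hsum] at hg
  apply hg.congr'
  filter_upwards [Ioc_mem_nhdsGT_of_mem (Set.mem_Ico.2 ⟨le_refl (0:ℝ), one_pos⟩)] with ε hε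
  have hdet : IsUnit (Ucheck ε).det := (Matrix.isUnit_iff_isUnit_det _).1 (hUcheckInv ε hε)
  have hfac : Uhat ε * Ucheck₀ = (Uhat ε * Ucheck ε) * ((Ucheck ε)⁻¹ * Ucheck₀) := by
    rw [mul_assoc, ← mul_assoc (Ucheck ε), Matrix.mul_nonsing_inv _ hdet, one_mul]
  have hVinv : ((Ucheck ε)⁻¹ * Ucheck₀)⁻¹ = Ucheck₀⁻¹ * Ucheck ε := by
    rw [Matrix.mul_inv_rev, Matrix.nonsing_inv_nonsing_inv _ hdet]
  rw [hfac, transformedSC_mul]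
  simp_rw [hVinv]
end

section
/- Let c : Fin n → Fin n → Fin n → ℝ be the structure constants of an n-dimensional real Lie algebra, let f : Fin n → ℝ → ℝ be such that each f i is continuous on (0,1] and f i ε ≠ 0 for every ε ∈ (0,1], and let c₀ : Fin n → Fin n → Fin n → ℝ be such that for all i, j, k the function ε ↦ c i j k * (f i ε) * (f j ε) / (f k ε) tends to c₀ i j k as ε → 0⁺. Then there exist γ : Fin n → ℝ with γ i ≠ 0 for all i, and β : Fin n → ℤ, such that for all i, j, k the function ε ↦ c i j k * (γ i * γ j / γ k) * ε ^ (β i + β j - β k) (integer power, ε > 0) tends to c₀ i j k as ε → 0⁺. -/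
open Filter Topology



private lemma rat_of_real_solution (n : ℕ) (E Z : Set (Fin n × Fin n × Fin n)) (y : Fin n → ℝ)
    (hE : ∀ t ∈ E, y t.1 + y t.2.1 - y t.2.2 = 0)
    (hZ : ∀ t ∈ Z, 0 < y t.1 + y t.2.1 - y t.2.2) :
    ∃ β : Fin n → ℤ, (∀ t ∈ E, β t.1 + β t.2.1 - β t.2.2 = 0) ∧
      (∀ t ∈ Z, 0 < β t.1 + β t.2.1 - β t.2.2) := by
  classical
  set M : Submodule ℚ ℝ := Submodule.span ℚ (Set.range y) with hM
  haveI : FiniteDimensional ℚ M := FiniteDimensional.span_of_finite ℚ (Set.finite_range y)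
  set d := Module.finrank ℚ M with hd
  let b : Module.Basis (Fin d) ℚ M := Module.finBasis ℚ M
  have hy : ∀ i, y i ∈ M := fun i => Submodule.subset_span ⟨i, rfl⟩
  let Q : Fin d → Fin n → ℚ := fun m i => b.repr ⟨y i, hy i⟩ m
  let r : Fin d → ℝ := fun m => (b m : ℝ)
  have hrepr : ∀ i, y i = ∑ m, (Q m i : ℝ) * r m := by
    intro i
    have := b.sum_repr ⟨y i, hy i⟩
    have h2 := congrArg (Submodule.subtype M) this
    simp only [map_sum, Submodule.coe_subtype] at h2
    rw [← h2]
    simp [Q, r, Rat.smul_def]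
  have hli : LinearIndependent ℚ r := b.linearIndependent.map' M.subtype (Submodule.ker_subtype M)
  have hcoef : ∀ t : Fin n × Fin n × Fin n,
      y t.1 + y t.2.1 - y t.2.2
        = ∑ m, ((Q m t.1 + Q m t.2.1 - Q m t.2.2 : ℚ) : ℝ) * r m := by
    intro t
    rw [hrepr t.1, hrepr t.2.1, hrepr t.2.2, ← Finset.sum_add_distrib, ← Finset.sum_sub_distrib]
    apply Finset.sum_congr rfl
    intro m _
    push_cast
    ring
  have hQE : ∀ t ∈ E, ∀ m, Q m t.1 + Q m t.2.1 - Q m t.2.2 = 0 := by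
    intro t ht
    have h0 : ∑ m, (Q m t.1 + Q m t.2.1 - Q m t.2.2) • r m = 0 := by
      simp only [Rat.smul_def]
      rw [← hcoef t, hE t ht]
    exact Fintype.linearIndependent_iff.1 hli _ h0
  let A : (Fin n × Fin n × Fin n) → Fin d → ℝ :=
    fun t m => ((Q m t.1 + Q m t.2.1 - Q m t.2.2 : ℚ) : ℝ)
  let F : (Fin d → ℝ) → (Fin n × Fin n × Fin n) → ℝ := fun v t => ∑ m, A t m * v m
  have hFcont : ∀ t, Continuous fun v : Fin d → ℝ => F v t := fun t =>
    continuous_finset_sum _ fun m _ => continuous_const.mul (continuous_apply m)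
  have hU : IsOpen {v : Fin d → ℝ | ∀ t ∈ Z, 0 < F v t} := by
    have hset : {v : Fin d → ℝ | ∀ t ∈ Z, 0 < F v t}
        = ⋂ t, ⋂ (_ : t ∈ Z), {v | 0 < F v t} := by
      ext v; simp [Set.mem_iInter]
    rw [hset]
    exact isOpen_iInter_of_finite fun t => isOpen_iInter_of_finite fun _ =>
      isOpen_lt continuous_const (hFcont t)
  have hrU : r ∈ {v : Fin d → ℝ | ∀ t ∈ Z, 0 < F v t} := by
    intro t ht
    have h := hZ t ht
    rwa [hcoef t] at h
  obtain ⟨δ, hδpos, hball⟩ := Metric.isOpen_iff.1 hU r hrU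
  have hq : ∀ m, ∃ qm : ℚ, |r m - qm| < δ := fun m => exists_rat_near (r m) hδpos
  choose q hqnear using hq
  have hmem : (fun m => (q m : ℝ)) ∈ {v : Fin d → ℝ | ∀ t ∈ Z, 0 < F v t} := by
    apply hball
    rw [Metric.mem_ball, dist_pi_lt_iff hδpos]
    intro m
    rw [Real.dist_eq, abs_sub_comm]
    exact hqnear m
  let yq : Fin n → ℚ := fun i => ∑ m, q m * Q m i
  have hyqsum : ∀ t : Fin n × Fin n × Fin n,
      yq t.1 + yq t.2.1 - yq t.2.2 = ∑ m, q m * (Q m t.1 + Q m t.2.1 - Q m t.2.2) := by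
    intro t
    simp only [yq]
    rw [← Finset.sum_add_distrib, ← Finset.sum_sub_distrib]
    exact Finset.sum_congr rfl fun m _ => by ring
  have hyqE : ∀ t ∈ E, yq t.1 + yq t.2.1 - yq t.2.2 = 0 := by
    intro t ht
    rw [hyqsum t]
    exact Finset.sum_eq_zero fun m _ => by rw [hQE t ht m, mul_zero]
  have hyqZ : ∀ t ∈ Z, 0 < yq t.1 + yq t.2.1 - yq t.2.2 := by
    intro t ht
    have h := hmem t ht
    have hcast : F (fun m => (q m : ℝ)) t = ((yq t.1 + yq t.2.1 - yq t.2.2 : ℚ) : ℝ) := by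
      rw [hyqsum t]
      push_cast
      exact Finset.sum_congr rfl fun m _ => by simp only [A]; push_cast; ring
    rw [hcast] at h
    exact_mod_cast h
  set D : ℕ := ∏ i, (yq i).den with hDdef
  have hDpos : 0 < D := Finset.prod_pos fun i _ => (yq i).pos
  have hint : ∀ i, ∃ z : ℤ, (z : ℚ) = (D : ℚ) * yq i := by
    intro i
    have hdvd : (yq i).den ∣ D := Finset.dvd_prod_of_mem _ (Finset.mem_univ i)
    obtain ⟨e, he⟩ := hdvd
    refine ⟨(yq i).num * e, ?_⟩
    have hd0 : ((yq i).den : ℚ) ≠ 0 := by exact_mod_cast (yq i).den_ne_zero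
    have hnum : ((yq i).num : ℚ) = yq i * ((yq i).den : ℚ) :=
      (div_eq_iff hd0).1 (Rat.num_div_den (yq i))
    have heQ : (D : ℚ) = ((yq i).den : ℚ) * (e : ℚ) := by exact_mod_cast congrArg (Nat.cast (R := ℚ)) he
    push_cast
    rw [hnum, heQ]
    ring
  choose β hβ using hint
  have hcast2 : ∀ t : Fin n × Fin n × Fin n,
      ((β t.1 + β t.2.1 - β t.2.2 : ℤ) : ℚ) = (D : ℚ) * (yq t.1 + yq t.2.1 - yq t.2.2) := by
    intro t
    push_cast
    rw [hβ t.1, hβ t.2.1, hβ t.2.2]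
    ring
  refine ⟨β, ?_, ?_⟩
  · intro t ht
    have h := hcast2 t
    rw [hyqE t ht, mul_zero] at h
    exact_mod_cast h
  · intro t ht
    have h1 : (0 : ℚ) < (D : ℚ) * (yq t.1 + yq t.2.1 - yq t.2.2) :=
      mul_pos (by exact_mod_cast hDpos) (hyqZ t ht)
    rw [← hcast2 t] at h1
    exact_mod_cast h1


private lemma lin_exists (n : ℕ) (E Z : Set (Fin n × Fin n × Fin n))
    (u : ℝ → Fin n → ℝ) (φ : Fin n × Fin n × Fin n → ℝ)
    (hE : ∀ t ∈ E, Tendsto (fun ε => u ε t.1 + u ε t.2.1 - u ε t.2.2) (𝓝[>] (0:ℝ)) (𝓝 (φ t)))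
    (hZ : ∀ t ∈ Z, Tendsto (fun ε => u ε t.1 + u ε t.2.1 - u ε t.2.2) (𝓝[>] (0:ℝ)) atBot) :
    (∃ x : Fin n → ℝ, ∀ t ∈ E, x t.1 + x t.2.1 - x t.2.2 = φ t) ∧
    (∃ y : Fin n → ℝ, (∀ t ∈ E, y t.1 + y t.2.1 - y t.2.2 = 0) ∧
      (∀ t ∈ Z, 0 < y t.1 + y t.2.1 - y t.2.2)) := by
  classical
  set l : Filter ℝ := 𝓝[>] (0:ℝ) with hl
  let T : (Fin n → ℝ) →ₗ[ℝ] ((Fin n × Fin n × Fin n) → ℝ) :=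
    LinearMap.pi (fun t => if t ∈ E then
      ((LinearMap.proj t.1 : (Fin n → ℝ) →ₗ[ℝ] ℝ)
        + (LinearMap.proj t.2.1 : (Fin n → ℝ) →ₗ[ℝ] ℝ)
        - (LinearMap.proj t.2.2 : (Fin n → ℝ) →ₗ[ℝ] ℝ)) else 0)
  have hTapp : ∀ (x : Fin n → ℝ) t, T x t
      = if t ∈ E then x t.1 + x t.2.1 - x t.2.2 else 0 := by
    intro x t
    by_cases ht : t ∈ E <;>
      simp [T, LinearMap.pi_apply, ht, LinearMap.proj_apply]
  let φ' : (Fin n × Fin n × Fin n) → ℝ := fun t => if t ∈ E then φ t else 0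
  have hTu : Tendsto (fun ε => T (u ε)) l (𝓝 φ') := by
    rw [tendsto_pi_nhds]
    intro t
    simp only [hTapp, φ']
    by_cases ht : t ∈ E
    · simpa [ht] using hE t ht
    · simpa [ht] using tendsto_const_nhds (α := ℝ) (f := l) (a := (0:ℝ))
  have hφ' : φ' ∈ LinearMap.range T := by
    have hcl : IsClosed ((LinearMap.range T : Submodule ℝ _) : Set ((Fin n × Fin n × Fin n) → ℝ)) :=
      Submodule.closed_of_finiteDimensional _
    exact hcl.mem_of_tendsto hTu (Eventually.of_forall fun ε => LinearMap.mem_range_self T (u ε))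
  obtain ⟨x₀, hx₀⟩ := hφ'
  constructor
  · refine ⟨x₀, fun t ht => ?_⟩
    have h := congrFun hx₀ t
    rw [hTapp] at h
    simpa [ht, φ'] using h
  · obtain ⟨g, hg⟩ := T.rangeRestrict.exists_rightInverse_of_surjective T.range_rangeRestrict
    have hgc : Continuous g := g.continuous_of_finiteDimensional
    let w : ℝ → Fin n → ℝ := fun ε => g (T.rangeRestrict (u ε))
    have hwlim : Tendsto w l (𝓝 (g ⟨φ', ⟨x₀, hx₀⟩⟩)) := by
      apply hgc.continuousAt.tendsto.comp
      rw [tendsto_subtype_rng]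
      exact hTu
    have hTw : ∀ ε, T (w ε) = T (u ε) := by
      intro ε
      exact congrArg Subtype.val (LinearMap.congr_fun hg (T.rangeRestrict (u ε)))
    -- the limit point of w
    set w0 : Fin n → ℝ := g ⟨φ', ⟨x₀, hx₀⟩⟩ with hw0
    have hκE : ∀ ε, ∀ t ∈ E,
        (u ε t.1 - w ε t.1) + (u ε t.2.1 - w ε t.2.1) - (u ε t.2.2 - w ε t.2.2) = 0 := by
      intro ε t ht
      have h := congrFun (hTw ε) t
      rw [hTapp, hTapp, if_pos ht, if_pos ht] at h
      linarith
    have hκZ : ∀ t ∈ Z, Tendsto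
        (fun ε => (u ε t.1 - w ε t.1) + (u ε t.2.1 - w ε t.2.1) - (u ε t.2.2 - w ε t.2.2))
        l atBot := by
      intro t ht
      have hwt : Tendsto (fun ε => w ε t.1 + w ε t.2.1 - w ε t.2.2) l
          (𝓝 (w0 t.1 + w0 t.2.1 - w0 t.2.2)) := by
        have h1 := tendsto_pi_nhds.1 hwlim t.1
        have h2 := tendsto_pi_nhds.1 hwlim t.2.1
        have h3 := tendsto_pi_nhds.1 hwlim t.2.2
        exact (h1.add h2).sub h3
      set C : ℝ := w0 t.1 + w0 t.2.1 - w0 t.2.2 with hC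
      have hev : ∀ᶠ ε in l, C - 1 ≤ w ε t.1 + w ε t.2.1 - w ε t.2.2 :=
        hwt.eventually (eventually_ge_nhds (by linarith))
      have hbot : Tendsto (fun ε => (u ε t.1 + u ε t.2.1 - u ε t.2.2) - (C - 1)) l atBot :=
        tendsto_atBot_add_const_right l (-(C - 1)) (hZ t ht)
      refine tendsto_atBot_mono' l ?_ hbot
      filter_upwards [hev] with ε hε
      linarith
    have hev2 : ∀ᶠ ε in l, ∀ t : Fin n × Fin n × Fin n, t ∈ Z →
        (u ε t.1 - w ε t.1) + (u ε t.2.1 - w ε t.2.1) - (u ε t.2.2 - w ε t.2.2) < 0 := by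
      rw [eventually_all]
      intro t
      by_cases ht : t ∈ Z
      · have h := (hκZ t ht).eventually (eventually_lt_atBot (0:ℝ))
        filter_upwards [h] with ε hε _
        exact hε
      · filter_upwards with ε h
        exact absurd h ht
    obtain ⟨ε₀, hε₀⟩ := hev2.exists
    refine ⟨fun i => w ε₀ i - u ε₀ i, fun t ht => ?_, fun t ht => ?_⟩
    · have := hκE ε₀ t ht
      simp only
      linarith
    · have := hε₀ t ht
      simp only
      linarith


private lemma sign_const_aux {f : ℝ → ℝ} (hc : ContinuousOn f (Set.Ioc 0 1))
    (hne : ∀ ε ∈ Set.Ioc (0:ℝ) 1, f ε ≠ 0) {ε : ℝ} (hε : ε ∈ Set.Ioc (0:ℝ) 1) :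
    (if 0 < f 1 then (1:ℝ) else -1) * f ε = |f ε| := by
  have h1 : (1:ℝ) ∈ Set.Ioc (0:ℝ) 1 := by norm_num
  have hsub : Set.Icc ε 1 ⊆ Set.Ioc 0 1 := fun x hx => ⟨lt_of_lt_of_le hε.1 hx.1, hx.2⟩
  have hcont : ContinuousOn f (Set.Icc ε 1) := hc.mono hsub
  by_cases hf1 : 0 < f 1
  · rw [if_pos hf1, one_mul]
    have hfε : 0 < f ε := by
      rcases (hne ε hε).lt_or_gt with h | h
      · exfalso
        have hmem : (0:ℝ) ∈ Set.Icc (f ε) (f 1) := ⟨h.le, hf1.le⟩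
        obtain ⟨x, hx, hfx⟩ := intermediate_value_Icc hε.2 hcont hmem
        exact hne x (hsub hx) hfx
      · exact h
    exact (abs_of_pos hfε).symm
  · rw [if_neg hf1]
    have hf1' : f 1 < 0 := (hne 1 h1).lt_or_gt.resolve_right hf1
    have hfε : f ε < 0 := by
      rcases (hne ε hε).lt_or_gt with h | h
      · exact h
      · exfalso
        have hmem : (0:ℝ) ∈ Set.Icc (f 1) (f ε) := ⟨hf1'.le, h.le⟩
        obtain ⟨x, hx, hfx⟩ := intermediate_value_Icc' hε.2 hcont hmem
        exact hne x (hsub hx) hfx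
    rw [abs_of_neg hfε]
    ring


/-- Any diagonal contraction of a real Lie algebra is equivalent to a generalized
Inönü–Wigner contraction with an integer signature: the contracted structure
constants `c₀` obtained via the diagonal matrix `diag(f_1(ε),…,f_n(ε))` are also
obtained via the matrix `diag(γ_1 ε^{β_1},…,γ_n ε^{β_n})` with integer exponents. -/
theorem diagonal_contraction_equiv_genIW_integer
    (n : ℕ) (c c₀ : Fin n → Fin n → Fin n → ℝ)
    (hanti : ∀ i j k, c i j k = -(c j i k))
    (hjac : ∀ i j k m, ∑ l, (c i j l * c l k m + c k i l * c l j m + c j k l * c l i m) = 0)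
    (f : Fin n → ℝ → ℝ)
    (hfcont : ∀ i, ContinuousOn (f i) (Set.Ioc 0 1))
    (hfne : ∀ i, ∀ ε ∈ Set.Ioc (0 : ℝ) 1, f i ε ≠ 0)
    (hlim : ∀ i j k, Tendsto (fun ε : ℝ => c i j k * f i ε * f j ε / f k ε)
      (𝓝[>] (0 : ℝ)) (𝓝 (c₀ i j k))) :
    ∃ γ : Fin n → ℝ, (∀ i, γ i ≠ 0) ∧ ∃ β : Fin n → ℤ, ∀ i j k,
      Tendsto (fun ε : ℝ => c i j k * (γ i * γ j / γ k) * ε ^ (β i + β j - β k))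
        (𝓝[>] (0 : ℝ)) (𝓝 (c₀ i j k)) := by
  classical
  have hev01 : ∀ᶠ ε in 𝓝[>] (0:ℝ), ε ∈ Set.Ioc (0:ℝ) 1 := by
    have h1 : ∀ᶠ ε in 𝓝[>] (0:ℝ), ε ∈ Set.Ioi (0:ℝ) := eventually_mem_nhdsWithin
    have h2 : ∀ᶠ ε in 𝓝[>] (0:ℝ), ε ≤ 1 :=
      (eventually_le_nhds (by norm_num : (0:ℝ) < 1)).filter_mono nhdsWithin_le_nhds
    filter_upwards [h1, h2] with ε hε1 hε2
    exact ⟨hε1, hε2⟩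
  set E : Set (Fin n × Fin n × Fin n) :=
    {t | c t.1 t.2.1 t.2.2 ≠ 0 ∧ c₀ t.1 t.2.1 t.2.2 ≠ 0} with hEdef
  set Z : Set (Fin n × Fin n × Fin n) :=
    {t | c t.1 t.2.1 t.2.2 ≠ 0 ∧ c₀ t.1 t.2.1 t.2.2 = 0} with hZdef
  set L : Fin n × Fin n × Fin n → ℝ :=
    fun t => c₀ t.1 t.2.1 t.2.2 / c t.1 t.2.1 t.2.2 with hLdef
  have hg : ∀ t : Fin n × Fin n × Fin n, c t.1 t.2.1 t.2.2 ≠ 0 →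
      Tendsto (fun ε => f t.1 ε * f t.2.1 ε / f t.2.2 ε) (𝓝[>] (0:ℝ)) (𝓝 (L t)) := by
    rintro ⟨i, j, k⟩ hc
    have h := (hlim i j k).const_mul (c i j k)⁻¹
    have heq : (fun ε => (c i j k)⁻¹ * (c i j k * f i ε * f j ε / f k ε))
        = fun ε => f i ε * f j ε / f k ε := by
      funext ε
      rw [mul_assoc (c i j k), mul_div_assoc, inv_mul_cancel_left₀ hc]
    rw [heq] at h
    simpa [hLdef, inv_mul_eq_div] using h
  set u : ℝ → Fin n → ℝ := fun ε i => Real.log |f i ε| with hudef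
  have hlogeq : ∀ (i j k : Fin n), ∀ᶠ ε in 𝓝[>] (0:ℝ),
      Real.log |f i ε * f j ε / f k ε| = u ε i + u ε j - u ε k := by
    intro i j k
    filter_upwards [hev01] with ε hε
    have h1 : |f i ε| ≠ 0 := abs_ne_zero.2 (hfne i ε hε)
    have h2 : |f j ε| ≠ 0 := abs_ne_zero.2 (hfne j ε hε)
    have h3 : |f k ε| ≠ 0 := abs_ne_zero.2 (hfne k ε hε)
    rw [abs_div, abs_mul, Real.log_div (mul_ne_zero h1 h2) h3, Real.log_mul h1 h2]
  have huE : ∀ t ∈ E, Tendsto (fun ε => u ε t.1 + u ε t.2.1 - u ε t.2.2)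
      (𝓝[>] (0:ℝ)) (𝓝 (Real.log |L t|)) := by
    rintro ⟨i, j, k⟩ ht
    obtain ⟨hc, hc0⟩ := ht
    have hL : L (i, j, k) ≠ 0 := div_ne_zero hc0 hc
    have habs : Tendsto (fun ε => |f i ε * f j ε / f k ε|) (𝓝[>] (0:ℝ)) (𝓝 |L (i, j, k)|) :=
      (hg _ hc).abs
    have hlog : Tendsto (fun ε => Real.log |f i ε * f j ε / f k ε|) (𝓝[>] (0:ℝ))
        (𝓝 (Real.log |L (i, j, k)|)) :=
      ((Real.continuousAt_log (abs_ne_zero.2 hL)).tendsto).comp habs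
    exact hlog.congr' (hlogeq i j k)
  have huZ : ∀ t ∈ Z, Tendsto (fun ε => u ε t.1 + u ε t.2.1 - u ε t.2.2)
      (𝓝[>] (0:ℝ)) atBot := by
    rintro ⟨i, j, k⟩ ht
    obtain ⟨hc, hc0⟩ := ht
    have hL0 : L (i, j, k) = 0 := by simp [hLdef, hc0]
    have habs : Tendsto (fun ε => |f i ε * f j ε / f k ε|) (𝓝[>] (0:ℝ)) (𝓝[>] (0:ℝ)) := by
      rw [tendsto_nhdsWithin_iff]
      constructor
      · have h := (hg _ hc).abs
        rwa [hL0, abs_zero] at h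
      · filter_upwards [hev01] with ε hε
        exact abs_pos.2 (div_ne_zero (mul_ne_zero (hfne i ε hε) (hfne j ε hε)) (hfne k ε hε))
    have hlog := Real.tendsto_log_nhdsGT_zero.comp habs
    exact hlog.congr' (hlogeq i j k)
  obtain ⟨⟨x₀, hx₀⟩, ⟨y, hyE, hyZ⟩⟩ :=
    lin_exists n E Z u (fun t => Real.log |L t|) huE huZ
  obtain ⟨β, hβE, hβZ⟩ := rat_of_real_solution n E Z y hyE hyZ
  set σ : Fin n → ℝ := fun i => if 0 < f i 1 then 1 else -1 with hσdef
  have hσne : ∀ i, σ i ≠ 0 := by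
    intro i
    by_cases h : 0 < f i 1 <;> simp [hσdef, h]
  have hσabs : ∀ i, ∀ ε ∈ Set.Ioc (0:ℝ) 1, σ i * f i ε = |f i ε| := by
    intro i ε hε
    simp only [hσdef]
    exact sign_const_aux (hfcont i) (hfne i) hε
  set γ : Fin n → ℝ := fun i => σ i * Real.exp (x₀ i) with hγdef
  have hγne : ∀ i, γ i ≠ 0 := fun i => mul_ne_zero (hσne i) (Real.exp_ne_zero _)
  refine ⟨γ, hγne, β, ?_⟩
  intro i j k
  by_cases hc : c i j k = 0
  · have hc₀ : c₀ i j k = 0 := by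
      have h0 : Tendsto (fun _ : ℝ => (0:ℝ)) (𝓝[>] (0:ℝ)) (𝓝 (c₀ i j k)) := by
        simpa [hc] using hlim i j k
      exact (tendsto_nhds_unique h0 tendsto_const_nhds)
    simpa [hc, hc₀] using
      (tendsto_const_nhds : Tendsto (fun _ : ℝ => (0:ℝ)) (𝓝[>] (0:ℝ)) (𝓝 0))
  by_cases hc0 : c₀ i j k = 0
  · -- vanishing case : positive exponent
    have htZ : (⟨i, j, k⟩ : Fin n × Fin n × Fin n) ∈ Z := ⟨hc, hc0⟩
    have hb := hβZ _ htZ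
    set b : ℤ := β i + β j - β k with hbdef
    have hbnat : b = (b.toNat : ℤ) := (Int.toNat_of_nonneg hb.le).symm
    have hfn : (fun ε : ℝ => c i j k * (γ i * γ j / γ k) * ε ^ b)
        = fun ε : ℝ => c i j k * (γ i * γ j / γ k) * ε ^ (b.toNat) := by
      funext ε
      conv_lhs => rw [hbnat]
      rw [zpow_natCast]
    rw [hc0, hfn]
    have h0 : Tendsto (fun ε : ℝ => ε ^ b.toNat) (𝓝[>] (0:ℝ)) (𝓝 0) := by
      have hcont := (continuous_pow b.toNat).tendsto (0:ℝ)
      rw [zero_pow (by omega : b.toNat ≠ 0)] at hcont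
      exact hcont.mono_left nhdsWithin_le_nhds
    simpa using h0.const_mul (c i j k * (γ i * γ j / γ k))
  · -- nonvanishing case : zero exponent
    have htE : (⟨i, j, k⟩ : Fin n × Fin n × Fin n) ∈ E := ⟨hc, hc0⟩
    have hb0 : β i + β j - β k = 0 := hβE _ htE
    have hx : x₀ i + x₀ j - x₀ k = Real.log |L (i, j, k)| := hx₀ _ htE
    have hL : L (i, j, k) ≠ 0 := div_ne_zero hc0 hc
    have hsign : (σ i * σ j / σ k) * L (i, j, k) = |L (i, j, k)| := by
      have h1 : Tendsto (fun ε => (σ i * σ j / σ k) * (f i ε * f j ε / f k ε)) (𝓝[>] (0:ℝ))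
          (𝓝 ((σ i * σ j / σ k) * L (i, j, k))) := (hg _ hc).const_mul _
      have h2 : Tendsto (fun ε => |f i ε * f j ε / f k ε|) (𝓝[>] (0:ℝ))
          (𝓝 |L (i, j, k)|) := (hg _ hc).abs
      have heq : ∀ᶠ ε in 𝓝[>] (0:ℝ),
          (σ i * σ j / σ k) * (f i ε * f j ε / f k ε) = |f i ε * f j ε / f k ε| := by
        filter_upwards [hev01] with ε hε
        rw [abs_div, abs_mul, ← hσabs i ε hε, ← hσabs j ε hε, ← hσabs k ε hε]
        have hfk := hfne k ε hε
        have hσk := hσne k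
        field_simp
      exact tendsto_nhds_unique (h1.congr' heq) h2
    have hγval : γ i * γ j / γ k = L (i, j, k) := by
      have hexp : Real.exp (x₀ i) * Real.exp (x₀ j) / Real.exp (x₀ k) = |L (i, j, k)| := by
        rw [← Real.exp_add, ← Real.exp_sub, hx, Real.exp_log (abs_pos.2 hL)]
      have hsplit : γ i * γ j / γ k
          = (σ i * σ j / σ k) * (Real.exp (x₀ i) * Real.exp (x₀ j) / Real.exp (x₀ k)) := by
        simp only [hγdef]
        field_simp
      have h1 : σ i * σ j / σ k = |L (i, j, k)| / L (i, j, k) := (eq_div_iff hL).2 hsign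
      rw [hsplit, hexp, h1, div_mul_eq_mul_div, abs_mul_abs_self, mul_div_assoc,
        div_self hL, mul_one]
    have hfn : (fun ε : ℝ => c i j k * (γ i * γ j / γ k) * ε ^ (β i + β j - β k))
        = fun _ : ℝ => c₀ i j k := by
      funext ε
      rw [hb0, zpow_zero, mul_one, hγval]
      simp only [hLdef]
      field_simp
    rw [hfn]
    exact tendsto_const_nhds
end

section
/- Let c : Fin n → Fin n → Fin n → ℝ be the structure constants of an n-dimensional real Lie algebra, let f : Fin n → ℝ → ℝ be such that each f i is continuous on (0,1], f i ε ≠ 0 for every ε ∈ (0,1], and each f i tends to a finite limit as ε → 0⁺. Let c₀ : Fin n → Fin n → Fin n → ℝ be such that for all i, j, k the function ε ↦ c i j k * (f i ε) * (f j ε) / (f k ε) tends to c₀ i j k as ε → 0⁺. Then there exist γ : Fin n → ℝ with γ i ≠ 0 for all i, and β : Fin n → ℤ with β i ≥ 0 for all i, such that for all i, j, k the function ε ↦ c i j k * (γ i * γ j / γ k) * ε ^ (β i + β j - β k) tends to c₀ i j k as ε → 0⁺. -/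
open Filter Topology Set
open scoped RealInnerProductSpace

noncomputable section DiagonalContractionAux

namespace DiagonalContractionAux

/-- cast a rational vector to a Euclidean vector -/
def castE {n : ℕ} (y : Fin n → ℚ) : EuclideanSpace ℝ (Fin n) := WithLp.toLp 2 (fun i => (y i : ℝ))

/-- cast an integer vector to a Euclidean vector -/
def castZE {n : ℕ} (v : Fin n → ℤ) : EuclideanSpace ℝ (Fin n) := WithLp.toLp 2 (fun i => (v i : ℝ))

lemma castE_apply {n : ℕ} (y : Fin n → ℚ) (i : Fin n) : castE y i = (y i : ℝ) := rfl

lemma inner_eqE {ι : Type*} [Fintype ι] (x y : EuclideanSpace ℝ ι) :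
    ⟪x, y⟫ = ∑ i, x i * y i := by
  simp [PiLp.inner_apply, RCLike.inner_apply, mul_comm]

lemma inner_castZE {n : ℕ} (v : Fin n → ℤ) (x : EuclideanSpace ℝ (Fin n)) :
    ⟪castZE v, x⟫ = ∑ i, (v i : ℝ) * x i := by
  simp [PiLp.inner_apply, RCLike.inner_apply, castZE, mul_comm]

lemma E_sum_apply' {ι κ : Type*} [Fintype ι] [Fintype κ] (c : κ → ℝ)
    (g : κ → EuclideanSpace ℝ ι) (i : ι) :
    (∑ j, c j • g j) i = ∑ j, c j * g j i := by
  simp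

lemma swap_sum {α : Type*} [CommRing α] {ι₁ ι₂ : Type*} [Fintype ι₁] [Fintype ι₂]
    (A : ι₁ → α) (B : ι₂ → α) (Y : ι₂ → ι₁ → α) :
    ∑ i, A i * ∑ j, B j * Y j i = ∑ j, B j * ∑ i, A i * Y j i := by
  calc ∑ i, A i * ∑ j, B j * Y j i = ∑ i, ∑ j, A i * (B j * Y j i) := by
        congr 1; funext i; rw [Finset.mul_sum]
    _ = ∑ j, ∑ i, A i * (B j * Y j i) := Finset.sum_comm
    _ = ∑ j, B j * ∑ i, A i * Y j i := by
        congr 1; funext j; rw [Finset.mul_sum]; congr 1; funext i; ring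

/-- the real solutions of a rational linear system lie in the real span of the
rational solutions -/
lemma rat_kernel_span {n : ℕ} (R : List (Fin n → ℚ)) (x : EuclideanSpace ℝ (Fin n))
    (hx : ∀ v ∈ R, ∑ i, (v i : ℝ) * x i = 0) :
    x ∈ Submodule.span ℝ (castE '' {y | ∀ v ∈ R, ∑ i, v i * y i = 0}) := by
  induction R generalizing x with
  | nil =>
    have hb : Set.range (fun i => (EuclideanSpace.single i (1:ℝ))) ⊆
        castE '' {y : Fin n → ℚ | ∀ v ∈ ([] : List (Fin n → ℚ)), ∑ i, v i * y i = 0} := by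
      rintro - ⟨i, rfl⟩
      refine ⟨Pi.single i 1, by simp, ?_⟩
      ext j
      by_cases h : j = i <;> simp [castE, Pi.single_apply, EuclideanSpace.single_apply, h, eq_comm] <;> simp [Ne.symm h]
    have : x ∈ Submodule.span ℝ (Set.range (fun i => (EuclideanSpace.single i (1:ℝ)))) := by
      have := (EuclideanSpace.basisFun (Fin n) ℝ).toBasis.span_eq
      have heq : Set.range (EuclideanSpace.basisFun (Fin n) ℝ).toBasis =
          Set.range (fun i => (EuclideanSpace.single i (1:ℝ))) := by
        rw [OrthonormalBasis.coe_toBasis]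
        ext z
        simp [EuclideanSpace.basisFun_apply]
      rw [heq] at this
      rw [this]; trivial
    exact Submodule.span_mono hb this
  | cons v R ih =>
    have hvx : ∑ i, (v i : ℝ) * x i = 0 := hx v List.mem_cons_self
    have hRx : ∀ w ∈ R, ∑ i, (w i : ℝ) * x i = 0 := fun w hw => hx w (List.mem_cons_of_mem _ hw)
    by_cases hall : ∀ y : Fin n → ℚ, (∀ w ∈ R, ∑ i, w i * y i = 0) → ∑ i, v i * y i = 0
    · have hset : {y : Fin n → ℚ | ∀ w ∈ v :: R, ∑ i, w i * y i = 0} =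
          {y : Fin n → ℚ | ∀ w ∈ R, ∑ i, w i * y i = 0} := by
        ext y
        simp only [Set.mem_setOf_eq, List.mem_cons]
        constructor
        · intro h w hw; exact h w (Or.inr hw)
        · intro h w hw
          rcases hw with rfl | hw
          · exact hall y h
          · exact h w hw
      rw [hset]
      exact ih x hRx
    · push_neg at hall
      obtain ⟨y0, hy0, hd⟩ := hall
      set d : ℚ := ∑ i, v i * y0 i with hdef
      set Φ : EuclideanSpace ℝ (Fin n) →ₗ[ℝ] EuclideanSpace ℝ (Fin n) :=
        LinearMap.id - ((innerSL ℝ (castE v)).toLinearMap.smulRight (((d:ℝ))⁻¹ • castE y0))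
        with hΦ
      have hΦ_apply : ∀ z, Φ z = z - (((∑ i, (v i:ℝ) * z i)) / (d:ℝ)) • castE y0 := by
        intro z
        simp only [hΦ, LinearMap.sub_apply, LinearMap.id_apply, LinearMap.smulRight_apply,
          ContinuousLinearMap.coe_coe, innerSL_apply_apply]
        rw [inner_eqE]
        simp only [castE_apply]
        rw [smul_smul, div_eq_mul_inv]
      have hΦx : Φ x = x := by rw [hΦ_apply, hvx]; simp
      have hx' := ih x hRx
      have hmap : Φ '' (castE '' {y | ∀ w ∈ R, ∑ i, w i * y i = 0}) ⊆
          castE '' {y | ∀ w ∈ v :: R, ∑ i, w i * y i = 0} := by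
        rintro - ⟨-, ⟨y, hy, rfl⟩, rfl⟩
        refine ⟨y - ((∑ i, v i * y i) / d) • y0, ?_, ?_⟩
        · intro w hw
          have hlin : ∀ (u : Fin n → ℚ) (c : ℚ),
              ∑ i, w i * (u - c • y0) i = ∑ i, w i * u i - c * ∑ i, w i * y0 i := by
            intro u cc
            rw [Finset.mul_sum, ← Finset.sum_sub_distrib]
            congr 1; funext i; simp [Pi.sub_apply, Pi.smul_apply]; ring
          rcases List.mem_cons.mp hw with rfl | hw
          · rw [hlin, ← hdef, div_mul_cancel₀ _ hd, sub_self]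
          · rw [hlin, hy w hw, hy0 w hw, mul_zero, sub_zero]
        · rw [hΦ_apply]
          ext i
          simp only [PiLp.sub_apply, PiLp.smul_apply, castE_apply, Pi.sub_apply,
            Pi.smul_apply, smul_eq_mul]
          push_cast
          ring
      have : Φ x ∈ Submodule.span ℝ (Φ '' (castE '' {y | ∀ w ∈ R, ∑ i, w i * y i = 0})) := by
        rw [← Submodule.map_span]
        exact Submodule.mem_map_of_mem hx'
      rw [hΦx] at this
      exact Submodule.span_mono hmap this

/-- strict separation of a finite set from a subspace -/
lemma separation_lemma {n : ℕ} (U : Submodule ℝ (EuclideanSpace ℝ (Fin n)))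
    (s : Set (EuclideanSpace ℝ (Fin n))) (hsfin : s.Finite)
    (hs : ∀ z ∈ convexHull ℝ s, z ∉ U) :
    ∃ x : EuclideanSpace ℝ (Fin n), x ∈ Uᗮ ∧ ∀ u ∈ s, 0 < ⟪u, x⟫ := by
  rcases s.eq_empty_or_nonempty with rfl | hne
  · exact ⟨0, Submodule.zero_mem _, by simp⟩
  set W : Submodule ℝ (EuclideanSpace ℝ (Fin n)) := Uᗮ with hW
  set PL : EuclideanSpace ℝ (Fin n) →ₗ[ℝ] EuclideanSpace ℝ (Fin n) :=
    W.subtype.comp (Submodule.orthogonalProjection W : EuclideanSpace ℝ (Fin n) →L[ℝ] W).toLinearMap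
    with hPL
  have hPL_apply : ∀ u, PL u = (Submodule.orthogonalProjection W u : EuclideanSpace ℝ (Fin n)) :=
    fun u => rfl
  set Cset : Set (EuclideanSpace ℝ (Fin n)) := convexHull ℝ (PL '' s) with hCset
  have hC_convex : Convex ℝ Cset := convex_convexHull _ _
  have hC_compact : IsCompact Cset := (hsfin.image _).isCompact_convexHull (𝕜 := ℝ)
  have hC_ne : Cset.Nonempty := by
    obtain ⟨u, hu⟩ := hne
    exact ⟨PL u, subset_convexHull _ _ ⟨u, hu, rfl⟩⟩
  have hC_sub_W : Cset ⊆ (W : Set (EuclideanSpace ℝ (Fin n))) := by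
    refine convexHull_min ?_ W.convex
    rintro - ⟨u, -, rfl⟩
    exact (Submodule.orthogonalProjection W u).2
  obtain ⟨p, hpC, hnorm⟩ :=
    exists_norm_eq_iInf_of_complete_convex hC_ne hC_compact.isComplete hC_convex 0
  by_cases hp : p = 0
  · exfalso
    rw [hp] at hpC
    rw [hCset, ← LinearMap.image_convexHull] at hpC
    obtain ⟨z, hz, hz0⟩ := hpC
    have hzU : z ∈ U := by
      have h1 : z - PL z ∈ Wᗮ := Submodule.sub_starProjection_mem_orthogonal (K := W) z
      rw [hz0, sub_zero] at h1
      rwa [hW, Submodule.orthogonal_orthogonal] at h1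
    exact hs z hz hzU
  · refine ⟨p, hC_sub_W hpC, ?_⟩
    have hvar : ∀ w ∈ Cset, ⟪(0:EuclideanSpace ℝ (Fin n)) - p, w - p⟫ ≤ 0 :=
      (norm_eq_iInf_iff_real_inner_le_zero hC_convex hpC).mp hnorm
    have hkey : ∀ w ∈ Cset, ‖p‖ ^ 2 ≤ ⟪w, p⟫ := by
      intro w hw
      have := hvar w hw
      rw [zero_sub, inner_sub_right, inner_neg_left, inner_neg_left] at this
      have h4 : ⟪p, p⟫ ≤ ⟪p, w⟫ := by linarith
      rw [real_inner_self_eq_norm_sq] at h4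
      have h5 : ⟪p, w⟫ = ⟪w, p⟫ := real_inner_comm _ _
      linarith
    intro u hu
    have hPu : PL u ∈ Cset := subset_convexHull _ _ ⟨u, hu, rfl⟩
    have h1 : ‖p‖ ^ 2 ≤ ⟪PL u, p⟫ := hkey _ hPu
    have h2 : ⟪u - PL u, p⟫ = 0 := by
      have hmem : u - PL u ∈ Wᗮ := Submodule.sub_starProjection_mem_orthogonal (K := W) u
      rw [real_inner_comm]
      exact hmem p (hC_sub_W hpC)
    have h3 : ⟪u, p⟫ = ⟪PL u, p⟫ := by
      have := inner_sub_left (𝕜 := ℝ) u (PL u) p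
      rw [h2] at this
      linarith [this]
    have hp2 : 0 < ‖p‖ ^ 2 := by
      have := norm_pos_iff.mpr hp
      positivity
    linarith

/-- perturbation: strictly positive linear inequalities with a real solution have
a rational solution -/
lemma pert_lemma {κ : Type} [Fintype κ] {m : ℕ} (g : κ → Fin m → ℝ) (y : Fin m → ℝ)
    (hpos : ∀ s, 0 < ∑ j, g s j * y j) :
    ∃ q : Fin m → ℚ, ∀ s, 0 < ∑ j, g s j * (q j : ℝ) := by
  rcases isEmpty_or_nonempty κ with hk | hk
  · exact ⟨fun _ => 0, fun s => (hk.false s).elim⟩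
  · have hne : (Finset.univ : Finset κ).Nonempty := Finset.univ_nonempty
    set δ : ℝ := Finset.univ.inf' hne (fun s => (∑ j, g s j * y j) / (1 + ∑ j, |g s j|)) with hδ
    have hδpos : 0 < δ := by
      rw [hδ, Finset.lt_inf'_iff]
      intro s _
      have h1 : 0 < 1 + ∑ j, |g s j| := by positivity
      exact div_pos (hpos s) h1
    have hq : ∀ j : Fin m, ∃ q : ℚ, y j < q ∧ (q : ℝ) < y j + δ := by
      intro j
      exact exists_rat_btwn (by linarith)
    choose q hq1 hq2 using hq
    refine ⟨q, fun s => ?_⟩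
    have hbound : |∑ j, g s j * ((q j : ℝ) - y j)| ≤ δ * ∑ j, |g s j| := by
      calc |∑ j, g s j * ((q j : ℝ) - y j)| ≤ ∑ j, |g s j * ((q j : ℝ) - y j)| :=
            Finset.abs_sum_le_sum_abs _ _
        _ ≤ ∑ j, |g s j| * δ := by
            apply Finset.sum_le_sum
            intro j _
            rw [abs_mul]
            apply mul_le_mul_of_nonneg_left _ (abs_nonneg _)
            rw [abs_le]
            constructor
            · have := hq1 j; linarith
            · have := hq2 j; linarith
        _ = δ * ∑ j, |g s j| := by rw [← Finset.sum_mul]; ring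
    have hδle : δ ≤ (∑ j, g s j * y j) / (1 + ∑ j, |g s j|) :=
      Finset.inf'_le _ (Finset.mem_univ s)
    have h1 : 0 < 1 + ∑ j, |g s j| := by positivity
    have h2 : δ * (1 + ∑ j, |g s j|) ≤ ∑ j, g s j * y j := by
      rw [← le_div_iff₀ h1]; exact hδle
    have hsplit : ∑ j, g s j * (q j : ℝ) = ∑ j, g s j * y j + ∑ j, g s j * ((q j : ℝ) - y j) := by
      rw [← Finset.sum_add_distrib]
      congr 1; funext j; ring
    have habs := abs_le.mp hbound
    have hS : 0 ≤ ∑ j, |g s j| := Finset.sum_nonneg fun j _ => abs_nonneg _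
    nlinarith [habs.1, habs.2]

/-- existence of an integer vector solving the homogeneous equalities and strictly
positive on the inequality constraints -/
lemma int_solution {n : ℕ} {ι κ : Type} [Fintype ι] [Fintype κ]
    (V : ι → Fin n → ℤ) (W : κ → Fin n → ℤ)
    (hobst : ∀ z ∈ convexHull ℝ (Set.range (fun s => castZE (W s))),
        z ∉ Submodule.span ℝ (Set.range (fun t => castZE (V t)))) :
    ∃ b : Fin n → ℤ, (∀ t, ∑ i, V t i * b i = 0) ∧ ∀ s, 1 ≤ ∑ i, W s i * b i := by
  classical
  obtain ⟨x, hxU, hxpos⟩ := separation_lemma (Submodule.span ℝ (Set.range (fun t => castZE (V t))))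
    (Set.range (fun s => castZE (W s))) (Set.finite_range _) hobst
  set R : List (Fin n → ℚ) := (Finset.univ : Finset ι).toList.map (fun t i => ((V t i : ℚ))) with hR
  have hxsol : ∀ v ∈ R, ∑ i, (v i : ℝ) * x i = 0 := by
    intro v hv
    rw [hR, List.mem_map] at hv
    obtain ⟨t, -, rfl⟩ := hv
    have hmem : castZE (V t) ∈ Submodule.span ℝ (Set.range (fun t => castZE (V t))) :=
      Submodule.subset_span ⟨t, rfl⟩
    have := (Submodule.mem_orthogonal _ x).mp hxU _ hmem
    rw [inner_castZE] at this
    simpa using this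
  have hxspan := rat_kernel_span R x hxsol
  rw [Submodule.mem_span_set'] at hxspan
  obtain ⟨m, cf, gv, hsum⟩ := hxspan
  have hy : ∀ j : Fin m, ∃ y : Fin n → ℚ, (∀ v ∈ R, ∑ i, v i * y i = 0) ∧ castE y = (gv j : _) := by
    intro j
    obtain ⟨y, hy1, hy2⟩ := (gv j).2
    exact ⟨y, hy1, hy2⟩
  choose ys hys1 hys2 using hy
  have hx_eq : ∀ i, x i = ∑ j, cf j * (ys j i : ℝ) := by
    intro i
    rw [← hsum, E_sum_apply']
    congr 1; funext j
    congr 1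
    rw [← hys2 j]; rfl
  have hxpos' : ∀ s : κ, 0 < ∑ j, (((∑ i, (W s i : ℚ) * ys j i : ℚ)) : ℝ) * cf j := by
    intro s
    have h0 : (0:ℝ) < ⟪castZE (W s), x⟫ := hxpos _ ⟨s, rfl⟩
    rw [inner_castZE] at h0
    calc (0:ℝ) < ∑ i, (W s i : ℝ) * x i := h0
      _ = ∑ i, (W s i : ℝ) * ∑ j, cf j * (ys j i : ℝ) := by
          congr 1; funext i; rw [hx_eq i]
      _ = ∑ j, cf j * ∑ i, (W s i : ℝ) * (ys j i : ℝ) := swap_sum _ _ _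
      _ = ∑ j, (((∑ i, (W s i : ℚ) * ys j i : ℚ)) : ℝ) * cf j := by
          congr 1; funext j
          push_cast
          ring
  obtain ⟨q, hq⟩ := pert_lemma (fun s j => (((∑ i, (W s i : ℚ) * ys j i : ℚ)) : ℝ))
    (fun j => cf j) hxpos'
  set bq : Fin n → ℚ := fun i => ∑ j, q j * ys j i with hbq
  have hbq_eq : ∀ t : ι, ∑ i, (V t i : ℚ) * bq i = 0 := by
    intro t
    have hsolj : ∀ j, ∑ i, (V t i : ℚ) * ys j i = 0 := by
      intro j
      apply hys1 j
      rw [hR, List.mem_map]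
      exact ⟨t, by simp, rfl⟩
    calc ∑ i, (V t i : ℚ) * bq i = ∑ j, q j * ∑ i, (V t i : ℚ) * ys j i := swap_sum _ _ _
      _ = 0 := by simp [hsolj]
  have hbq_pos : ∀ s : κ, 0 < ∑ i, (W s i : ℚ) * bq i := by
    intro s
    have h1 : (0:ℝ) < ((∑ i, (W s i : ℚ) * bq i : ℚ) : ℝ) := by
      have h2 := hq s
      have h3 : ∑ i, (W s i : ℚ) * bq i = ∑ j, (∑ i, (W s i : ℚ) * ys j i) * q j := by
        calc ∑ i, (W s i : ℚ) * bq i = ∑ j, q j * ∑ i, (W s i : ℚ) * ys j i := swap_sum _ _ _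
          _ = ∑ j, (∑ i, (W s i : ℚ) * ys j i) * q j := by
              congr 1; funext j; ring
      rw [h3]
      push_cast at h2 ⊢
      exact h2
    exact_mod_cast h1
  set N : ℕ := ∏ i, (bq i).den with hN
  have hNden : ∀ i, (bq i).den ∣ N := fun i => Finset.dvd_prod_of_mem _ (Finset.mem_univ i)
  have hNpos : 0 < N := Finset.prod_pos fun i _ => (bq i).pos
  set b : Fin n → ℤ := fun i => (bq i).num * ((N / (bq i).den : ℕ) : ℤ) with hb
  have hbcast : ∀ i, (b i : ℚ) = (N : ℚ) * bq i := by
    intro i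
    have hdiv : ((N / (bq i).den : ℕ) : ℚ) = (N:ℚ) / ((bq i).den:ℚ) :=
      Nat.cast_div (hNden i) (Nat.cast_ne_zero.mpr (bq i).den_nz)
    calc (b i : ℚ) = ((bq i).num : ℚ) * ((N / (bq i).den : ℕ) : ℚ) := by
          show (((bq i).num * ((N / (bq i).den : ℕ) : ℤ) : ℤ) : ℚ) = _
          rw [Int.cast_mul, Int.cast_natCast]
      _ = ((bq i).num : ℚ) * ((N:ℚ) / ((bq i).den : ℚ)) := by rw [hdiv]
      _ = (N:ℚ) * (((bq i).num:ℚ) / ((bq i).den:ℚ)) := by ring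
      _ = (N:ℚ) * bq i := by rw [Rat.num_div_den]
  refine ⟨b, ?_, ?_⟩
  · intro t
    have : ∑ i, ((V t i : ℚ)) * (b i : ℚ) = 0 := by
      calc ∑ i, ((V t i : ℚ)) * (b i : ℚ) = (N:ℚ) * ∑ i, (V t i : ℚ) * bq i := by
            rw [Finset.mul_sum]
            congr 1; funext i
            rw [hbcast i]; ring
        _ = 0 := by rw [hbq_eq t, mul_zero]
    exact_mod_cast this
  · intro s
    have : (0:ℚ) < ∑ i, ((W s i : ℚ)) * (b i : ℚ) := by
      have : ∑ i, ((W s i : ℚ)) * (b i : ℚ) = (N:ℚ) * ∑ i, (W s i : ℚ) * bq i := by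
        rw [Finset.mul_sum]
        congr 1; funext i
        rw [hbcast i]; ring
      rw [this]
      exact mul_pos (by exact_mod_cast hNpos) (hbq_pos s)
    have h4 : (0:ℤ) < ∑ i, W s i * b i := by exact_mod_cast this
    omega

/-- existence of a real solution to the inhomogeneous equalities -/
lemma exists_a {n : ℕ} {ι : Type} [Fintype ι] (V : ι → Fin n → ℤ) (α : ι → ℝ)
    (hcons : ∀ d : ι → ℝ, (∀ i : Fin n, ∑ t, d t * (V t i : ℝ) = 0) → ∑ t, d t * α t = 0) :
    ∃ a : Fin n → ℝ, ∀ t, ∑ i, (V t i : ℝ) * a i = α t := by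
  classical
  set Vsnoc : ι → EuclideanSpace ℝ (Fin (n+1)) :=
    fun t => WithLp.toLp 2 (Fin.snoc (castZE (V t)).ofLp (α t)) with hVsnoc
  set K : Submodule ℝ (EuclideanSpace ℝ (Fin (n+1))) := Submodule.span ℝ (Set.range Vsnoc)
    with hK
  set w0 : EuclideanSpace ℝ (Fin (n+1)) := EuclideanSpace.single (Fin.last n) 1 with hw0
  have hw0K : w0 ∉ K := by
    intro hmem
    rw [hK, Submodule.mem_span_range_iff_exists_fun] at hmem
    obtain ⟨d, hd⟩ := hmem
    have hcoord : ∀ j : Fin (n+1), ∑ t, d t * Vsnoc t j = w0 j := by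
      intro j
      rw [← hd, E_sum_apply']
    have h1 : ∀ i : Fin n, ∑ t, d t * (V t i : ℝ) = 0 := by
      intro i
      have := hcoord i.castSucc
      rw [hw0] at this
      rw [EuclideanSpace.single_apply] at this
      simp only [hVsnoc] at this
      rw [if_neg (Fin.castSucc_lt_last i).ne] at this
      convert this using 2 with t
      rw [Fin.snoc_castSucc]
      rfl
    have h2 : ∑ t, d t * α t = 1 := by
      have := hcoord (Fin.last n)
      rw [hw0, EuclideanSpace.single_apply, if_pos rfl] at this
      simp only [hVsnoc] at this
      rw [← this]
      congr 1; funext t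
      rw [Fin.snoc_last]
    rw [hcons d h1] at h2
    norm_num at h2
  have hu : ∃ u ∈ Kᗮ, ⟪u, w0⟫ ≠ 0 := by
    by_contra hcon
    push_neg at hcon
    have : w0 ∈ Kᗮᗮ := by
      rw [Submodule.mem_orthogonal]
      intro u hu
      exact hcon u hu
    rw [Submodule.orthogonal_orthogonal] at this
    exact hw0K this
  obtain ⟨u, huK, huc⟩ := hu
  set cc : ℝ := u (Fin.last n) with hcc
  have hcc_ne : cc ≠ 0 := by
    rw [inner_eqE] at huc
    intro h0
    apply huc
    rw [Finset.sum_eq_single (Fin.last n)]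
    · rw [hw0, EuclideanSpace.single_apply, if_pos rfl, ← hcc, h0, zero_mul]
    · intro j _ hj
      rw [hw0, EuclideanSpace.single_apply, if_neg hj, mul_zero]
    · intro h; exact absurd (Finset.mem_univ _) h
  refine ⟨fun i => -(u i.castSucc) / cc, fun t => ?_⟩
  have horth : ⟪u, Vsnoc t⟫ = 0 := (Submodule.mem_orthogonal' _ _).mp huK _
    (Submodule.subset_span ⟨t, rfl⟩)
  rw [inner_eqE, Fin.sum_univ_castSucc] at horth
  have hsnoc1 : ∀ i : Fin n, Vsnoc t i.castSucc = (V t i : ℝ) := by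
    intro i
    simp only [hVsnoc]
    rw [Fin.snoc_castSucc]
    rfl
  have hsnoc2 : Vsnoc t (Fin.last n) = α t := by
    simp only [hVsnoc]; rw [Fin.snoc_last]
  rw [hsnoc2] at horth
  have horth' : ∑ i, u i.castSucc * (V t i : ℝ) = -(cc * α t) := by
    rw [← hcc] at horth
    have : ∑ i : Fin n, u i.castSucc * Vsnoc t i.castSucc
        = ∑ i, u i.castSucc * (V t i : ℝ) := by
      congr 1; funext i; rw [hsnoc1 i]
    linarith [this ▸ horth]
  calc ∑ i, (V t i : ℝ) * (-(u i.castSucc) / cc)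
      = (-1/cc) * ∑ i, u i.castSucc * (V t i : ℝ) := by
        rw [Finset.mul_sum]
        congr 1; funext i; ring
    _ = (-1/cc) * (-(cc * α t)) := by rw [horth']
    _ = α t := by field_simp

lemma weighted_sum_atBot {γ : Type*} [DecidableEq γ] (S : Finset γ) (w : γ → ℝ)
    (g : γ → ℝ → ℝ) (l : Filter ℝ) (hw0 : ∀ u ∈ S, 0 ≤ w u) (hw1 : ∑ u ∈ S, w u = 1)
    (hg : ∀ u ∈ S, Tendsto (g u) l atBot) :
    Tendsto (fun ε => ∑ u ∈ S, w u * g u ε) l atBot := by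
  have hex : ∃ u0 ∈ S, 0 < w u0 := by
    by_contra hcon
    push_neg at hcon
    have : ∑ u ∈ S, w u = 0 :=
      Finset.sum_eq_zero fun u hu => le_antisymm (hcon u hu) (hw0 u hu)
    rw [hw1] at this; norm_num at this
  obtain ⟨u0, hu0, hwu0⟩ := hex
  have hmain : Tendsto (fun ε => w u0 * g u0 ε) l atBot :=
    (hg u0 hu0).const_mul_atBot hwu0
  apply tendsto_atBot_mono' l _ hmain
  have hle : ∀ᶠ ε in l, ∀ u ∈ S, g u ε ≤ 0 := by
    rw [Filter.eventually_all_finset]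
    exact fun u hu => (hg u hu).eventually (eventually_le_atBot 0)
  filter_upwards [hle] with ε hε
  calc ∑ u ∈ S, w u * g u ε ≤ ∑ u ∈ S, (if u = u0 then w u0 * g u0 ε else 0) := by
        apply Finset.sum_le_sum
        intro u hu
        by_cases h : u = u0
        · subst h; rw [if_pos rfl]
        · rw [if_neg h]
          exact mul_nonpos_of_nonneg_of_nonpos (hw0 u hu) (hε u hu)
    _ = w u0 * g u0 ε := by rw [Finset.sum_ite_eq' S u0 (fun _ => w u0 * g u0 ε), if_pos hu0]

/-- the core existence lemma -/
lemma core {n : ℕ} {ι κ : Type} [Fintype ι] [Fintype κ] (V : ι → Fin n → ℤ) (α : ι → ℝ)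
    (W : κ → Fin n → ℤ) (h : Fin n → ℝ → ℝ) (l : Filter ℝ) [l.NeBot]
    (hA : ∀ t, Tendsto (fun ε => ∑ i, (V t i : ℝ) * h i ε) l (𝓝 (α t)))
    (hB : ∀ s, Tendsto (fun ε => ∑ i, (W s i : ℝ) * h i ε) l atBot) :
    ∃ a : Fin n → ℝ, ∃ b : Fin n → ℤ,
      (∀ t, ∑ i, (V t i : ℝ) * a i = α t ∧ ∑ i, V t i * b i = 0) ∧
      (∀ s, 1 ≤ ∑ i, W s i * b i) := by
  classical
  obtain ⟨a, ha⟩ := exists_a V α (by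
    intro d hd
    have h1 : Tendsto (fun ε => ∑ t, d t * ∑ i, (V t i : ℝ) * h i ε) l
        (𝓝 (∑ t, d t * α t)) :=
      tendsto_finset_sum _ fun t _ => (hA t).const_mul (d t)
    have h2 : ∀ ε, ∑ t, d t * ∑ i, (V t i : ℝ) * h i ε = (0:ℝ) := by
      intro ε
      calc ∑ t, d t * ∑ i, (V t i : ℝ) * h i ε
          = ∑ t, d t * ∑ i, h i ε * (V t i : ℝ) := by
            apply Finset.sum_congr rfl
            intro t _
            congr 1
            apply Finset.sum_congr rfl
            intro i _
            ring
        _ = ∑ i, h i ε * ∑ t, d t * (V t i : ℝ) := swap_sum d (fun i => h i ε) _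
        _ = 0 := Finset.sum_eq_zero fun i _ => by rw [hd i, mul_zero]
    have h1' : Tendsto (fun _ : ℝ => (0:ℝ)) l (𝓝 (∑ t, d t * α t)) := h1.congr h2
    exact tendsto_nhds_unique h1' tendsto_const_nhds)
  obtain ⟨b, hb1, hb2⟩ := int_solution V W (by
    intro z hzC hzU
    rw [Submodule.mem_span_range_iff_exists_fun] at hzU
    obtain ⟨d, hd⟩ := hzU
    have hrange : Set.range (fun s => castZE (W s)) =
        ((Finset.univ.image fun s => castZE (W s) : Finset (EuclideanSpace ℝ (Fin n))) :
          Set (EuclideanSpace ℝ (Fin n))) := by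
      rw [Finset.coe_image, Finset.coe_univ, Set.image_univ]
    rw [hrange, Finset.mem_convexHull] at hzC
    obtain ⟨wt, hwt0, hwt1, hwtz⟩ := hzC
    set S : Finset (EuclideanSpace ℝ (Fin n)) := Finset.univ.image fun s => castZE (W s) with hS
    have hzsum : z = ∑ u ∈ S, wt u • u := by
      rw [← hwtz, Finset.centerMass_eq_of_sum_1 _ _ hwt1]
      rfl
    set H : ℝ → EuclideanSpace ℝ (Fin n) := fun ε => WithLp.toLp 2 (fun i => h i ε) with hH
    have hF_fin : Tendsto (fun ε => ⟪z, H ε⟫) l (𝓝 (∑ t, d t * α t)) := by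
      have base : Tendsto (fun ε => ∑ t, d t * ∑ i, (V t i : ℝ) * h i ε) l
          (𝓝 (∑ t, d t * α t)) :=
        tendsto_finset_sum _ fun t _ => (hA t).const_mul (d t)
      apply base.congr
      intro ε
      rw [← hd, sum_inner]
      apply Finset.sum_congr rfl
      intro t _
      rw [real_inner_smul_left, inner_eqE]
      rfl
    have hF_bot : Tendsto (fun ε => ⟪z, H ε⟫) l atBot := by
      have base : Tendsto (fun ε => ∑ u ∈ S, wt u * ⟪u, H ε⟫) l atBot := by
        apply weighted_sum_atBot S wt (fun u ε => ⟪u, H ε⟫) l hwt0 hwt1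
        intro u hu
        rw [hS, Finset.mem_image] at hu
        obtain ⟨s, -, rfl⟩ := hu
        have heq : ∀ ε, ∑ i, (W s i : ℝ) * h i ε = ⟪castZE (W s), H ε⟫ := by
          intro ε
          rw [inner_eqE]
          rfl
        exact (hB s).congr heq
      apply base.congr
      intro ε
      rw [hzsum, sum_inner]
      apply Finset.sum_congr rfl
      intro u _
      rw [real_inner_smul_left]
    exact (hF_fin.not_tendsto (disjoint_nhds_atBot _)) hF_bot)
  exact ⟨a, b, fun t => ⟨ha t, hb1 t⟩, hb2⟩

def vec1 {n : ℕ} (i : Fin n) : Fin n → ℤ := fun m => if m = i then 1 else 0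
def vec3 {n : ℕ} (i j k : Fin n) : Fin n → ℤ := fun m =>
  (if m = i then 1 else 0) + (if m = j then 1 else 0) - (if m = k then 1 else 0)

lemma dot1R {n : ℕ} (i : Fin n) (x : Fin n → ℝ) : ∑ m, (vec1 i m : ℝ) * x m = x i := by
  simp [vec1, ite_mul, apply_ite]

lemma dot3R {n : ℕ} (i j k : Fin n) (x : Fin n → ℝ) :
    ∑ m, (vec3 i j k m : ℝ) * x m = x i + x j - x k := by
  simp only [vec3]
  push_cast
  simp only [add_mul, sub_mul, ite_mul, one_mul, zero_mul]
  rw [Finset.sum_sub_distrib, Finset.sum_add_distrib]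
  simp [Finset.sum_ite_eq']

lemma dot1Z {n : ℕ} (i : Fin n) (x : Fin n → ℤ) : ∑ m, vec1 i m * x m = x i := by
  simp [vec1, ite_mul, apply_ite]

lemma dot3Z {n : ℕ} (i j k : Fin n) (x : Fin n → ℤ) :
    ∑ m, vec3 i j k m * x m = x i + x j - x k := by
  simp only [vec3]
  simp only [add_mul, sub_mul, ite_mul, one_mul, zero_mul]
  rw [Finset.sum_sub_distrib, Finset.sum_add_distrib]
  simp [Finset.sum_ite_eq']

lemma sign_mul_abs' (sa sb se a b e : ℝ) (ha : sa * a = |a|) (hb : sb * b = |b|)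
    (he : se * e = |e|) (hsa : sa * sa = 1) (hsb : sb * sb = 1) (hse : se * se = 1) :
    sa * sb * se * |a * b / e| = a * b / e := by
  rcases eq_or_ne e 0 with rfl | he0
  · simp
  · have hse0 : se ≠ 0 := by
      intro h
      rw [h, zero_mul] at he
      exact he0 (abs_eq_zero.mp he.symm)
    rw [abs_div, abs_mul, ← ha, ← hb, ← he]
    field_simp
    linear_combination (a * b * sa * sa) * hsb + (a * b) * hsa

end DiagonalContractionAux

end DiagonalContractionAux
open DiagonalContractionAux in
/-- Any diagonal contraction whose matrix possesses a finite limit at `ε → 0⁺`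
is equivalent to a generalized Inönü–Wigner contraction with nonnegative integer
exponents. -/
theorem diagonal_contraction_finite_limit_equiv_genIW_nonneg
    (n : ℕ) (c c₀ : Fin n → Fin n → Fin n → ℝ)
    (hanti : ∀ i j k, c i j k = -(c j i k))
    (hjac : ∀ i j k m, ∑ l, (c i j l * c l k m + c k i l * c l j m + c j k l * c l i m) = 0)
    (f : Fin n → ℝ → ℝ)
    (hfcont : ∀ i, ContinuousOn (f i) (Set.Ioc 0 1))
    (hfne : ∀ i, ∀ ε ∈ Set.Ioc (0 : ℝ) 1, f i ε ≠ 0)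
    (hffin : ∀ i, ∃ L : ℝ, Tendsto (f i) (𝓝[>] (0 : ℝ)) (𝓝 L))
    (hlim : ∀ i j k, Tendsto (fun ε : ℝ => c i j k * f i ε * f j ε / f k ε)
      (𝓝[>] (0 : ℝ)) (𝓝 (c₀ i j k))) :
    ∃ γ : Fin n → ℝ, (∀ i, γ i ≠ 0) ∧ ∃ β : Fin n → ℤ, (∀ i, 0 ≤ β i) ∧ ∀ i j k,
      Tendsto (fun ε : ℝ => c i j k * (γ i * γ j / γ k) * ε ^ (β i + β j - β k))
        (𝓝[>] (0 : ℝ)) (𝓝 (c₀ i j k)) := by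
  classical
  set l : Filter ℝ := 𝓝[>] (0:ℝ) with hldef
  choose L hL using hffin
  have hIoc : Set.Ioc (0:ℝ) 1 ∈ l := Ioc_mem_nhdsGT_of_mem (by simp)
  set s : Fin n → ℝ := fun i => if 0 < f i 1 then 1 else -1 with hs
  have hss : ∀ i, s i * s i = 1 := by intro i; simp only [hs]; split_ifs <;> norm_num
  have hsne : ∀ i, s i ≠ 0 := by intro i; simp only [hs]; split_ifs <;> norm_num
  have hone : (1:ℝ) ∈ Set.Ioc (0:ℝ) 1 := by constructor <;> norm_num
  have hsignpos : ∀ i, ∀ ε ∈ Set.Ioc (0:ℝ) 1, 0 < s i * f i ε := by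
    intro i ε hε
    have hsub : Set.Icc ε 1 ⊆ Set.Ioc (0:ℝ) 1 := fun x hx => ⟨lt_of_lt_of_le hε.1 hx.1, hx.2⟩
    have hcont : ContinuousOn (f i) (Set.Icc ε 1) := (hfcont i).mono hsub
    simp only [hs]
    split_ifs with h1
    · rw [one_mul]
      rcases lt_trichotomy (f i ε) 0 with hlt | heq | hgt
      · exfalso
        have h0 : (0:ℝ) ∈ Set.Icc (f i ε) (f i 1) := ⟨le_of_lt hlt, le_of_lt h1⟩
        obtain ⟨x, hx, hfx⟩ := intermediate_value_Icc hε.2 hcont h0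
        exact hfne i x (hsub hx) hfx
      · exact absurd heq (hfne i ε hε)
      · exact hgt
    · have h1' : f i 1 < 0 := lt_of_le_of_ne (not_lt.mp h1) (hfne i 1 hone)
      rcases lt_trichotomy (f i ε) 0 with hlt | heq | hgt
      · nlinarith
      · exact absurd heq (hfne i ε hε)
      · exfalso
        have h0 : (0:ℝ) ∈ Set.Icc (f i 1) (f i ε) := ⟨le_of_lt h1', le_of_lt hgt⟩
        obtain ⟨x, hx, hfx⟩ := intermediate_value_Icc' hε.2 hcont h0
        exact hfne i x (hsub hx) hfx
  have hsf : ∀ i, ∀ ε ∈ Set.Ioc (0:ℝ) 1, s i * f i ε = |f i ε| := by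
    intro i ε hε
    have h1 : |s i * f i ε| = s i * f i ε := abs_of_pos (hsignpos i ε hε)
    have h2 : |s i| = 1 := by simp only [hs]; split_ifs <;> norm_num
    rw [← h1, abs_mul, h2, one_mul]
  set h : Fin n → ℝ → ℝ := fun i ε => Real.log |f i ε| with hh
  -- reduced ratios
  have hq : ∀ i j k, c i j k ≠ 0 → Tendsto (fun ε => f i ε * f j ε / f k ε) l
      (𝓝 (c₀ i j k / c i j k)) := by
    intro i j k hc
    have h1 := (hlim i j k).div_const (c i j k)
    apply h1.congr
    intro ε
    rw [mul_assoc, mul_div_assoc, mul_div_cancel_left₀ _ hc]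
  have hqne : ∀ i j k, ∀ ε ∈ Set.Ioc (0:ℝ) 1, f i ε * f j ε / f k ε ≠ 0 := by
    intro i j k ε hε
    exact div_ne_zero (mul_ne_zero (hfne i ε hε) (hfne j ε hε)) (hfne k ε hε)
  have hlogsum : ∀ i j k, ∀ ε ∈ Set.Ioc (0:ℝ) 1,
      ∑ m, (vec3 i j k m : ℝ) * h m ε = Real.log |f i ε * f j ε / f k ε| := by
    intro i j k ε hε
    rw [dot3R]
    rw [abs_div, abs_mul,
      Real.log_div (mul_ne_zero (abs_ne_zero.mpr (hfne i ε hε)) (abs_ne_zero.mpr (hfne j ε hε)))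
        (abs_ne_zero.mpr (hfne k ε hε)),
      Real.log_mul (abs_ne_zero.mpr (hfne i ε hε)) (abs_ne_zero.mpr (hfne j ε hε))]
  have hA3 : ∀ i j k, c i j k ≠ 0 → c₀ i j k ≠ 0 →
      Tendsto (fun ε => ∑ m, (vec3 i j k m : ℝ) * h m ε) l
        (𝓝 (Real.log |c₀ i j k / c i j k|)) := by
    intro i j k hc hc0
    have habs : Tendsto (fun ε => |f i ε * f j ε / f k ε|) l (𝓝 |c₀ i j k / c i j k|) :=
      (hq i j k hc).abs
    have hlog : Tendsto (fun ε => Real.log |f i ε * f j ε / f k ε|) l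
        (𝓝 (Real.log |c₀ i j k / c i j k|)) :=
      (Real.continuousAt_log (abs_ne_zero.mpr (div_ne_zero hc0 hc))).tendsto.comp habs
    refine Tendsto.congr' ?_ hlog
    filter_upwards [hIoc] with ε hε
    exact (hlogsum i j k ε hε).symm
  have hB3 : ∀ i j k, c i j k ≠ 0 → c₀ i j k = 0 →
      Tendsto (fun ε => ∑ m, (vec3 i j k m : ℝ) * h m ε) l atBot := by
    intro i j k hc hc0
    have habs : Tendsto (fun ε => |f i ε * f j ε / f k ε|) l (𝓝[>] 0) := by
      rw [tendsto_nhdsWithin_iff]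
      constructor
      · have h1 := (hq i j k hc).abs
        rw [hc0, zero_div, abs_zero] at h1
        exact h1
      · filter_upwards [hIoc] with ε hε
        exact abs_pos.mpr (hqne i j k ε hε)
    have hlog := Real.tendsto_log_nhdsGT_zero.comp habs
    refine Tendsto.congr' ?_ hlog
    filter_upwards [hIoc] with ε hε
    exact (hlogsum i j k ε hε).symm
  have hA1 : ∀ i, L i ≠ 0 →
      Tendsto (fun ε => ∑ m, (vec1 i m : ℝ) * h m ε) l (𝓝 (Real.log |L i|)) := by
    intro i hi
    have habs : Tendsto (fun ε => |f i ε|) l (𝓝 |L i|) := (hL i).abs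
    have hlog : Tendsto (fun ε => Real.log |f i ε|) l (𝓝 (Real.log |L i|)) :=
      (Real.continuousAt_log (abs_ne_zero.mpr hi)).tendsto.comp habs
    apply hlog.congr
    intro ε
    exact (dot1R i (fun m => h m ε)).symm
  have hB1 : ∀ i, L i = 0 →
      Tendsto (fun ε => ∑ m, (vec1 i m : ℝ) * h m ε) l atBot := by
    intro i hi
    have habs : Tendsto (fun ε => |f i ε|) l (𝓝[>] 0) := by
      rw [tendsto_nhdsWithin_iff]
      constructor
      · have h1 := (hL i).abs
        rw [hi, abs_zero] at h1
        exact h1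
      · filter_upwards [hIoc] with ε hε
        exact abs_pos.mpr (hfne i ε hε)
    have hlog := Real.tendsto_log_nhdsGT_zero.comp habs
    apply hlog.congr
    intro ε
    exact (dot1R i (fun m => h m ε)).symm
  have hsig : ∀ i j k, c i j k ≠ 0 →
      s i * s j * s k * |c₀ i j k / c i j k| = c₀ i j k / c i j k := by
    intro i j k hc
    have h1 : Tendsto (fun ε => s i * s j * s k * |f i ε * f j ε / f k ε|) l
        (𝓝 (s i * s j * s k * |c₀ i j k / c i j k|)) := ((hq i j k hc).abs).const_mul _
    have h2 : Tendsto (fun ε => s i * s j * s k * |f i ε * f j ε / f k ε|) l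
        (𝓝 (c₀ i j k / c i j k)) := by
      refine Tendsto.congr' ?_ (hq i j k hc)
      filter_upwards [hIoc] with ε hε
      exact (sign_mul_abs' (s i) (s j) (s k) (f i ε) (f j ε) (f k ε) (hsf i ε hε) (hsf j ε hε)
        (hsf k ε hε) (hss i) (hss j) (hss k)).symm
    exact tendsto_nhds_unique h1 h2
  -- apply the core lemma
  haveI : Fintype {i : Fin n // L i ≠ 0} := Fintype.ofFinite _
  haveI : Fintype {t : Fin n × Fin n × Fin n //
      c t.1 t.2.1 t.2.2 ≠ 0 ∧ c₀ t.1 t.2.1 t.2.2 ≠ 0} := Fintype.ofFinite _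
  haveI : Fintype {i : Fin n // L i = 0} := Fintype.ofFinite _
  haveI : Fintype {t : Fin n × Fin n × Fin n //
      c t.1 t.2.1 t.2.2 ≠ 0 ∧ c₀ t.1 t.2.1 t.2.2 = 0} := Fintype.ofFinite _
  obtain ⟨a, b, hab1, hab2⟩ := core
    (ι := {i : Fin n // L i ≠ 0} ⊕ {t : Fin n × Fin n × Fin n //
      c t.1 t.2.1 t.2.2 ≠ 0 ∧ c₀ t.1 t.2.1 t.2.2 ≠ 0})
    (κ := {i : Fin n // L i = 0} ⊕ {t : Fin n × Fin n × Fin n //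
      c t.1 t.2.1 t.2.2 ≠ 0 ∧ c₀ t.1 t.2.1 t.2.2 = 0})
    (Sum.elim (fun i => vec1 i.1) (fun t => vec3 t.1.1 t.1.2.1 t.1.2.2))
    (Sum.elim (fun i => Real.log |L i.1|)
      (fun t => Real.log |c₀ t.1.1 t.1.2.1 t.1.2.2 / c t.1.1 t.1.2.1 t.1.2.2|))
    (Sum.elim (fun i => vec1 i.1) (fun t => vec3 t.1.1 t.1.2.1 t.1.2.2))
    h l
    (by
      rintro (⟨i, hi⟩ | ⟨⟨i, j, k⟩, hc, hc0⟩)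
      · exact hA1 i hi
      · exact hA3 i j k hc hc0)
    (by
      rintro (⟨i, hi⟩ | ⟨⟨i, j, k⟩, hc, hc0⟩)
      · exact hB1 i hi
      · exact hB3 i j k hc hc0)
  set γ : Fin n → ℝ := fun i => s i * Real.exp (a i) with hγdef
  refine ⟨γ, ?_, b, ?_, ?_⟩
  · intro i
    exact mul_ne_zero (hsne i) (Real.exp_ne_zero _)
  · intro i
    by_cases hi : L i = 0
    · have h1 := hab2 (Sum.inl ⟨i, hi⟩)
      rw [Sum.elim_inl, dot1Z] at h1
      have h2 : 1 ≤ b i := h1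
      omega
    · have h1 := (hab1 (Sum.inl ⟨i, hi⟩)).2
      rw [Sum.elim_inl, dot1Z] at h1
      have h2 : b i = 0 := h1
      omega
  · intro i j k
    by_cases hc : c i j k = 0
    · have hc0 : c₀ i j k = 0 := by
        have h1 : Tendsto (fun ε : ℝ => c i j k * f i ε * f j ε / f k ε) l (𝓝 0) := by
          have heq : (fun ε : ℝ => c i j k * f i ε * f j ε / f k ε) = fun _ => (0:ℝ) := by
            funext ε; rw [hc]; simp
          rw [heq]; exact tendsto_const_nhds
        exact tendsto_nhds_unique (hlim i j k) h1
      rw [hc0]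
      have heq : (fun ε : ℝ => c i j k * (γ i * γ j / γ k) * ε ^ (b i + b j - b k))
          = fun _ => (0:ℝ) := by
        funext ε; rw [hc]; simp
      rw [heq]
      exact tendsto_const_nhds
    · by_cases hc0 : c₀ i j k = 0
      · have hm := hab2 (Sum.inr ⟨(i,j,k), hc, hc0⟩)
        rw [Sum.elim_inr, dot3Z] at hm
        have hm' : 1 ≤ b i + b j - b k := hm
        clear hm
        have hzp : Tendsto (fun ε : ℝ => ε ^ (b i + b j - b k)) l (𝓝 0) := by
          have h2 : Tendsto (fun ε : ℝ => ε ^ (b i + b j - b k).toNat) l (𝓝 0) := by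
            have h3 := (continuous_pow (b i + b j - b k).toNat).tendsto (0:ℝ)
            rw [zero_pow (by omega)] at h3
            exact h3.mono_left nhdsWithin_le_nhds
          refine Tendsto.congr' ?_ h2
          filter_upwards [self_mem_nhdsWithin] with ε (hε : ε ∈ Set.Ioi (0:ℝ))
          rw [← zpow_natCast, Int.toNat_of_nonneg (by omega)]
        have h4 := hzp.const_mul (c i j k * (γ i * γ j / γ k))
        rw [mul_zero] at h4
        rw [hc0]
        exact h4
      · have hb0 := (hab1 (Sum.inr ⟨(i,j,k), hc, hc0⟩)).2
        have ha0 := (hab1 (Sum.inr ⟨(i,j,k), hc, hc0⟩)).1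
        rw [Sum.elim_inr, dot3Z] at hb0
        rw [Sum.elim_inr, dot3R] at ha0
        have hb0' : b i + b j - b k = 0 := hb0
        have ha0' : a i + a j - a k = Real.log |c₀ i j k / c i j k| := ha0
        clear hb0 ha0
        have hexp : Real.exp (a i) * Real.exp (a j) / Real.exp (a k)
            = |c₀ i j k / c i j k| := by
          rw [← Real.exp_add, ← Real.exp_sub, ha0',
            Real.exp_log (abs_pos.mpr (div_ne_zero hc0 hc))]
        have hγ3 : γ i * γ j / γ k = c₀ i j k / c i j k := by
          have hstep : γ i * γ j / γ k
              = s i * s j * s k * (Real.exp (a i) * Real.exp (a j) / Real.exp (a k)) := by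
            simp only [hγdef]
            have h1 := hss k
            have h2 := Real.exp_ne_zero (a k)
            have h3 := hsne k
            field_simp
            linear_combination (-(s i * s j)) * h1
          rw [hstep, hexp, hsig i j k hc]
        rw [hb0']
        have heqf : (fun ε : ℝ => c i j k * (γ i * γ j / γ k) * ε ^ (0:ℤ))
            = fun _ => c₀ i j k := by
          funext ε
          rw [zpow_zero, mul_one, hγ3, mul_comm, div_mul_cancel₀ _ hc]
        rw [heqf]
        exact tendsto_const_nhds
end

section
/- Let f : Fin n → ℝ → ℝ be such that each f i is continuous on (0,1] and f i ε ≠ 0 for every ε ∈ (0,1]. Let E be a finite set of triples (i,j,k) of elements of Fin n and let F : Fin n → Fin n → Fin n → ℝ be such that for every (i,j,k) ∈ E the function ε ↦ (f i ε) * (f j ε) / (f k ε) tends to F i j k as ε → 0⁺, with F i j k ≠ 0. Then there exists y : Fin n → ℝ with y i ≠ 0 for all i such that y i * y j / y k = F i j k for every (i,j,k) ∈ E. -/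
open Filter Topology

private lemma samesign_aux {g : ℝ → ℝ} (hc : ContinuousOn g (Set.Ioc 0 1))
    (hne : ∀ ε ∈ Set.Ioc (0:ℝ) 1, g ε ≠ 0) {ε : ℝ} (hε : ε ∈ Set.Ioc (0:ℝ) 1) :
    0 < g ε * g 1 := by
  have h1 : (1:ℝ) ∈ Set.Ioc (0:ℝ) 1 := by norm_num
  have hsub : Set.uIcc ε 1 ⊆ Set.Ioc 0 1 := Set.ordConnected_Ioc.uIcc_subset hε h1
  have him := intermediate_value_uIcc (hc.mono hsub)
  by_contra h
  push_neg at h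
  have h0 : (0:ℝ) ∈ Set.uIcc (g ε) (g 1) := by
    rcases (hne ε hε).lt_or_gt with h' | h' <;> rcases (hne 1 h1).lt_or_gt with h'' | h''
    · nlinarith
    · exact Set.mem_uIcc.2 (Or.inl ⟨h'.le, h''.le⟩)
    · exact Set.mem_uIcc.2 (Or.inr ⟨h''.le, h'.le⟩)
    · nlinarith
  obtain ⟨x, hx, hx0⟩ := him h0
  exact hne x (hsub hx) hx0

/-- Compatibility of the multiplicative system `Σ`: nonzero limits `F i j k` of the
quotients `f_i f_j / f_k` of continuous nonvanishing functions on `(0,1]` are always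
realized by a constant nonzero tuple `y` with `y_i y_j / y_k = F i j k`. -/
theorem multiplicative_system_compatible
    (n : ℕ) (f : Fin n → ℝ → ℝ)
    (hfcont : ∀ i, ContinuousOn (f i) (Set.Ioc 0 1))
    (hfne : ∀ i, ∀ ε ∈ Set.Ioc (0 : ℝ) 1, f i ε ≠ 0)
    (E : Finset (Fin n × Fin n × Fin n))
    (F : Fin n → Fin n → Fin n → ℝ)
    (hF : ∀ t ∈ E, Tendsto (fun ε : ℝ => f t.1 ε * f t.2.1 ε / f t.2.2 ε)
      (𝓝[>] (0 : ℝ)) (𝓝 (F t.1 t.2.1 t.2.2)))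
    (hFne : ∀ t ∈ E, F t.1 t.2.1 t.2.2 ≠ 0) :
    ∃ y : Fin n → ℝ, (∀ i, y i ≠ 0) ∧
      ∀ t ∈ E, y t.1 * y t.2.1 / y t.2.2 = F t.1 t.2.1 t.2.2 := by
  classical
  have h1 : (1:ℝ) ∈ Set.Ioc (0:ℝ) 1 := by norm_num
  set s : Fin n → ℝ := fun i => if 0 < f i 1 then 1 else -1 with hs
  have hs1 : ∀ i, s i = 1 ∨ s i = -1 := by
    intro i; simp only [hs]; split <;> simp
  have hssq : ∀ i, s i * s i = 1 := by
    intro i; rcases hs1 i with h | h <;> rw [h] <;> norm_num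
  have hsne : ∀ i, s i ≠ 0 := by
    intro i; rcases hs1 i with h | h <;> rw [h] <;> norm_num
  have hspos : ∀ i, ∀ ε ∈ Set.Ioc (0:ℝ) 1, 0 < s i * f i ε := by
    intro i ε hε
    have hss := samesign_aux (hfcont i) (hfne i) hε
    by_cases h : 0 < f i 1
    · simp only [hs, if_pos h]; nlinarith
    · simp only [hs, if_neg h]
      have hlt : f i 1 < 0 := lt_of_le_of_ne (not_lt.1 h) (hfne i 1 h1)
      nlinarith
  have hIoc : Set.Ioc (0:ℝ) 1 ∈ 𝓝[>] (0:ℝ) :=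
    Ioc_mem_nhdsGT_of_mem (by norm_num : (0:ℝ) ∈ Set.Ico (0:ℝ) 1)
  -- the linear map encoding the system
  let A : (Fin n → ℝ) →ₗ[ℝ] (E → ℝ) :=
    { toFun := fun x t => x t.1.1 + x t.1.2.1 - x t.1.2.2
      map_add' := by intro a b; funext t; simp; ring
      map_smul' := by intro c a; funext t; simp; ring }
  have hclosed : IsClosed ((LinearMap.range A : Submodule ℝ (E → ℝ)) : Set (E → ℝ)) :=
    Submodule.closed_of_finiteDimensional _
  set c : E → ℝ := fun t => Real.log (F t.1.1 t.1.2.1 t.1.2.2) with hc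
  -- the approximate solutions
  have htend : Tendsto (fun ε => A (fun i => Real.log (f i ε))) (𝓝[>] (0:ℝ)) (𝓝 c) := by
    rw [tendsto_pi_nhds]
    intro t
    obtain ⟨⟨i, j, k⟩, ht⟩ := t
    have hlim : Tendsto (fun ε : ℝ => Real.log (f i ε * f j ε / f k ε))
        (𝓝[>] (0:ℝ)) (𝓝 (Real.log (F i j k))) :=
      (Real.continuousAt_log (hFne _ ht)).tendsto.comp (hF _ ht)
    refine hlim.congr' ?_
    filter_upwards [hIoc] with ε hε
    have hi := hfne i ε hε
    have hj := hfne j ε hε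
    have hk := hfne k ε hε
    simp only [A, LinearMap.coe_mk, AddHom.coe_mk]
    rw [Real.log_div (mul_ne_zero hi hj) hk, Real.log_mul hi hj]
  have hmem : c ∈ LinearMap.range A := by
    refine hclosed.mem_of_tendsto htend ?_
    exact Eventually.of_forall fun ε => ⟨_, rfl⟩
  obtain ⟨x, hx⟩ := hmem
  refine ⟨fun i => s i * Real.exp (x i), fun i => mul_ne_zero (hsne i) (Real.exp_ne_zero _), ?_⟩
  intro t ht
  obtain ⟨i, j, k⟩ := t
  set Ft := F i j k with hFt
  have hFt0 : Ft ≠ 0 := hFne _ ht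
  -- sign of the limit
  have hσpos : 0 < (s i * s j * s k) * Ft := by
    have htl : Tendsto (fun ε : ℝ => (s i * s j * s k) * (f i ε * f j ε / f k ε))
        (𝓝[>] (0:ℝ)) (𝓝 ((s i * s j * s k) * Ft)) := (hF _ ht).const_mul _
    have hge : 0 ≤ (s i * s j * s k) * Ft := by
      refine ge_of_tendsto htl ?_
      filter_upwards [hIoc] with ε hε
      have hi := hspos i ε hε
      have hj := hspos j ε hε
      have hk := hspos k ε hε
      have hkne := hfne k ε hε
      have heq : (s i * s j * s k) * (f i ε * f j ε / f k ε)
          = (s i * f i ε) * (s j * f j ε) / (s k * f k ε) := by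
        field_simp [hsne k]
        linear_combination (s i * s j * f i ε * f j ε) * hssq k
      rw [heq]
      exact (div_pos (mul_pos hi hj) hk).le
    exact hge.lt_of_ne
      (Ne.symm (mul_ne_zero (mul_ne_zero (mul_ne_zero (hsne i) (hsne j)) (hsne k)) hFt0))
  -- magnitude
  have hxt : x i + x j - x k = Real.log Ft := congrFun hx ⟨(i, j, k), ht⟩
  have habs : Real.exp (x i) * Real.exp (x j) / Real.exp (x k) = |Ft| := by
    rw [← Real.exp_add, ← Real.exp_sub, hxt, ← Real.log_abs,
      Real.exp_log (abs_pos.2 hFt0)]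
  have hstep : (s i * Real.exp (x i)) * (s j * Real.exp (x j)) / (s k * Real.exp (x k))
      = (s i * s j * s k) * |Ft| := by
    rw [← habs]
    field_simp [hsne k]
    linear_combination (-(s i * s j)) * hssq k
  rw [hstep]
  rcases hs1 i with hi | hi <;> rcases hs1 j with hj | hj <;> rcases hs1 k with hk | hk <;>
    rw [hi, hj, hk] at hσpos ⊢ <;>
    simp only [one_mul, mul_one, neg_mul, mul_neg, neg_neg, one_mul] at hσpos ⊢ <;>
    [skip; skip; skip; skip; skip; skip; skip; skip] <;>
    first
      | (rw [abs_of_pos hσpos])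
      | (rw [abs_of_neg (by linarith : Ft < 0)]; ring)
end

section
/- Let f : Fin n → ℝ → ℝ be such that each f i is continuous on (0,1] and f i ε ≠ 0 for every ε ∈ (0,1]. Let E and N be finite sets of triples (i,j,k) of elements of Fin n such that for every (i,j,k) ∈ E the function ε ↦ (f i ε) * (f j ε) / (f k ε) tends as ε → 0⁺ to a nonzero real limit, and for every (i,j,k) ∈ N it tends to 0. Then there exists x : Fin n → ℝ such that x i + x j = x k for every (i,j,k) ∈ E and x i + x j > x k for every (i,j,k) ∈ N. -/
open Filter Topology

private lemma euclid_coord_le_norm {ι : Type*} [Fintype ι] (x : EuclideanSpace ℝ ι) (i : ι) :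
    |x i| ≤ ‖x‖ := by
  rw [EuclideanSpace.norm_eq]
  have h1 : |x i| = Real.sqrt (|x i| ^ 2) := by
    rw [Real.sqrt_sq_eq_abs, abs_abs]
  rw [h1]
  apply Real.sqrt_le_sqrt
  have := Finset.single_le_sum (f := fun j => ‖x j‖ ^ 2)
    (fun j _ => by positivity) (Finset.mem_univ i)
  simpa [Real.norm_eq_abs] using this

/-- Compatibility of the mixed linear system `S`: if the quotients `f_i f_j / f_k`
of continuous nonvanishing functions on `(0,1]` tend to nonzero limits for triples
in `E` and to `0` for triples in `N`, then the system of equations `x_i + x_j = x_k`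
over `E` and strict inequalities `x_i + x_j > x_k` over `N` has a real solution. -/
theorem mixed_linear_system_compatible
    (n : ℕ) (f : Fin n → ℝ → ℝ)
    (hfcont : ∀ i, ContinuousOn (f i) (Set.Ioc 0 1))
    (hfne : ∀ i, ∀ ε ∈ Set.Ioc (0 : ℝ) 1, f i ε ≠ 0)
    (E N : Finset (Fin n × Fin n × Fin n))
    (hE : ∀ t ∈ E, ∃ L : ℝ, L ≠ 0 ∧
      Tendsto (fun ε : ℝ => f t.1 ε * f t.2.1 ε / f t.2.2 ε) (𝓝[>] (0 : ℝ)) (𝓝 L))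
    (hN : ∀ t ∈ N,
      Tendsto (fun ε : ℝ => f t.1 ε * f t.2.1 ε / f t.2.2 ε) (𝓝[>] (0 : ℝ)) (𝓝 0)) :
    ∃ x : Fin n → ℝ,
      (∀ t ∈ E, x t.1 + x t.2.1 = x t.2.2) ∧
      (∀ t ∈ N, x t.1 + x t.2.1 > x t.2.2) := by
  classical
  set l : Filter ℝ := 𝓝[>] (0 : ℝ) with hl
  -- the log vector
  set v : ℝ → EuclideanSpace ℝ (Fin n) := fun ε => WithLp.toLp 2 (fun i => -Real.log (f i ε)) with hv
  have hIoc : Set.Ioc (0:ℝ) 1 ∈ l := Ioc_mem_nhdsGT_of_mem ⟨le_refl 0, one_pos⟩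
  -- key identity on Ioc 0 1
  have hkey : ∀ (t : Fin n × Fin n × Fin n), ∀ ε ∈ Set.Ioc (0:ℝ) 1,
      v ε t.1 + v ε t.2.1 - v ε t.2.2
        = -Real.log (f t.1 ε * f t.2.1 ε / f t.2.2 ε) := by
    intro t ε hε
    have h1 := hfne t.1 ε hε
    have h2 := hfne t.2.1 ε hε
    have h3 := hfne t.2.2 ε hε
    rw [Real.log_div (mul_ne_zero h1 h2) h3, Real.log_mul h1 h2]
    simp [hv]
    ring
  -- coordinate limits over E
  have hElim : ∀ t : {t // t ∈ E}, ∃ c : ℝ,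
      Tendsto (fun ε => v ε t.1.1 + v ε t.1.2.1 - v ε t.1.2.2) l (𝓝 c) := by
    rintro ⟨t, ht⟩
    obtain ⟨L, hL0, hL⟩ := hE t ht
    refine ⟨-Real.log L, ?_⟩
    have hcont : Tendsto (fun ε => -Real.log (f t.1 ε * f t.2.1 ε / f t.2.2 ε)) l
        (𝓝 (-Real.log L)) := (((Real.continuousAt_log hL0).tendsto).comp hL).neg
    refine hcont.congr' ?_
    filter_upwards [hIoc] with ε hε
    exact (hkey t ε hε).symm
  choose climit hclimit using hElim
  -- the equality-constraint linear map
  let A : EuclideanSpace ℝ (Fin n) →ₗ[ℝ] EuclideanSpace ℝ {t // t ∈ E} :=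
    { toFun := fun x => WithLp.toLp 2 (fun t => x t.1.1 + x t.1.2.1 - x t.1.2.2)
      map_add' := by intro x y; ext t; simp [PiLp.add_apply]; ring
      map_smul' := by intro c x; ext t; simp [PiLp.smul_apply, smul_eq_mul]; ring }
  set K : Submodule ℝ (EuclideanSpace ℝ (Fin n)) := LinearMap.ker A with hK
  -- antilipschitz constant for A restricted to Kᗮ
  have hinj : LinearMap.ker (A.domRestrict Kᗮ) = ⊥ := by
    rw [LinearMap.ker_eq_bot']
    rintro ⟨w, hw⟩ hAw
    have hwK : w ∈ K := hAw
    have h0 : w ∈ K ⊓ Kᗮ := ⟨hwK, hw⟩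
    rw [Submodule.inf_orthogonal_eq_bot] at h0
    exact Subtype.ext (by simpa using h0)
  obtain ⟨c, hc0, hanti⟩ := (A.domRestrict Kᗮ).exists_antilipschitzWith hinj
  -- the limit vector and norm bound
  have hAv : Tendsto (fun ε => A (v ε)) l
      (𝓝 ((WithLp.equiv 2 _).symm (fun t => climit t))) := by
    have hpi : Tendsto (fun ε => (fun t : {t // t ∈ E} =>
        v ε t.1.1 + v ε t.1.2.1 - v ε t.1.2.2)) l (𝓝 (fun t => climit t)) :=
      tendsto_pi_nhds.mpr fun t => hclimit t
    exact ((PiLp.continuous_toLp 2 (fun _ : {t // t ∈ E} => ℝ)).tendsto _).comp hpi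
  set M : ℝ := ‖(WithLp.equiv 2 (∀ _ : {t // t ∈ E}, ℝ)).symm (fun t => climit t)‖ + 1 with hM
  have hMpos : 0 < M := by positivity
  have hnormev : ∀ᶠ ε in l, ‖A (v ε)‖ ≤ M := by
    have := (hAv.norm).eventually_lt_const (show ‖(WithLp.equiv 2 (∀ _ : {t // t ∈ E}, ℝ)).symm
      (fun t => climit t)‖ < M by simp [hM])
    filter_upwards [this] with ε hε using hε.le
  -- inequality coordinates tend to +∞
  have hNtop : ∀ t ∈ N, Tendsto (fun ε => v ε t.1 + v ε t.2.1 - v ε t.2.2) l atTop := by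
    intro t ht
    have hF := hN t ht
    have habs : Tendsto (fun ε => |f t.1 ε * f t.2.1 ε / f t.2.2 ε|) l (𝓝[>] 0) := by
      rw [tendsto_nhdsWithin_iff]
      constructor
      · simpa using hF.abs
      · filter_upwards [hIoc] with ε hε
        have h1 := hfne t.1 ε hε
        have h2 := hfne t.2.1 ε hε
        have h3 := hfne t.2.2 ε hε
        exact abs_pos.mpr (div_ne_zero (mul_ne_zero h1 h2) h3)
    have hlog : Tendsto (fun ε => Real.log |f t.1 ε * f t.2.1 ε / f t.2.2 ε|) l atBot :=
      Real.tendsto_log_nhdsGT_zero.comp habs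
    have hneg : Tendsto (fun ε => -Real.log |f t.1 ε * f t.2.1 ε / f t.2.2 ε|) l atTop :=
      tendsto_neg_atBot_atTop.comp hlog
    refine hneg.congr' ?_
    filter_upwards [hIoc] with ε hε
    rw [Real.log_abs]
    exact (hkey t ε hε).symm
  -- eventually all N coordinates exceed 3 * c * M
  have hNev : ∀ᶠ ε in l, ∀ t ∈ N,
      v ε t.1 + v ε t.2.1 - v ε t.2.2 > 3 * c * M :=
    N.eventually_all.mpr fun t ht => (hNtop t ht).eventually_gt_atTop _
  -- choose a good ε
  obtain ⟨ε, hεnorm, hεN⟩ := (hnormev.and hNev).exists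
  -- orthogonal projection of v ε onto K
  set V : EuclideanSpace ℝ (Fin n) := v ε with hV
  set p : EuclideanSpace ℝ (Fin n) := (K.orthogonalProjectionOnto V : EuclideanSpace ℝ (Fin n))
    with hp
  have hpK : p ∈ K := (K.orthogonalProjectionOnto V).2
  have hApz : A p = 0 := hpK
  set w : EuclideanSpace ℝ (Fin n) := V - p with hw
  have hwO : w ∈ Kᗮ := Submodule.sub_starProjection_mem_orthogonal V
  have hAw : A w = A V := by rw [hw, map_sub, hApz, sub_zero]
  -- norm bound on w
  have hwnorm : ‖w‖ ≤ c * M := by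
    have h := hanti.le_mul_dist ⟨w, hwO⟩ 0
    simp only [LinearMap.domRestrict_apply, map_zero, dist_zero_right] at h
    have h2 : ‖w‖ ≤ c * ‖A V‖ := by rw [← hAw]; exact h
    calc ‖w‖ ≤ c * ‖A V‖ := h2
      _ ≤ c * M := mul_le_mul_of_nonneg_left hεnorm c.coe_nonneg
  refine ⟨fun i => p i, ?_, ?_⟩
  · intro t ht
    have := congrArg (fun z => z ⟨t, ht⟩) hApz
    simp only [A, LinearMap.coe_mk, AddHom.coe_mk, PiLp.toLp_apply] at this
    have h0 : (0 : EuclideanSpace ℝ {t // t ∈ E}) ⟨t, ht⟩ = 0 := rfl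
    rw [h0] at this
    linarith
  · intro t ht
    have hVt := hεN t ht
    have hwi : |w t.1| ≤ c * M := le_trans (euclid_coord_le_norm w t.1) hwnorm
    have hwj : |w t.2.1| ≤ c * M := le_trans (euclid_coord_le_norm w t.2.1) hwnorm
    have hwk : |w t.2.2| ≤ c * M := le_trans (euclid_coord_le_norm w t.2.2) hwnorm
    have hpi : p t.1 = V t.1 - w t.1 := by simp [hw]
    have hpj : p t.2.1 = V t.2.1 - w t.2.1 := by simp [hw]
    have hpk : p t.2.2 = V t.2.2 - w t.2.2 := by simp [hw]
    have h1 := abs_le.mp hwi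
    have h2 := abs_le.mp hwj
    have h3 := abs_le.mp hwk
    simp only [gt_iff_lt]
    rw [hpi, hpj, hpk]
    linarith
end

section
/- Let a_1, …, a_m be finitely many vectors in ℤ^n. If the system of strict homogeneous linear inequalities ⟨a_s, x⟩ > 0 for s = 1, …, m has no solution x ∈ ℝ^n, then there exist natural numbers λ_1, …, λ_m, not all zero, such that ∑_{s=1}^m λ_s • a_s = 0. -/
/-- Voronoy-type theorem for strict homogeneous linear inequalities with integer
coefficients: if the system `⟨a_s, x⟩ > 0`, `s = 1, …, m`, has no real solution,
then some nontrivial linear combination of the `a_s` with natural coefficients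
vanishes identically. -/
theorem voronoy_strict_homogeneous_integer
    (n m : ℕ) (a : Fin m → Fin n → ℤ)
    (h : ¬ ∃ x : Fin n → ℝ, ∀ s : Fin m, 0 < ∑ i, (a s i : ℝ) * x i) :
    ∃ lam : Fin m → ℕ, (∃ s, lam s ≠ 0) ∧ ∑ s, lam s • a s = (0 : Fin n → ℤ) := by
  classical
  set a' : Fin m → Fin n → ℝ := fun s i => (a s i : ℝ) with ha'
  -- Step 1: 0 is in the convex hull of the (real) vectors a_s
  have h0 : (0 : Fin n → ℝ) ∈ convexHull ℝ (Set.range a') := by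
    by_contra h0
    obtain ⟨f, u, hfu, hu0⟩ := geometric_hahn_banach_closed_point
      (convex_convexHull ℝ _) ((Set.finite_range a').isClosed_convexHull ℝ) h0
    rw [map_zero] at hu0
    apply h
    refine ⟨fun i => -(f fun j => if i = j then 1 else 0), fun s => ?_⟩
    have hs : f (a' s) < u := hfu (a' s) (subset_convexHull ℝ _ ⟨s, rfl⟩)
    have hrep : f (a' s) = ∑ i, a' s i • f (fun j => if i = j then 1 else 0) :=
      LinearMap.pi_apply_eq_sum_univ (f : (Fin n → ℝ) →ₗ[ℝ] ℝ) (a' s)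
    have key : ∑ i, (a s i : ℝ) * (-(f fun j => if i = j then 1 else 0)) = -(f (a' s)) := by
      rw [hrep, ← Finset.sum_neg_distrib]
      exact Finset.sum_congr rfl fun i _ => by simp [ha']
    rw [key]
    linarith
  -- Step 2: Carathéodory, with an affinely independent subset
  rw [convexHull_eq_union] at h0
  simp only [Set.mem_iUnion] at h0
  obtain ⟨t, hts, hai, h0t⟩ := h0
  rw [Finset.convexHull_eq] at h0t
  obtain ⟨w, hw0, hw1, hwc⟩ := h0t
  rw [Finset.centerMass_eq_of_sum_1 _ _ hw1] at hwc
  simp only [id] at hwc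
  -- choose preimages in `Fin m` and rational representatives
  have hselx : ∀ y : {x // x ∈ t}, ∃ s : Fin m, a' s = ↑y := fun y => hts y.2
  choose sel hsel using hselx
  set q : {x // x ∈ t} → Fin n → ℚ := fun y i => (a (sel y) i : ℚ) with hq
  have hqc : ∀ (y : {x // x ∈ t}) (i : Fin n), ((q y i : ℚ) : ℝ) = (y : Fin n → ℝ) i := by
    intro y i
    have := congrFun (hsel y) i
    simp only [ha'] at this
    push_cast [hq]
    exact this
  set u : {x // x ∈ t} → (Fin n → ℚ) × ℚ := fun y => (q y, 1) with hu
  have hw1' : ∑ y : {x // x ∈ t}, w ↑y = 1 := by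
    rw [Finset.univ_eq_attach, Finset.sum_attach]; exact hw1
  have hwc' : ∑ y : {x // x ∈ t}, w ↑y • (↑y : Fin n → ℝ) = 0 := by
    rw [Finset.univ_eq_attach, Finset.sum_attach t (fun y => w y • y)]; exact hwc
  -- Step 3a: (0,1) lies in the rational span of the (q y, 1)
  have he : ((0 : Fin n → ℚ), (1 : ℚ)) ∈ Submodule.span ℚ (Set.range u) := by
    by_contra hne
    obtain ⟨φ, hφ1, hφ2⟩ := Submodule.exists_dual_map_eq_bot_of_notMem hne inferInstance
    have hφu : ∀ y, φ (u y) = 0 := by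
      intro y
      have hmem : φ (u y) ∈ Submodule.map φ (Submodule.span ℚ (Set.range u)) :=
        Submodule.mem_map_of_mem (Submodule.subset_span ⟨y, rfl⟩)
      rw [hφ2] at hmem
      exact (Submodule.mem_bot ℚ).mp hmem
    set ψ : (Fin n → ℚ) →ₗ[ℚ] ℚ := φ.comp (LinearMap.inl ℚ _ _) with hψ
    set d : ℚ := φ (0, 1) with hd
    have hsplit : ∀ z : (Fin n → ℚ) × ℚ, φ z = ψ z.1 + z.2 * d := by
      intro z
      have hz : z = ((z.1, 0) : (Fin n → ℚ) × ℚ) + z.2 • ((0 : Fin n → ℚ), (1 : ℚ)) := by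
        ext <;> simp
      rw [hz, map_add, map_smul]
      simp [hψ, hd, smul_eq_mul]
    set c : Fin n → ℚ := fun i => ψ (fun j => if i = j then 1 else 0) with hc
    have hψrep : ∀ z, ψ z = ∑ i, z i * c i := fun z => by
      simpa [smul_eq_mul, hc] using LinearMap.pi_apply_eq_sum_univ ψ z
    have hzero : ∀ y : {x // x ∈ t},
        (∑ i, (↑y : Fin n → ℝ) i * ((c i : ℚ) : ℝ)) + ((d : ℚ) : ℝ) = 0 := by
      intro y
      have h1 : (∑ i, q y i * c i) + d = 0 := by
        have h2 := hφu y
        rw [hsplit (u y), hψrep] at h2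
        simpa [hu] using h2
      have h3 : ((∑ i, q y i * c i) + d : ℚ) = (0 : ℚ) := h1
      have h4 : ((((∑ i, q y i * c i) + d : ℚ)) : ℝ) = 0 := by rw [h3]; norm_num
      push_cast at h4
      rw [← h4]
      congr 1
      exact Finset.sum_congr rfl fun i _ => by rw [hqc y i]
    have e1 : ∑ y : {x // x ∈ t},
        w ↑y * ((∑ i, (↑y : Fin n → ℝ) i * ((c i : ℚ) : ℝ)) + ((d : ℚ) : ℝ)) = 0 :=
      Finset.sum_eq_zero fun y _ => by rw [hzero y, mul_zero]
    have p1 : ∑ y : {x // x ∈ t}, w ↑y * (∑ i, (↑y : Fin n → ℝ) i * ((c i : ℚ) : ℝ)) = 0 := by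
      calc ∑ y : {x // x ∈ t}, w ↑y * (∑ i, (↑y : Fin n → ℝ) i * ((c i : ℚ) : ℝ))
          = ∑ y : {x // x ∈ t}, ∑ i, w ↑y * ((↑y : Fin n → ℝ) i * ((c i : ℚ) : ℝ)) := by
            simp_rw [Finset.mul_sum]
        _ = ∑ i, ∑ y : {x // x ∈ t}, w ↑y * ((↑y : Fin n → ℝ) i * ((c i : ℚ) : ℝ)) :=
            Finset.sum_comm
        _ = ∑ i, (∑ y : {x // x ∈ t}, w ↑y * (↑y : Fin n → ℝ) i) * ((c i : ℚ) : ℝ) := by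
            simp_rw [Finset.sum_mul, mul_assoc]
        _ = 0 := by
            refine Finset.sum_eq_zero fun i _ => ?_
            have := congrFun hwc' i
            rw [Finset.sum_apply] at this
            simp only [Pi.smul_apply, smul_eq_mul, Pi.zero_apply] at this
            rw [this, zero_mul]
    have e2 : ∑ y : {x // x ∈ t},
        w ↑y * ((∑ i, (↑y : Fin n → ℝ) i * ((c i : ℚ) : ℝ)) + ((d : ℚ) : ℝ)) = ((d : ℚ) : ℝ) := by
      simp_rw [mul_add, Finset.sum_add_distrib, p1, ← Finset.sum_mul, hw1', one_mul, zero_add]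
    have hd0 : d = 0 := by
      have : ((d : ℚ) : ℝ) = 0 := by rw [← e2, e1]
      exact_mod_cast this
    exact hφ1 hd0
  -- Step 3b: extract rational coefficients
  rw [Submodule.mem_span_range_iff_exists_fun] at he
  obtain ⟨cc, hcc⟩ := he
  have hcc1 : ∑ y : {x // x ∈ t}, cc y • q y = 0 := by
    have := congrArg Prod.fst hcc
    simpa [hu, Prod.fst_sum] using this
  have hcc2 : ∑ y : {x // x ∈ t}, cc y = 1 := by
    have := congrArg Prod.snd hcc
    simpa [hu, Prod.snd_sum, smul_eq_mul] using this
  -- Step 3c: by affine independence the real coefficients agree, hence cc ≥ 0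
  have hW : ∀ y : {x // x ∈ t}, ((cc y : ℚ) : ℝ) = w ↑y := by
    have hsum1 : ∑ y : {x // x ∈ t}, ((cc y : ℚ) : ℝ) = 1 := by exact_mod_cast hcc2
    have hcomb1 : Finset.univ.affineCombination ℝ ((↑) : {x // x ∈ t} → (Fin n → ℝ))
        (fun y => ((cc y : ℚ) : ℝ)) = 0 := by
      rw [Finset.affineCombination_eq_linear_combination _ _ _ hsum1]
      funext i
      rw [Finset.sum_apply]
      have h5 := congrFun hcc1 i
      rw [Finset.sum_apply] at h5
      simp only [Pi.smul_apply, smul_eq_mul, Pi.zero_apply] at h5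
      have h6 : ((∑ y : {x // x ∈ t}, cc y * q y i : ℚ) : ℝ) = 0 := by exact_mod_cast h5
      push_cast at h6
      simp only [Pi.smul_apply, smul_eq_mul, Pi.zero_apply]
      rw [← h6]
      exact Finset.sum_congr rfl fun y _ => by rw [hqc y i]
    have hcomb2 : Finset.univ.affineCombination ℝ ((↑) : {x // x ∈ t} → (Fin n → ℝ))
        (fun y => w ↑y) = 0 := by
      rw [Finset.affineCombination_eq_linear_combination _ _ _ hw1']
      exact hwc'
    have hind := hai.indicator_eq_of_affineCombination_eq Finset.univ Finset.univ
      (fun y => ((cc y : ℚ) : ℝ)) (fun y => w ↑y) hsum1 hw1' (hcomb1.trans hcomb2.symm)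
    intro y
    have h7 := congrFun hind y
    simpa using h7
  have hccnn : ∀ y, 0 ≤ cc y := by
    intro y
    have h8 := hw0 ↑y y.2
    rw [← hW y] at h8
    exact_mod_cast h8
  -- Step 3d: rational coefficients indexed by Fin m
  set μ : Fin m → ℚ := fun r => ∑ y : {x // x ∈ t}, if sel y = r then cc y else 0 with hμ
  have hμnn : ∀ r, 0 ≤ μ r := fun r =>
    Finset.sum_nonneg fun y _ => by split <;> [exact hccnn y; exact le_refl 0]
  have hμ1 : ∑ r, μ r = 1 := by
    rw [hμ]
    rw [Finset.sum_comm]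
    simp only [Finset.sum_ite_eq, Finset.mem_univ, if_true]
    exact hcc2
  have hμa : ∀ i, ∑ r, μ r * (a r i : ℚ) = 0 := by
    intro i
    have : ∑ r, μ r * (a r i : ℚ)
        = ∑ y : {x // x ∈ t}, ∑ r, (if sel y = r then cc y * (a r i : ℚ) else 0) := by
      rw [← Finset.sum_comm]
      refine Finset.sum_congr rfl fun r _ => ?_
      rw [hμ, Finset.sum_mul]
      exact Finset.sum_congr rfl fun y _ => by split <;> simp
    rw [this]
    simp only [Finset.sum_ite_eq, Finset.mem_univ, if_true]
    have h5 := congrFun hcc1 i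
    rw [Finset.sum_apply] at h5
    simpa [hq, smul_eq_mul] using h5
  -- Step 3e: clear denominators
  set N : ℕ := ∏ r, (μ r).den with hN
  have hNpos : 0 < N := Finset.prod_pos fun r _ => (μ r).pos
  have hdvd : ∀ r, (μ r).den ∣ N := fun r => Finset.dvd_prod_of_mem _ (Finset.mem_univ r)
  set lam : Fin m → ℕ := fun r => (μ r).num.toNat * (N / (μ r).den) with hlam
  have hlamcast : ∀ r, (lam r : ℚ) = μ r * N := by
    intro r
    have h1 : ((μ r).num.toNat : ℤ) = (μ r).num := Int.toNat_of_nonneg (Rat.num_nonneg.mpr (hμnn r))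
    have h2 : (((μ r).den : ℚ)) * ((N / (μ r).den : ℕ) : ℚ) = (N : ℚ) := by
      rw [← Nat.cast_mul, Nat.mul_div_cancel' (hdvd r)]
    have h3 : ((μ r).num.toNat : ℚ) = ((μ r).num : ℚ) := by exact_mod_cast h1
    calc (lam r : ℚ) = ((μ r).num.toNat : ℚ) * ((N / (μ r).den : ℕ) : ℚ) := by
          rw [hlam]; push_cast; ring
      _ = ((μ r).num : ℚ) * ((N / (μ r).den : ℕ) : ℚ) := by rw [h3]
      _ = (μ r * ((μ r).den : ℚ)) * ((N / (μ r).den : ℕ) : ℚ) := by rw [Rat.mul_den_eq_num]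
      _ = μ r * (((μ r).den : ℚ) * ((N / (μ r).den : ℕ) : ℚ)) := by ring
      _ = μ r * N := by rw [h2]
  have hex : ∃ r, μ r ≠ 0 := by
    by_contra hno
    push_neg at hno
    rw [Finset.sum_congr rfl fun r _ => hno r] at hμ1
    simp at hμ1
  obtain ⟨r0, hr0⟩ := hex
  refine ⟨lam, ⟨r0, ?_⟩, ?_⟩
  · intro hz
    apply hr0
    have : (lam r0 : ℚ) = 0 := by rw [hz]; norm_num
    rw [hlamcast r0] at this
    rcases mul_eq_zero.mp this with h' | h'
    · exact h'
    · exact absurd h' (by exact_mod_cast hNpos.ne')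
  · funext i
    rw [Finset.sum_apply]
    have hcast : ((∑ s, (lam s • a s) i : ℤ) : ℚ) = 0 := by
      simp only [Pi.smul_apply, nsmul_eq_mul]
      push_cast
      have : ∀ s : Fin m, ((lam s : ℚ)) * ((a s i : ℤ) : ℚ) = (N : ℚ) * (μ s * (a s i : ℚ)) := by
        intro s; rw [hlamcast s]; ring
      calc ∑ s, ((lam s : ℚ)) * ((a s i : ℤ) : ℚ)
          = ∑ s, (N : ℚ) * (μ s * (a s i : ℚ)) := Finset.sum_congr rfl fun s _ => this s
        _ = (N : ℚ) * ∑ s, μ s * (a s i : ℚ) := by rw [Finset.mul_sum]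
        _ = 0 := by rw [hμa i, mul_zero]
    have := hcast
    exact_mod_cast this
end

section
/- Let c : Fin n → Fin n → Fin n → ℝ be the structure constants of an n-dimensional real Lie algebra, let f : Fin n → ℝ → ℝ be such that each f i is continuous on (0,1] and f i ε ≠ 0 for every ε ∈ (0,1], and let c₀ : Fin n → Fin n → Fin n → ℝ be such that for all i, j, k the function ε ↦ c i j k * (f i ε) * (f j ε) / (f k ε) tends to c₀ i j k as ε → 0⁺. If moreover c₀ i j k ≠ 0 whenever c i j k ≠ 0, then there exists y : Fin n → ℝ with y i ≠ 0 for all i such that c₀ i j k = c i j k * y i * y j / y k for all i, j, k; in particular the contracted Lie algebra is isomorphic to the original one (the contraction is improper). -/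
open Filter Topology

/-- If a diagonal contraction kills no structure constant (`c₀ i j k ≠ 0` whenever
`c i j k ≠ 0`), then the contracted structure constants are obtained from the
original ones by a constant diagonal change of basis `y` with nonzero entries,
so the contraction is improper (the contracted algebra is isomorphic to the
original one). -/
theorem diagonal_contraction_improper
    (n : ℕ) (c c₀ : Fin n → Fin n → Fin n → ℝ)
    (hanti : ∀ i j k, c i j k = -(c j i k))
    (hjac : ∀ i j k m, ∑ l, (c i j l * c l k m + c k i l * c l j m + c j k l * c l i m) = 0)
    (f : Fin n → ℝ → ℝ)
    (hfcont : ∀ i, ContinuousOn (f i) (Set.Ioc 0 1))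
    (hfne : ∀ i, ∀ ε ∈ Set.Ioc (0 : ℝ) 1, f i ε ≠ 0)
    (hlim : ∀ i j k, Tendsto (fun ε : ℝ => c i j k * f i ε * f j ε / f k ε)
      (𝓝[>] (0 : ℝ)) (𝓝 (c₀ i j k)))
    (hne : ∀ i j k, c i j k ≠ 0 → c₀ i j k ≠ 0) :
    ∃ y : Fin n → ℝ, (∀ i, y i ≠ 0) ∧
      ∀ i j k, c₀ i j k = c i j k * y i * y j / y k := by
  classical
  -- the membership of Ioc 0 1 in the filter
  have hIoc : Set.Ioc (0 : ℝ) 1 ∈ 𝓝[>] (0 : ℝ) :=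
    Ioc_mem_nhdsGT_of_mem (by constructor <;> norm_num)
  -- Step 0 : if c i j k = 0 then c₀ i j k = 0
  have hzero : ∀ i j k, c i j k = 0 → c₀ i j k = 0 := by
    intro i j k h
    have h1 := hlim i j k
    simp only [h, zero_mul, zero_div] at h1
    exact tendsto_nhds_unique h1 tendsto_const_nhds
  -- Step 1 : constant sign of f i on Ioc 0 1
  have hsign : ∀ i, ∀ ε ∈ Set.Ioc (0 : ℝ) 1, 0 < f i ε * f i 1 := by
    intro i ε hε
    have h1 : (1 : ℝ) ∈ Set.Ioc (0 : ℝ) 1 := by constructor <;> norm_num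
    have hfε := hfne i ε hε
    have hf1 := hfne i 1 h1
    by_contra hcon
    push_neg at hcon
    have hlt : f i ε * f i 1 < 0 := lt_of_le_of_ne hcon (mul_ne_zero hfε hf1)
    have hsub : Set.Icc ε 1 ⊆ Set.Ioc (0 : ℝ) 1 := fun x hx => ⟨lt_of_lt_of_le hε.1 hx.1, hx.2⟩
    have hcont : ContinuousOn (f i) (Set.Icc ε 1) := (hfcont i).mono hsub
    rcases mul_neg_iff.1 hlt with ⟨hpos, hneg⟩ | ⟨hneg, hpos⟩
    · have := intermediate_value_Icc' hε.2 hcont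
      have h0 : (0 : ℝ) ∈ Set.Icc (f i 1) (f i ε) := ⟨hneg.le, hpos.le⟩
      rcases this h0 with ⟨x, hx, hfx⟩
      exact hfne i x (hsub hx) hfx
    · have := intermediate_value_Icc hε.2 hcont
      have h0 : (0 : ℝ) ∈ Set.Icc (f i ε) (f i 1) := ⟨hneg.le, hpos.le⟩
      rcases this h0 with ⟨x, hx, hfx⟩
      exact hfne i x (hsub hx) hfx
  have h1mem : (1 : ℝ) ∈ Set.Ioc (0 : ℝ) 1 := by constructor <;> norm_num
  -- Step 2 : the linear map and closed range argument
  let A : (Fin n → ℝ) →ₗ[ℝ] (Fin n × Fin n × Fin n → ℝ) :=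
    { toFun := fun u p => if c p.1 p.2.1 p.2.2 = 0 then 0
        else u p.1 + u p.2.1 - u p.2.2
      map_add' := by
        intro u v
        funext p
        by_cases h : c p.1 p.2.1 p.2.2 = 0 <;> simp [h] <;> ring
      map_smul' := by
        intro a u
        funext p
        by_cases h : c p.1 p.2.1 p.2.2 = 0 <;> simp [h] <;> ring }
  set u : ℝ → (Fin n → ℝ) := fun ε i => Real.log |f i ε| with hu
  set v : Fin n × Fin n × Fin n → ℝ := fun p =>
    if c p.1 p.2.1 p.2.2 = 0 then 0
    else Real.log |c₀ p.1 p.2.1 p.2.2| - Real.log |c p.1 p.2.1 p.2.2| with hv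
  have htend : Tendsto (fun ε => A (u ε)) (𝓝[>] (0 : ℝ)) (𝓝 v) := by
    rw [tendsto_pi_nhds]
    intro p
    obtain ⟨i, j, k⟩ := p
    by_cases h : c i j k = 0
    · simp only [A, LinearMap.coe_mk, AddHom.coe_mk, h, if_pos, hv]
      exact tendsto_const_nhds
    · have hc₀ : c₀ i j k ≠ 0 := hne i j k h
      have hcomp : Tendsto (fun ε : ℝ => Real.log |c i j k * f i ε * f j ε / f k ε|)
          (𝓝[>] (0 : ℝ)) (𝓝 (Real.log |c₀ i j k|)) := by
        have hlog : ContinuousAt Real.log |c₀ i j k| :=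
          Real.continuousAt_log (by simpa using hc₀)
        exact hlog.tendsto.comp (hlim i j k).abs
      have heq : ∀ᶠ ε in 𝓝[>] (0 : ℝ),
          Real.log |c i j k * f i ε * f j ε / f k ε| - Real.log |c i j k|
            = A (u ε) (i, j, k) := by
        filter_upwards [hIoc] with ε hε
        have hfi := hfne i ε hε
        have hfj := hfne j ε hε
        have hfk := hfne k ε hε
        simp only [A, LinearMap.coe_mk, AddHom.coe_mk, if_neg h, hu]
        rw [abs_div, abs_mul, abs_mul, Real.log_div (by positivity)
              (by simpa using hfk),
            Real.log_mul (by positivity) (by simpa using hfj),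
            Real.log_mul (by simpa using h) (by simpa using hfi)]
        ring
      have : Tendsto (fun ε : ℝ =>
          Real.log |c i j k * f i ε * f j ε / f k ε| - Real.log |c i j k|)
          (𝓝[>] (0 : ℝ)) (𝓝 (Real.log |c₀ i j k| - Real.log |c i j k|)) :=
        hcomp.sub tendsto_const_nhds
      have h2 := this.congr' heq
      simp only [hv, if_neg h]
      exact h2
  have hmem : v ∈ LinearMap.range A := by
    have hcl : IsClosed (LinearMap.range A : Set (Fin n × Fin n × Fin n → ℝ)) :=
      Submodule.closed_of_finiteDimensional _
    exact hcl.mem_of_tendsto htend (Eventually.of_forall fun ε => ⟨u ε, rfl⟩)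
  obtain ⟨u₀, hu₀⟩ := hmem
  -- Step 3 : define y
  set σ : Fin n → ℝ := fun i => if 0 < f i 1 then 1 else -1 with hσ
  have hσsq : ∀ i, σ i * σ i = 1 := by
    intro i; by_cases h : 0 < f i 1 <;> simp [hσ, h]
  have hσf : ∀ i, 0 < σ i * f i 1 := by
    intro i
    by_cases h : 0 < f i 1
    · simpa [hσ, h] using h
    · have hne1 := hfne i 1 h1mem
      have : f i 1 < 0 := lt_of_le_of_ne (not_lt.1 h) hne1
      simp only [hσ, if_neg h]
      nlinarith
  refine ⟨fun i => σ i * Real.exp (u₀ i), ?_, ?_⟩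
  · intro i
    have : σ i ≠ 0 := by by_cases h : 0 < f i 1 <;> simp [hσ, h]
    exact mul_ne_zero this (Real.exp_ne_zero _)
  · intro i j k
    by_cases h : c i j k = 0
    · simp [h, hzero i j k h]
    · have hc₀ : c₀ i j k ≠ 0 := hne i j k h
      -- exponential part
      have hval : u₀ i + u₀ j - u₀ k = Real.log |c₀ i j k| - Real.log |c i j k| := by
        have := congrFun hu₀ (i, j, k)
        simpa only [A, LinearMap.coe_mk, AddHom.coe_mk, if_neg h, hv] using this
      have hexp : Real.exp (u₀ i) * Real.exp (u₀ j) / Real.exp (u₀ k)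
          = |c₀ i j k| / |c i j k| := by
        rw [← Real.exp_add, ← Real.exp_sub, hval, Real.exp_sub,
          Real.exp_log (abs_pos.2 hc₀), Real.exp_log (abs_pos.2 h)]
      -- sign part
      have hσfε : ∀ (a : Fin n), ∀ ε ∈ Set.Ioc (0 : ℝ) 1, 0 < σ a * f a ε := by
        intro a ε hε
        have h1 := hsign a ε hε
        have h2 := hσf a
        nlinarith [mul_pos h1 h2, sq_nonneg (f a 1), hfne a 1 h1mem]
      set S : ℝ := σ i * σ j * σ k with hS
      have hSsq : S * S = 1 := by
        have hSS : S * S = (σ i * σ i) * ((σ j * σ j) * (σ k * σ k)) := by rw [hS]; ring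
        rw [hSS, hσsq, hσsq, hσsq]; norm_num
      have hSne : S ≠ 0 := by
        intro h0
        rw [h0, mul_zero] at hSsq
        norm_num at hSsq
      have hposε : ∀ ε ∈ Set.Ioc (0 : ℝ) 1,
          0 ≤ S * ((c i j k * f i ε * f j ε / f k ε) / c i j k) := by
        intro ε hε
        have hi := hσfε i ε hε
        have hj := hσfε j ε hε
        have hk := hσfε k ε hε
        have hfk := hfne k ε hε
        have heq : S * ((c i j k * f i ε * f j ε / f k ε) / c i j k)
            = ((σ i * f i ε) * (σ j * f j ε) * (σ k * f k ε)) / (f k ε * f k ε) := by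
          rw [hS]; field_simp
        rw [heq]
        exact le_of_lt (div_pos (mul_pos (mul_pos hi hj) hk) (mul_self_pos.2 hfk))
      have hS0 : 0 ≤ S * (c₀ i j k / c i j k) := by
        refine ge_of_tendsto (((hlim i j k).div_const (c i j k)).const_mul S) ?_
        filter_upwards [hIoc] with ε hε using hposε ε hε
      have hSpos : 0 < S * (c₀ i j k / c i j k) :=
        lt_of_le_of_ne hS0 (Ne.symm (mul_ne_zero hSne (div_ne_zero hc₀ h)))
      have habs : |c₀ i j k / c i j k| = S * (c₀ i j k / c i j k) := by
        have h1 : |S * (c₀ i j k / c i j k)| = S * (c₀ i j k / c i j k) :=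
          abs_of_pos hSpos
        have h2 : |S| = 1 := by
          rcases mul_self_eq_one_iff.1 hSsq with hS1 | hS1 <;> rw [hS1] <;> norm_num
        calc |c₀ i j k / c i j k| = |S| * |c₀ i j k / c i j k| := by rw [h2, one_mul]
          _ = |S * (c₀ i j k / c i j k)| := (abs_mul _ _).symm
          _ = S * (c₀ i j k / c i j k) := h1
      have hinv : (σ k)⁻¹ = σ k := by
        rcases mul_self_eq_one_iff.1 (hσsq k) with hk1 | hk1 <;> rw [hk1] <;> norm_num
      have hrw : c i j k * (σ i * Real.exp (u₀ i)) * (σ j * Real.exp (u₀ j))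
          / (σ k * Real.exp (u₀ k))
          = c i j k * S * (Real.exp (u₀ i) * Real.exp (u₀ j) / Real.exp (u₀ k)) := by
        rw [div_eq_mul_inv, mul_inv, hinv, div_eq_mul_inv, hS]; ring
      have hfinal : c i j k * (σ i * Real.exp (u₀ i)) * (σ j * Real.exp (u₀ j))
          / (σ k * Real.exp (u₀ k)) = c₀ i j k := by
        rw [hrw, hexp]
        have habs' : |c₀ i j k| / |c i j k| = |c₀ i j k / c i j k| := (abs_div _ _).symm
        rw [habs', habs]
        have hfin : c i j k * S * (S * (c₀ i j k / c i j k))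
            = (S * S) * (c i j k * (c₀ i j k / c i j k)) := by ring
        rw [hfin, hSsq, one_mul, mul_div_cancel₀ _ h]
      exact hfinal.symm
end

section
/- Let c : Fin n → Fin n → Fin n → ℂ be the structure constants of an n-dimensional complex Lie algebra, let f : Fin n → ℝ → ℂ be such that each f i is continuous on (0,1] and f i ε ≠ 0 for every ε ∈ (0,1], and let c₀ : Fin n → Fin n → Fin n → ℂ be such that for all i, j, k the function ε ↦ c i j k * (f i ε) * (f j ε) / (f k ε) tends to c₀ i j k as ε → 0⁺. Then there exist γ : Fin n → ℂ with γ i ≠ 0 for all i, and β : Fin n → ℤ, such that for all i, j, k the function ε ↦ c i j k * (γ i * γ j / γ k) * (ε : ℂ) ^ (β i + β j - β k) (integer power, ε > 0 real) tends to c₀ i j k as ε → 0⁺. -/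
open Filter Topology
open scoped RealInnerProductSpace

private def dotQ {n : ℕ} (v y : Fin n → ℚ) : ℚ := ∑ i, v i * y i
private def dotR {n : ℕ} (v : Fin n → ℚ) (x : Fin n → ℝ) : ℝ := ∑ i, (v i : ℝ) * x i

private lemma dotR_cast {n : ℕ} (v y : Fin n → ℚ) :
    dotR v (fun i => (y i : ℝ)) = (dotQ v y : ℝ) := by
  simp [dotR, dotQ]

private lemma rat_sol {n : ℕ} {ι : Type} (Bs : Finset ι) :
    ∀ (L : ι → (Fin n → ℚ)) (As : Finset ι) (x : Fin n → ℝ),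
    (∀ t ∈ Bs, dotR (L t) x = 0) → (∀ t ∈ As, 0 < dotR (L t) x) →
    ∃ y : Fin n → ℚ, (∀ t ∈ Bs, dotQ (L t) y = 0) ∧ (∀ t ∈ As, 0 < dotQ (L t) y) := by
  classical
  induction Bs using Finset.induction_on with
  | empty =>
    intro L As x _ hA
    set U : Set (Fin n → ℝ) := ⋂ t ∈ As, {x' | 0 < dotR (L t) x'} with hU
    have hUopen : IsOpen U := by
      apply isOpen_biInter_finset
      intro t _
      have hcont : Continuous (fun x' : Fin n → ℝ => dotR (L t) x') := by
        unfold dotR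
        exact continuous_finset_sum _ fun i _ => (continuous_const.mul (continuous_apply i))
      exact isOpen_lt continuous_const hcont
    have hxU : x ∈ U := by
      simp only [hU, Set.mem_iInter]
      intro t ht; exact hA t ht
    have hdense : Dense (Set.pi Set.univ (fun _ : Fin n => Set.range ((↑) : ℚ → ℝ))) :=
      dense_pi Set.univ (fun _ _ => Rat.denseRange_cast)
    obtain ⟨z, hz1, hz2⟩ := hdense.inter_open_nonempty U hUopen ⟨x, hxU⟩
    choose q hq using fun i => (hz2 i (Set.mem_univ i))
    have hzq : z = fun i => ((q i : ℝ)) := by funext i; exact (hq i).symm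
    refine ⟨q, fun t ht => absurd ht (Finset.notMem_empty t), fun t ht => ?_⟩
    simp only [hU, Set.mem_iInter, Set.mem_setOf_eq] at hz1
    have := hz1 t ht
    rw [hzq, dotR_cast] at this
    exact_mod_cast this
  | insert _ _ hnotmem ih =>
    rename_i t0 B'
    intro L As x hB hA
    by_cases hz : ∀ j, L t0 j = 0
    · obtain ⟨y, hy1, hy2⟩ := ih L As x (fun t ht => hB t (Finset.mem_insert_of_mem ht)) hA
      refine ⟨y, fun t ht => ?_, hy2⟩
      rcases Finset.mem_insert.mp ht with rfl | ht'
      · simp [dotQ, hz]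
      · exact hy1 t ht'
    · push_neg at hz
      obtain ⟨j0, hj0⟩ := hz
      set ℓ0 := L t0 with hℓ0
      set L' : ι → (Fin n → ℚ) := fun t i => L t i - (L t j0 / ℓ0 j0) * ℓ0 i with hL'
      have hx0 : dotR ℓ0 x = 0 := hB t0 (Finset.mem_insert_self _ _)
      have hdotR' : ∀ t, dotR (L' t) x = dotR (L t) x := by
        intro t
        have h1 : dotR (L' t) x = dotR (L t) x - ((L t j0 / ℓ0 j0 : ℚ) : ℝ) * dotR ℓ0 x := by
          simp only [hL', dotR, Rat.cast_sub, Rat.cast_mul, sub_mul, Finset.sum_sub_distrib,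
            Finset.mul_sum]
          congr 1
          exact Finset.sum_congr rfl fun i _ => by ring
        rw [h1, hx0, mul_zero, sub_zero]
      obtain ⟨y, hy1, hy2⟩ := ih L' As x
        (fun t ht => by rw [hdotR']; exact hB t (Finset.mem_insert_of_mem ht))
        (fun t ht => by rw [hdotR']; exact hA t ht)
      set Q : ℚ := dotQ ℓ0 y / ℓ0 j0 with hQ
      set y' : Fin n → ℚ := fun i => y i - Q * (if i = j0 then 1 else 0) with hy'
      have key : ∀ t, dotQ (L t) y' = dotQ (L t) y - Q * L t j0 := by
        intro t
        have hterm : ∀ i, L t i * y' i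
            = L t i * y i - (if i = j0 then Q * L t j0 else 0) := by
          intro i
          by_cases h : i = j0
          · subst h; simp [hy']; ring
          · simp [hy', h]
        simp only [dotQ, hterm, Finset.sum_sub_distrib, Finset.sum_ite_eq' Finset.univ j0
          (fun _ => Q * L t j0), Finset.mem_univ, if_true]
      have key' : ∀ t, dotQ (L' t) y = dotQ (L t) y - Q * L t j0 := by
        intro t
        have h2 : ∑ i, (L t j0 / ℓ0 j0 * ℓ0 i) * y i = Q * L t j0 := by
          rw [show ∑ i, (L t j0 / ℓ0 j0 * ℓ0 i) * y i
              = (L t j0 / ℓ0 j0) * ∑ i, ℓ0 i * y i by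
            rw [Finset.mul_sum]; exact Finset.sum_congr rfl fun i _ => by ring]
          rw [hQ]
          unfold dotQ
          field_simp
        simp only [dotQ, hL', sub_mul, Finset.sum_sub_distrib]
        rw [h2]
        
      have keyt0 : dotQ ℓ0 y' = 0 := by
        rw [key t0, hQ]
        field_simp
        rw [hℓ0]; ring
      refine ⟨y', fun t ht => ?_, fun t ht => by rw [key, ← key']; exact hy2 t ht⟩
      rcases Finset.mem_insert.mp ht with rfl | ht'
      · exact keyt0
      · rw [key, ← key']; exact hy1 t ht'


private def trip {n : ℕ} (i j k : Fin n) : Fin n → ℚ :=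
  fun l => (if l = i then 1 else 0) + (if l = j then 1 else 0) - (if l = k then 1 else 0)

private lemma dotQ_trip {n : ℕ} (i j k : Fin n) (y : Fin n → ℚ) :
    dotQ (trip i j k) y = y i + y j - y k := by
  simp [dotQ, trip, add_mul, sub_mul, Finset.sum_add_distrib, Finset.sum_sub_distrib,
    ite_mul, Finset.sum_ite_eq']

private lemma dotR_trip {n : ℕ} (i j k : Fin n) (x : Fin n → ℝ) :
    dotR (trip i j k) x = x i + x j - x k := by
  simp only [dotR, trip]
  push_cast
  simp [add_mul, sub_mul, ite_mul, Finset.sum_add_distrib, Finset.sum_sub_distrib,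
    Finset.sum_ite_eq', apply_ite ((↑) : ℚ → ℝ)]

private lemma int_scale {n : ℕ} (y : Fin n → ℚ) :
    ∃ (β : Fin n → ℤ) (N : ℚ), 0 < N ∧ ∀ i, (β i : ℚ) = N * y i := by
  classical
  set d : ℕ := ∏ i, (y i).den with hd
  have hdpos : 0 < d := Finset.prod_pos (fun i _ => (y i).pos)
  refine ⟨fun i => (y i).num * ((d / (y i).den : ℕ) : ℤ), (d : ℚ),
    by exact_mod_cast hdpos, fun i => ?_⟩
  have hdvd : (y i).den ∣ d := Finset.dvd_prod_of_mem _ (Finset.mem_univ i)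
  obtain ⟨m, hm⟩ := hdvd
  show (((y i).num * ((d / (y i).den : ℕ) : ℤ) : ℤ) : ℚ) = (d : ℚ) * y i
  rw [hm, Nat.mul_div_cancel_left _ (y i).pos]
  push_cast
  have hdne : ((y i).den : ℚ) ≠ 0 := by exact_mod_cast (y i).pos.ne'
  have hnum : ((y i).num : ℚ) = y i * (y i).den :=
    (div_eq_iff hdne).mp (Rat.num_div_den (y i))
  rw [hnum]
  ring

private lemma real_sol {n : ℕ} {ι : Type} (Bs As : Finset ι)
    (v : ι → EuclideanSpace ℝ (Fin n)) (u : ℝ → EuclideanSpace ℝ (Fin n)) (ℓ : ι → ℝ)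
    (hB : ∀ t ∈ Bs, Tendsto (fun ε => ⟪u ε, v t⟫) (𝓝[>] (0:ℝ)) (𝓝 (ℓ t)))
    (hA : ∀ t ∈ As, Tendsto (fun ε => ⟪u ε, v t⟫) (𝓝[>] (0:ℝ)) atTop) :
    ∃ x : EuclideanSpace ℝ (Fin n), (∀ t ∈ Bs, ⟪x, v t⟫ = 0) ∧
      (∀ t ∈ As, 0 < ⟪x, v t⟫) := by
  classical
  let E := EuclideanSpace ℝ (Fin n)
  set V : Submodule ℝ E := Submodule.span ℝ (v '' ↑Bs) with hV
  have hVmem : ∀ t ∈ Bs, v t ∈ V := fun t ht => Submodule.subset_span ⟨t, ht, rfl⟩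
  set P := Submodule.orthogonalProjectionOnto V with hP
  have horthP : ∀ (w : E), ∀ t ∈ Bs, ⟪w - (P w : E), v t⟫ = 0 := by
    intro w t ht
    have hmem : w - (P w : E) ∈ Vᗮ := Submodule.sub_starProjection_mem_orthogonal (K := V) w
    exact (Submodule.mem_orthogonal' V _).mp hmem (v t) (hVmem t ht)
  have hPinner : ∀ (w : E), ∀ t ∈ Bs, ⟪(P w : E), v t⟫ = ⟪w, v t⟫ := by
    intro w t ht
    have := horthP w t ht
    rw [inner_sub_left] at this
    linarith
  -- the injective comparison map
  set Φ : V →ₗ[ℝ] (↥Bs → ℝ) :=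
    LinearMap.pi (fun t => (innerSL ℝ (v ↑t)).toLinearMap ∘ₗ V.subtype) with hΦ
  have hΦapply : ∀ (a : V) (t : ↥Bs), Φ a t = ⟪v ↑t, (a : E)⟫ := fun a t => rfl
  have hker : ∀ a : V, Φ a = 0 → a = 0 := by
    intro a ha
    have horth : ∀ w ∈ V, ⟪w, (a : E)⟫ = 0 := by
      intro w hw
      induction hw using Submodule.span_induction with
      | mem w hw =>
        obtain ⟨t, ht, rfl⟩ := hw
        have := congrFun ha ⟨t, ht⟩
        rw [hΦapply] at this
        exact this
      | zero => simp
      | add w₁ w₂ _ _ h1 h2 => rw [inner_add_left, h1, h2, add_zero]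
      | smul r w _ h1 => rw [real_inner_smul_left, h1, mul_zero]
    have : ⟪(a : E), (a : E)⟫ = 0 := horth a a.2
    exact Subtype.ext (inner_self_eq_zero.mp this)
  have hΦinj : Function.Injective Φ :=
    LinearMap.ker_eq_bot.mp (LinearMap.ker_eq_bot'.mpr hker)
  let e := (LinearEquiv.ofInjective Φ hΦinj).toContinuousLinearEquiv
  set C : ℝ := ((‖(e.symm : ↥(LinearMap.range Φ) →L[ℝ] V)‖₊ : NNReal) : ℝ) with hC
  have hCnonneg : 0 ≤ C := NNReal.coe_nonneg _
  have hbound : ∀ a : V, ‖a‖ ≤ C * ‖Φ a‖ := by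
    intro a
    have h0 : e 0 = 0 := map_zero e
    have h1 := e.antilipschitz.le_mul_norm h0 a
    have h2 : ((e a : ↥(LinearMap.range Φ)) : ↥Bs → ℝ) = Φ a := by
      simp only [e, LinearEquiv.coe_toContinuousLinearEquiv', LinearEquiv.ofInjective_apply]
    have h3 : ‖e a‖ = ‖Φ a‖ := by
      rw [← h2]; rfl
    rw [h3] at h1
    exact h1
  -- eventual bounds
  set K0 : ℝ := 1 + ∑ t ∈ Bs, |ℓ t| with hK0
  have hK0pos : 0 ≤ K0 := by
    have : (0:ℝ) ≤ ∑ t ∈ Bs, |ℓ t| := Finset.sum_nonneg fun t _ => abs_nonneg _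
    linarith
  have hK0ge : ∀ t ∈ Bs, |ℓ t| + 1 ≤ K0 := by
    intro t ht
    have := Finset.single_le_sum (f := fun t => |ℓ t|) (fun s _ => abs_nonneg _) ht
    simp only [hK0]; linarith
  have hev1 : ∀ᶠ ε in 𝓝[>] (0:ℝ), ∀ t ∈ Bs, |⟪u ε, v t⟫| ≤ |ℓ t| + 1 := by
    rw [Finset.eventually_all]
    intro t ht
    exact ((hB t ht).abs).eventually_le_const (lt_add_one _)
  have hev2 : ∀ᶠ ε in 𝓝[>] (0:ℝ), ∀ t ∈ As, C * K0 * ‖v t‖ < ⟪u ε, v t⟫ := by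
    rw [Finset.eventually_all]
    intro t ht
    exact (hA t ht).eventually_gt_atTop _
  obtain ⟨ε0, h1, h2⟩ := (hev1.and hev2).exists
  set x : E := u ε0 - (P (u ε0) : E) with hx
  have hPbound : ‖(P (u ε0) : E)‖ ≤ C * K0 := by
    have hb := hbound (P (u ε0))
    have hΦb : ‖Φ (P (u ε0))‖ ≤ K0 := by
      rw [pi_norm_le_iff_of_nonneg hK0pos]
      intro t
      rw [hΦapply]
      have : ⟪v ↑t, (P (u ε0) : E)⟫ = ⟪u ε0, v ↑t⟫ := by
        rw [real_inner_comm]; exact hPinner (u ε0) ↑t t.2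
      rw [Real.norm_eq_abs, this]
      calc |⟪u ε0, v ↑t⟫| ≤ |ℓ ↑t| + 1 := h1 ↑t t.2
        _ ≤ K0 := hK0ge ↑t t.2
    calc ‖(P (u ε0) : E)‖ = ‖P (u ε0)‖ := Submodule.norm_coe (s := V) (P (u ε0))
      _ ≤ C * ‖Φ (P (u ε0))‖ := hb
      _ ≤ C * K0 := mul_le_mul_of_nonneg_left hΦb hCnonneg
  refine ⟨x, fun t ht => horthP (u ε0) t ht, fun t ht => ?_⟩
  have hsplit : ⟪x, v t⟫ = ⟪u ε0, v t⟫ - ⟪(P (u ε0) : E), v t⟫ := by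
    rw [hx, inner_sub_left]
  have hcs : |⟪(P (u ε0) : E), v t⟫| ≤ C * K0 * ‖v t‖ := by
    calc |⟪(P (u ε0) : E), v t⟫| ≤ ‖(P (u ε0) : E)‖ * ‖v t‖ := abs_real_inner_le_norm _ _
      _ ≤ C * K0 * ‖v t‖ := mul_le_mul_of_nonneg_right hPbound (norm_nonneg _)
  have := h2 t ht
  rw [hsplit]
  have habs := abs_le.mp hcs
  linarith [habs.2]

private noncomputable def unitsRoot (a : ℂˣ) (z : ℤ) : ℂˣ :=
  if h : z = 0 then 1 else
    Units.mk0 (Classical.choose (IsAlgClosed.exists_pow_nat_eq (a : ℂ)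
        (Int.natAbs_pos.mpr h)))
      (by
        intro h0
        have hs := Classical.choose_spec (IsAlgClosed.exists_pow_nat_eq (a : ℂ)
          (Int.natAbs_pos.mpr h))
        rw [h0, zero_pow (Int.natAbs_ne_zero.mpr h)] at hs
        exact a.ne_zero hs.symm)

private lemma unitsRoot_spec (a : ℂˣ) (z : ℤ) (hz : z ≠ 0) :
    (unitsRoot a z) ^ (z.natAbs) = a := by
  rw [unitsRoot, dif_neg hz]
  ext
  push_cast
  exact Classical.choose_spec (IsAlgClosed.exists_pow_nat_eq (a : ℂ) (Int.natAbs_pos.mpr hz))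

private noncomputable instance : DivisibleBy (Additive ℂˣ) ℤ where
  div a z := Additive.ofMul (if 0 ≤ z then unitsRoot (Additive.toMul a) z
    else (unitsRoot (Additive.toMul a) z)⁻¹)
  div_zero a := by simp [unitsRoot]
  div_cancel := by
    intro z a hz
    apply Additive.toMul.injective
    rw [toMul_zsmul]
    rw [toMul_ofMul]
    rcases le_or_gt 0 z with hzpos | hzneg
    · rw [if_pos hzpos]
      have h1 : unitsRoot (Additive.toMul a) z ^ z
          = unitsRoot (Additive.toMul a) z ^ (z.natAbs : ℤ) := by
        rw [Int.natAbs_of_nonneg hzpos]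
      rw [h1, zpow_natCast, unitsRoot_spec _ _ hz]
    · rw [if_neg (not_le.mpr hzneg)]
      have h1 : (unitsRoot (Additive.toMul a) z)⁻¹ ^ z
          = unitsRoot (Additive.toMul a) z ^ (z.natAbs : ℤ) := by
        rw [inv_zpow, ← zpow_neg, Int.ofNat_natAbs_of_nonpos hzneg.le]
      rw [h1, zpow_natCast, unitsRoot_spec _ _ hz]

private lemma extend_units {M : Type} [AddCommGroup M] (H : Submodule ℤ M)
    (ψ : H →ₗ[ℤ] Additive ℂˣ) :
    ∃ φ : M →ₗ[ℤ] Additive ℂˣ, ∀ h : H, φ (h : M) = ψ h := by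
  haveI : Module.Injective ℤ (Additive ℂˣ) := (Module.Baer.of_divisible _).injective
  obtain ⟨φ, hφ⟩ := Module.Injective.out H.subtype Subtype.coe_injective ψ
  exact ⟨φ, hφ⟩

private lemma gamma_exists {n : ℕ} (f : Fin n → ℝ → ℂ)
    (hfne : ∀ i, ∀ ε ∈ Set.Ioc (0 : ℝ) 1, f i ε ≠ 0) :
    ∃ γ : Fin n → ℂˣ, ∀ (h : Fin n → ℤ) (z : ℂ), z ≠ 0 →
      Tendsto (fun ε => ∏ i, (f i ε) ^ (h i)) (𝓝[>] (0:ℝ)) (𝓝 z) →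
      ∏ i, (γ i : ℂ) ^ (h i) = z := by
  classical
  set F : (Fin n → ℤ) → ℝ → ℂ := fun h ε => ∏ i, (f i ε) ^ (h i) with hF
  have hIoc : (Set.Ioc (0:ℝ) 1) ∈ 𝓝[>] (0:ℝ) := Ioc_mem_nhdsGT_of_mem (by simp)
  have hFadd : ∀ a b : Fin n → ℤ, ∀ ε ∈ Set.Ioc (0:ℝ) 1, F (a + b) ε = F a ε * F b ε := by
    intro a b ε hε
    rw [hF, ← Finset.prod_mul_distrib]
    exact Finset.prod_congr rfl fun i _ => by
      rw [Pi.add_apply, zpow_add₀ (hfne i ε hε)]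
  have hFsmul : ∀ (z : ℤ) (a : Fin n → ℤ), ∀ ε ∈ Set.Ioc (0:ℝ) 1,
      F (z • a) ε = (F a ε) ^ z := by
    intro z a ε hε
    rw [hF, ← Finset.prod_zpow]
    exact Finset.prod_congr rfl fun i _ => by
      rw [Pi.smul_apply, smul_eq_mul, mul_comm, zpow_mul]
  set H' : Submodule ℤ (Fin n → ℤ) :=
    { carrier := {h | ∃ z : ℂ, z ≠ 0 ∧ Tendsto (F h) (𝓝[>] (0:ℝ)) (𝓝 z)}
      add_mem' := by
        rintro a b ⟨z, hz, ha⟩ ⟨w, hw, hb⟩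
        refine ⟨z * w, mul_ne_zero hz hw, ?_⟩
        refine (ha.mul hb).congr' ?_
        exact eventuallyEq_of_mem hIoc fun ε hε => (hFadd a b ε hε).symm
      zero_mem' := by
        refine ⟨1, one_ne_zero, ?_⟩
        have : F 0 = fun _ => (1:ℂ) := by
          funext ε; simp [hF]
        rw [this]; exact tendsto_const_nhds
      smul_mem' := by
        rintro z a ⟨w, hw, ha⟩
        refine ⟨w ^ z, zpow_ne_zero z hw, ?_⟩
        have hc : Tendsto (fun ε => (F a ε) ^ z) (𝓝[>] (0:ℝ)) (𝓝 (w ^ z)) :=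
          ((continuousAt_zpow₀ w z (Or.inl hw)).tendsto).comp ha
        refine hc.congr' ?_
        exact eventuallyEq_of_mem hIoc fun ε hε => (hFsmul z a ε hε).symm } with hH'
  have limval : ∀ h : H', ∃ z : ℂ, z ≠ 0 ∧ Tendsto (F (h : Fin n → ℤ)) (𝓝[>] (0:ℝ)) (𝓝 z) :=
    fun h => h.2
  choose lim limne limtend using limval
  set ψ0 : H' →+ Additive ℂˣ := AddMonoidHom.mk'
    (fun h => Additive.ofMul (Units.mk0 (lim h) (limne h)))
    (by
      intro a b
      have h1 : Tendsto (F ((a + b : H') : Fin n → ℤ)) (𝓝[>] (0:ℝ)) (𝓝 (lim a * lim b)) := by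
        refine ((limtend a).mul (limtend b)).congr' ?_
        exact eventuallyEq_of_mem hIoc fun ε hε => (hFadd a b ε hε).symm
      have h2 : lim (a + b) = lim a * lim b := tendsto_nhds_unique (limtend (a+b)) h1
      apply Additive.toMul.injective
      ext
      simp [h2]) with hψ0
  obtain ⟨φ, hφ⟩ := extend_units H' ψ0.toIntLinearMap
  refine ⟨fun i => Additive.toMul (φ (Pi.single i 1)), ?_⟩
  intro h z hz htend
  have hmem : h ∈ H' := ⟨z, hz, htend⟩
  have hrepr : (∑ i, h i • (Pi.single i (1:ℤ) : Fin n → ℤ)) = h := by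
    have hsng : ∀ i : Fin n, h i • (Pi.single i (1:ℤ) : Fin n → ℤ)
        = (Pi.single i (h i) : Fin n → ℤ) := by
      intro i
      funext j
      rw [Pi.smul_apply, smul_eq_mul, Pi.single_apply, Pi.single_apply]
      by_cases hj : j = i
      · rw [if_pos hj, if_pos hj, mul_one]
      · rw [if_neg hj, if_neg hj, mul_zero]
    simp_rw [hsng]
    exact Finset.univ_sum_single h
  have hφh : φ h = ψ0 ⟨h, hmem⟩ := hφ ⟨h, hmem⟩
  have hφsum : Additive.toMul (φ h) = ∏ i, (Additive.toMul (φ (Pi.single i 1))) ^ (h i) := by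
    conv_lhs => rw [← hrepr]
    rw [map_sum, toMul_sum]
    exact Finset.prod_congr rfl fun i _ => by rw [map_zsmul, toMul_zsmul]
  have hlimz : lim ⟨h, hmem⟩ = z := tendsto_nhds_unique (limtend ⟨h, hmem⟩) htend
  have : ((Additive.toMul (φ h) : ℂˣ) : ℂ) = z := by
    rw [hφh]
    simp only [AddMonoidHom.coe_toIntLinearMap, hψ0, AddMonoidHom.mk'_apply, toMul_ofMul,
      Units.val_mk0]
    exact hlimz
  rw [← this, hφsum]
  push_cast
  rfl

private def tripZ {n : ℕ} (i j k : Fin n) : Fin n → ℤ :=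
  fun l => (if l = i then 1 else 0) + (if l = j then 1 else 0) - (if l = k then 1 else 0)

private lemma prod_tripZ {n : ℕ} (g : Fin n → ℂ) (hg : ∀ l, g l ≠ 0) (i j k : Fin n) :
    ∏ l, g l ^ (tripZ i j k l) = g i * g j / g k := by
  have step : ∀ l, g l ^ (tripZ i j k l)
      = (if l = i then g l else 1) * (if l = j then g l else 1)
        * (if l = k then g l else 1)⁻¹ := by
    intro l
    rw [tripZ, zpow_sub₀ (hg l), zpow_add₀ (hg l)]
    congr 1
    · congr 1 <;> [skip; skip] <;> split <;> simp
    · split <;> simp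
  rw [Finset.prod_congr rfl (fun l _ => step l)]
  rw [Finset.prod_mul_distrib, Finset.prod_mul_distrib]
  rw [Finset.prod_ite_eq' Finset.univ i g, Finset.prod_ite_eq' Finset.univ j g]
  rw [Finset.prod_inv_distrib, Finset.prod_ite_eq' Finset.univ k g]
  simp [div_eq_mul_inv]

private def tripR {n : ℕ} (i j k : Fin n) : Fin n → ℝ :=
  fun l => (if l = i then 1 else 0) + (if l = j then 1 else 0) - (if l = k then 1 else 0)

private noncomputable def tripE {n : ℕ} (i j k : Fin n) : EuclideanSpace ℝ (Fin n) :=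
  (WithLp.equiv 2 (Fin n → ℝ)).symm (tripR i j k)

private lemma inner_tripE {n : ℕ} (x : EuclideanSpace ℝ (Fin n)) (i j k : Fin n) :
    ⟪x, tripE i j k⟫ = x i + x j - x k := by
  rw [PiLp.inner_apply]
  have : ∀ l, (inner ℝ (x l) (tripE i j k l) : ℝ) = x l * tripR i j k l := fun l => mul_comm _ _
  rw [Finset.sum_congr rfl fun l _ => this l]
  simp [tripR, mul_add, mul_sub, Finset.sum_add_distrib, Finset.sum_sub_distrib,
    mul_ite, Finset.sum_ite_eq']

/-- Any diagonal contraction of a complex Lie algebra is equivalent to a generalized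
Inönü–Wigner contraction with an integer signature. -/
theorem diagonal_contraction_equiv_genIW_integer_complex
    (n : ℕ) (c c₀ : Fin n → Fin n → Fin n → ℂ)
    (hanti : ∀ i j k, c i j k = -(c j i k))
    (hjac : ∀ i j k m, ∑ l, (c i j l * c l k m + c k i l * c l j m + c j k l * c l i m) = 0)
    (f : Fin n → ℝ → ℂ)
    (hfcont : ∀ i, ContinuousOn (f i) (Set.Ioc 0 1))
    (hfne : ∀ i, ∀ ε ∈ Set.Ioc (0 : ℝ) 1, f i ε ≠ 0)
    (hlim : ∀ i j k, Tendsto (fun ε : ℝ => c i j k * f i ε * f j ε / f k ε)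
      (𝓝[>] (0 : ℝ)) (𝓝 (c₀ i j k))) :
    ∃ γ : Fin n → ℂ, (∀ i, γ i ≠ 0) ∧ ∃ β : Fin n → ℤ, ∀ i j k,
      Tendsto (fun ε : ℝ => c i j k * (γ i * γ j / γ k) * (ε : ℂ) ^ (β i + β j - β k))
        (𝓝[>] (0 : ℝ)) (𝓝 (c₀ i j k)) := by
  classical
  have hIoc : (Set.Ioc (0:ℝ) 1) ∈ 𝓝[>] (0:ℝ) := Ioc_mem_nhdsGT_of_mem (by simp)
  have hczero : ∀ i j k, c i j k = 0 → c₀ i j k = 0 := by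
    intro i j k hc
    have h0 : Tendsto (fun ε : ℝ => c i j k * f i ε * f j ε / f k ε) (𝓝[>] (0:ℝ)) (𝓝 0) := by
      have he : (fun ε : ℝ => c i j k * f i ε * f j ε / f k ε) = fun _ => 0 := by
        funext ε; rw [hc]; simp
      rw [he]; exact tendsto_const_nhds
    exact (tendsto_nhds_unique (hlim i j k) h0)
  set Bs : Finset (Fin n × Fin n × Fin n) := Finset.univ.filter
      (fun t => c t.1 t.2.1 t.2.2 ≠ 0 ∧ c₀ t.1 t.2.1 t.2.2 ≠ 0) with hBs
  set As : Finset (Fin n × Fin n × Fin n) := Finset.univ.filter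
      (fun t => c t.1 t.2.1 t.2.2 ≠ 0 ∧ c₀ t.1 t.2.1 t.2.2 = 0) with hAs
  set u : ℝ → EuclideanSpace ℝ (Fin n) := fun ε =>
    (WithLp.equiv 2 (Fin n → ℝ)).symm (fun l => -Real.log (norm (f l ε))) with hu
  have hu_apply : ∀ (ε : ℝ) (l : Fin n), u ε l = -Real.log (norm (f l ε)) :=
    fun ε l => rfl
  set v : (Fin n × Fin n × Fin n) → EuclideanSpace ℝ (Fin n) :=
    fun t => tripE t.1 t.2.1 t.2.2 with hv
  have hinner : ∀ (ε : ℝ) (t : Fin n × Fin n × Fin n),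
      ⟪u ε, v t⟫ = u ε t.1 + u ε t.2.1 - u ε t.2.2 :=
    fun ε t => inner_tripE (u ε) t.1 t.2.1 t.2.2
  -- logarithmic identity
  have hlog : ∀ (i j k : Fin n), c i j k ≠ 0 →
      ∀ᶠ ε in 𝓝[>] (0:ℝ), ⟪u ε, v (i,j,k)⟫
        = Real.log (norm (c i j k))
          - Real.log (norm (c i j k * f i ε * f j ε / f k ε)) := by
    intro i j k hc
    filter_upwards [hIoc] with ε hε
    have hfi := hfne i ε hε
    have hfj := hfne j ε hε
    have hfk := hfne k ε hε
    have hai : norm (f i ε) ≠ 0 := norm_ne_zero_iff.mpr hfi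
    have haj : norm (f j ε) ≠ 0 := norm_ne_zero_iff.mpr hfj
    have hak : norm (f k ε) ≠ 0 := norm_ne_zero_iff.mpr hfk
    have hac : norm (c i j k) ≠ 0 := norm_ne_zero_iff.mpr hc
    rw [hinner, hu_apply, hu_apply, hu_apply]
    rw [norm_div, norm_mul, norm_mul]
    rw [Real.log_div (mul_ne_zero (mul_ne_zero hac hai) haj) hak,
      Real.log_mul (mul_ne_zero hac hai) haj, Real.log_mul hac hai]
    ring
  -- tendsto certificates
  set ℓ : (Fin n × Fin n × Fin n) → ℝ := fun t =>
    Real.log (norm (c t.1 t.2.1 t.2.2)) - Real.log (norm (c₀ t.1 t.2.1 t.2.2))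
    with hℓ
  have hBtend : ∀ t ∈ Bs, Tendsto (fun ε => ⟪u ε, v t⟫) (𝓝[>] (0:ℝ)) (𝓝 (ℓ t)) := by
    rintro ⟨i, j, k⟩ ht
    rw [hBs, Finset.mem_filter] at ht
    obtain ⟨-, hc, hc0⟩ := ht
    have habs : Tendsto (fun ε => norm (c i j k * f i ε * f j ε / f k ε)) (𝓝[>] (0:ℝ))
        (𝓝 (norm (c₀ i j k))) := (continuous_norm.tendsto _).comp (hlim i j k)
    have hlogt : Tendsto (fun ε => Real.log (norm (c i j k * f i ε * f j ε / f k ε)))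
        (𝓝[>] (0:ℝ)) (𝓝 (Real.log (norm (c₀ i j k)))) :=
      ((Real.continuousAt_log (norm_ne_zero_iff.mpr hc0)).tendsto).comp habs
    exact (tendsto_const_nhds.sub hlogt).congr' ((hlog i j k hc).mono fun ε h => h.symm)
  have hAtend : ∀ t ∈ As, Tendsto (fun ε => ⟪u ε, v t⟫) (𝓝[>] (0:ℝ)) atTop := by
    rintro ⟨i, j, k⟩ ht
    rw [hAs, Finset.mem_filter] at ht
    obtain ⟨-, hc, hc0⟩ := ht
    have habs : Tendsto (fun ε => norm (c i j k * f i ε * f j ε / f k ε)) (𝓝[>] (0:ℝ))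
        (𝓝 0) := by
      have h1 := (continuous_norm.tendsto _).comp (hlim i j k)
      rw [hc0, norm_zero] at h1
      exact h1
    have hpos : ∀ᶠ ε in 𝓝[>] (0:ℝ),
        norm (c i j k * f i ε * f j ε / f k ε) ∈ Set.Ioi (0:ℝ) := by
      filter_upwards [hIoc] with ε hε
      have : c i j k * f i ε * f j ε / f k ε ≠ 0 :=
        div_ne_zero (mul_ne_zero (mul_ne_zero hc (hfne i ε hε)) (hfne j ε hε)) (hfne k ε hε)
      simpa using (norm_pos_iff.mpr this)
    have h01 : Tendsto (fun ε => norm (c i j k * f i ε * f j ε / f k ε)) (𝓝[>] (0:ℝ))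
        (𝓝[>] (0:ℝ)) := tendsto_nhdsWithin_iff.mpr ⟨habs, hpos⟩
    have hlb : Tendsto (fun ε => Real.log (norm (c i j k * f i ε * f j ε / f k ε)))
        (𝓝[>] (0:ℝ)) atBot := Real.tendsto_log_nhdsGT_zero.comp h01
    have hnt : Tendsto (fun ε => -Real.log (norm (c i j k * f i ε * f j ε / f k ε)))
        (𝓝[>] (0:ℝ)) atTop := tendsto_neg_atTop_iff.mpr hlb
    have hwt : Tendsto (fun ε => Real.log (norm (c i j k))
        - Real.log (norm (c i j k * f i ε * f j ε / f k ε))) (𝓝[>] (0:ℝ)) atTop := by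
      have := tendsto_atTop_add_const_left (𝓝[>] (0:ℝ)) (Real.log (norm (c i j k))) hnt
      refine this.congr fun ε => ?_
      ring
    exact hwt.congr' ((hlog i j k hc).mono fun ε h => h.symm)
  obtain ⟨x, hxB, hxA⟩ := real_sol Bs As v u ℓ hBtend hAtend
  -- rational solution
  obtain ⟨y, hyB, hyA⟩ := rat_sol Bs (fun t => trip t.1 t.2.1 t.2.2) As (fun l => x l)
    (fun t ht => by
      rw [dotR_trip]
      have h1 := hxB t ht
      rw [hv, inner_tripE] at h1
      exact h1)
    (fun t ht => by
      rw [dotR_trip]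
      have h1 := hxA t ht
      rw [hv, inner_tripE] at h1
      exact h1)
  obtain ⟨β, N, hN, hβ⟩ := int_scale y
  have hBint : ∀ t ∈ Bs, β t.1 + β t.2.1 - β t.2.2 = 0 := by
    intro t ht
    have h1 := hyB t ht
    rw [dotQ_trip] at h1
    have h2 : ((β t.1 + β t.2.1 - β t.2.2 : ℤ) : ℚ) = 0 := by
      push_cast
      rw [hβ t.1, hβ t.2.1, hβ t.2.2]
      linear_combination N * h1
    exact_mod_cast h2
  have hAint : ∀ t ∈ As, 0 < β t.1 + β t.2.1 - β t.2.2 := by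
    intro t ht
    have h1 := hyA t ht
    rw [dotQ_trip] at h1
    have h2 : (0:ℚ) < ((β t.1 + β t.2.1 - β t.2.2 : ℤ) : ℚ) := by
      push_cast
      rw [hβ t.1, hβ t.2.1, hβ t.2.2]
      have := mul_pos hN h1
      linarith [this]
    exact_mod_cast h2
  -- gamma construction
  obtain ⟨γu, hγu⟩ := gamma_exists f hfne
  have hγB : ∀ i j k : Fin n, c i j k ≠ 0 → c₀ i j k ≠ 0 →
      (γu i : ℂ) * γu j / γu k = c₀ i j k / c i j k := by
    intro i j k hc hc0
    have hz : c₀ i j k / c i j k ≠ 0 := div_ne_zero hc0 hc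
    have htd : Tendsto (fun ε => ∏ l, (f l ε) ^ (tripZ i j k l)) (𝓝[>] (0:ℝ))
        (𝓝 (c₀ i j k / c i j k)) := by
      have h1 : Tendsto (fun ε => (c i j k * f i ε * f j ε / f k ε) / c i j k) (𝓝[>] (0:ℝ))
          (𝓝 (c₀ i j k / c i j k)) := (hlim i j k).div_const _
      refine h1.congr' ?_
      filter_upwards [hIoc] with ε hε
      rw [prod_tripZ (fun l => f l ε) (fun l => hfne l ε hε) i j k]
      have hfk := hfne k ε hε
      field_simp
    have h2 := hγu (tripZ i j k) _ hz htd
    rw [prod_tripZ (fun l => ((γu l : ℂ))) (fun l => (γu l).ne_zero) i j k] at h2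
    exact h2
  refine ⟨fun i => (γu i : ℂ), fun i => (γu i).ne_zero, β, ?_⟩
  intro i j k
  by_cases hc : c i j k = 0
  · simp only [hc, zero_mul]
    rw [hczero i j k hc]
    exact tendsto_const_nhds
  by_cases hc0 : c₀ i j k = 0
  · have htA : (i, j, k) ∈ As := by
      rw [hAs, Finset.mem_filter]
      exact ⟨Finset.mem_univ _, hc, hc0⟩
    have hd : 0 < β i + β j - β k := hAint (i, j, k) htA
    set m := (β i + β j - β k).toNat with hmdef
    have hdm : ((m : ℤ)) = β i + β j - β k := Int.toNat_of_nonneg hd.le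
    have hm0 : m ≠ 0 := by omega
    have hpow : Tendsto (fun ε : ℝ => ((ε:ℂ)) ^ m) (𝓝[>] (0:ℝ)) (𝓝 0) := by
      have hcont : Tendsto (fun ε : ℝ => ((ε:ℂ)) ^ m) (𝓝 (0:ℝ)) (𝓝 (((0:ℝ):ℂ) ^ m)) :=
        (Complex.continuous_ofReal.pow m).tendsto 0
      rw [Complex.ofReal_zero, zero_pow hm0] at hcont
      exact hcont.mono_left nhdsWithin_le_nhds
    have hfin : Tendsto (fun ε : ℝ => c i j k * ((γu i : ℂ) * γu j / γu k) * (ε:ℂ)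
        ^ (β i + β j - β k)) (𝓝[>] (0:ℝ)) (𝓝 0) := by
      have h1 := hpow.const_mul (c i j k * ((γu i : ℂ) * γu j / γu k))
      rw [mul_zero] at h1
      refine h1.congr fun ε => ?_
      rw [← hdm, zpow_natCast]
    rw [hc0]
    exact hfin
  · have htB : (i, j, k) ∈ Bs := by
      rw [hBs, Finset.mem_filter]
      exact ⟨Finset.mem_univ _, hc, hc0⟩
    have hd0 : β i + β j - β k = 0 := hBint (i, j, k) htB
    have hγ := hγB i j k hc hc0
    simp only [hd0, zpow_zero, mul_one, hγ]
    have hcc : c i j k * (c₀ i j k / c i j k) = c₀ i j k := by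
      field_simp
    rw [hcc]
    exact tendsto_const_nhds
end
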